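/- arXiv:0902.1919 — 6 statements merged into one kernel-verified Lean document; each statement's English description precedes it below -/
import Mathlib

section
/- Let R > 0, δ > 0 and k > 2. Define χ : [R, 2kR] → ℝ by χ(x) = (x − R)/R for x ∈ [R, 2R], χ(x) = 1 for x ∈ [2R, kR], and χ(x) = −(x − 2kR)/(kR) for x ∈ [kR, 2kR], and set φ(x) = χ(x)·x^{1/2}. Then ∫_R^{2kR} ( |φ'(x)|² − (1 + δ)·φ(x)²/(4x²) ) dx ≤ 3 − (δ/4)·log(k/2), where φ' denotes the derivative of φ (which exists at every point of [R, 2kR] except the finitely many break points 2R and kR, so the integral is well defined). -/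
open Set Real

open MeasureTheory intervalIntegral in
lemma piece_eval {f g F : ℝ → ℝ} {a b : ℝ} (hab : a ≤ b)
    (hfg : ∀ x ∈ Ioo a b, f x = g x)
    (hg : ContinuousOn g (Icc a b))
    (hF : ∀ x ∈ Icc a b, HasDerivAt F (g x) x) :
    IntervalIntegrable f volume a b ∧ (∫ x in a..b, f x) = F b - F a := by
  have hgint : IntervalIntegrable g volume a b := hg.intervalIntegrable_of_Icc hab
  have hae : ∀ᵐ x ∂(volume : Measure ℝ), x ∈ Set.uIoc a b → f x = g x := by
    filter_upwards [(Set.countable_singleton b).ae_notMem volume] with x hxb hxI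
    rw [Set.uIoc_of_le hab] at hxI
    exact hfg x ⟨hxI.1, lt_of_le_of_ne hxI.2 (by simpa using hxb)⟩
  have hrest : f =ᵐ[volume.restrict (Set.uIoc a b)] g :=
    (ae_restrict_iff' measurableSet_uIoc).2 hae
  refine ⟨hgint.congr_ae hrest.symm, ?_⟩
  rw [intervalIntegral.integral_congr_ae hae]
  exact integral_eq_sub_of_hasDerivAt
    (fun x hx => hF x (by rwa [uIcc_of_le hab] at hx)) hgint

lemma deriv_eq_of_eventuallyEq {φ ψ : ℝ → ℝ} {x d : ℝ}
    (h : ∀ᶠ y in nhds x, φ y = ψ y) (hψ : HasDerivAt ψ d x) : deriv φ x = d := by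
  rw [Filter.EventuallyEq.deriv_eq h]; exact hψ.deriv

set_option maxHeartbeats 1000000 in
/-- Let `R > 0`, `δ > 0` and `k > 2`. Define the piecewise-linear cutoff
`χ` on `[R, 2kR]` (equal to `(x-R)/R` on `[R,2R]`, to `1` on `[2R,kR]`, and to
`-(x-2kR)/(kR)` on `[kR,2kR]`) and set `φ(x) = χ(x)·√x`. Then
`∫_R^{2kR} (|φ'|² - (1+δ)·φ²/(4x²)) dx ≤ 3 - (δ/4)·log(k/2)`. -/
theorem stmt_0 (R δ k : ℝ) (hR : 0 < R) (hδ : 0 < δ) (hk : 2 < k)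
    (χ φ : ℝ → ℝ)
    (hχ₁ : ∀ x ∈ Icc R (2 * R), χ x = (x - R) / R)
    (hχ₂ : ∀ x ∈ Icc (2 * R) (k * R), χ x = 1)
    (hχ₃ : ∀ x ∈ Icc (k * R) (2 * k * R), χ x = -(x - 2 * k * R) / (k * R))
    (hφ : ∀ x, φ x = χ x * Real.sqrt x) :
    (∫ x in R..(2 * k * R),
        ((deriv φ x) ^ 2 - (1 + δ) * (φ x) ^ 2 / (4 * x ^ 2)))
      ≤ 3 - (δ / 4) * Real.log (k / 2) := by
  have hk0 : (0:ℝ) < k := by linarith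
  have hab1 : R ≤ 2 * R := by linarith
  have hab2 : 2 * R ≤ k * R := by nlinarith
  have hab3 : k * R ≤ 2 * k * R := by nlinarith
  set f : ℝ → ℝ := fun x => (deriv φ x) ^ 2 - (1 + δ) * (φ x) ^ 2 / (4 * x ^ 2) with hf
  set g1 : ℝ → ℝ := fun x =>
    (9*x^2 - 6*R*x + R^2 - (1+δ)*(x^2 - 2*R*x + R^2)) / (4*R^2*x) with hg1
  set g2 : ℝ → ℝ := fun x => (1 - (1+δ)) / (4*x) with hg2
  set g3 : ℝ → ℝ := fun x =>
    (4*(k*R)^2 - 12*(k*R)*x + 9*x^2 - (1+δ)*(4*(k*R)^2 - 4*(k*R)*x + x^2)) / (4*(k*R)^2*x) with hg3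
  set F1 : ℝ → ℝ := fun x =>
    ((9/2)*x^2 - 6*R*x + R^2*Real.log x - (1+δ)*((1/2)*x^2 - 2*R*x + R^2*Real.log x)) / (4*R^2)
    with hF1
  set F2 : ℝ → ℝ := fun x => ((1 - (1+δ)) / 4) * Real.log x with hF2
  set F3 : ℝ → ℝ := fun x =>
    (4*(k*R)^2*Real.log x - 12*(k*R)*x + (9/2)*x^2
      - (1+δ)*(4*(k*R)^2*Real.log x - 4*(k*R)*x + (1/2)*x^2)) / (4*(k*R)^2) with hF3
  -- piece 1
  have h1 := piece_eval (f := f) (g := g1) (F := F1) hab1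
    (by
      intro x hx
      have hx0 : 0 < x := lt_trans hR hx.1
      have hs0 : 0 < Real.sqrt x := Real.sqrt_pos.2 hx0
      have hder : HasDerivAt (fun y => (y - R) / R * Real.sqrt y)
          (1/R * Real.sqrt x + (x - R)/R * (1/(2*Real.sqrt x))) x := by
        have := (((hasDerivAt_id x).sub_const R).div_const R).fun_mul
          (Real.hasDerivAt_sqrt hx0.ne')
        simpa using this
      have hev : ∀ᶠ y in nhds x, φ y = (y - R) / R * Real.sqrt y := by
        filter_upwards [isOpen_Ioo.mem_nhds hx] with y hy
        rw [hφ y, hχ₁ y (Ioo_subset_Icc_self hy)]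
      have hd : deriv φ x = 1/R * Real.sqrt x + (x - R)/R * (1/(2*Real.sqrt x)) :=
        deriv_eq_of_eventuallyEq hev hder
      simp only [hf, hg1]
      rw [hd, hφ x, hχ₁ x (Ioo_subset_Icc_self hx)]
      set s := Real.sqrt x with hs
      have hsq : s^2 = x := Real.sq_sqrt hx0.le
      rw [← hsq]
      field_simp
      ring)
    (by
      apply ContinuousOn.div (by fun_prop) (by fun_prop)
      intro x hx
      have hx0 : 0 < x := lt_of_lt_of_le hR hx.1
      positivity)
    (by
      intro x hx
      have hx0 : 0 < x := lt_of_lt_of_le hR hx.1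
      have ha := (((hasDerivAt_pow 2 x).const_mul ((9:ℝ)/2)).fun_sub
          ((hasDerivAt_id x).const_mul (6*R))).fun_add
          ((Real.hasDerivAt_log hx0.ne').const_mul (R^2))
      have hb := ((((hasDerivAt_pow 2 x).const_mul ((1:ℝ)/2)).fun_sub
          ((hasDerivAt_id x).const_mul (2*R))).fun_add
          ((Real.hasDerivAt_log hx0.ne').const_mul (R^2))).const_mul (1+δ)
      have h := (ha.fun_sub hb).div_const (4*R^2)
      refine h.congr_deriv ?_
      simp only [hg1]
      field_simp
      ring)
  -- piece 2
  have h2 := piece_eval (f := f) (g := g2) (F := F2) hab2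
    (by
      intro x hx
      have hx0 : 0 < x := by nlinarith [hx.1]
      have hs0 : 0 < Real.sqrt x := Real.sqrt_pos.2 hx0
      have hev : ∀ᶠ y in nhds x, φ y = Real.sqrt y := by
        filter_upwards [isOpen_Ioo.mem_nhds hx] with y hy
        rw [hφ y, hχ₂ y (Ioo_subset_Icc_self hy), one_mul]
      have hd : deriv φ x = 1/(2*Real.sqrt x) :=
        deriv_eq_of_eventuallyEq hev (Real.hasDerivAt_sqrt hx0.ne')
      simp only [hf, hg2]
      rw [hd, hφ x, hχ₂ x (Ioo_subset_Icc_self hx), one_mul]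
      set s := Real.sqrt x with hs
      have hsq : s^2 = x := Real.sq_sqrt hx0.le
      rw [← hsq]
      field_simp
      ring)
    (by
      apply ContinuousOn.div (by fun_prop) (by fun_prop)
      intro x hx
      have hx0 : 0 < x := by nlinarith [hx.1]
      positivity)
    (by
      intro x hx
      have hx0 : 0 < x := by nlinarith [hx.1]
      have h := (Real.hasDerivAt_log hx0.ne').const_mul ((1 - (1+δ)) / 4)
      refine h.congr_deriv ?_
      simp only [hg2]
      field_simp)
  -- piece 3
  have h3 := piece_eval (f := f) (g := g3) (F := F3) hab3
    (by
      intro x hx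
      have hx0 : 0 < x := by nlinarith [hx.1]
      have hs0 : 0 < Real.sqrt x := Real.sqrt_pos.2 hx0
      have hkR : (0:ℝ) < k * R := by positivity
      have hder : HasDerivAt (fun y => -(y - 2*k*R) / (k*R) * Real.sqrt y)
          (-1/(k*R) * Real.sqrt x + (-(x - 2*k*R)/(k*R)) * (1/(2*Real.sqrt x))) x := by
        have := ((((hasDerivAt_id x).sub_const (2*k*R)).neg.div_const (k*R)).fun_mul
          (Real.hasDerivAt_sqrt hx0.ne'))
        simpa using this
      have hev : ∀ᶠ y in nhds x, φ y = -(y - 2*k*R) / (k*R) * Real.sqrt y := by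
        filter_upwards [isOpen_Ioo.mem_nhds hx] with y hy
        rw [hφ y, hχ₃ y (Ioo_subset_Icc_self hy)]
      have hd : deriv φ x
          = -1/(k*R) * Real.sqrt x + (-(x - 2*k*R)/(k*R)) * (1/(2*Real.sqrt x)) :=
        deriv_eq_of_eventuallyEq hev hder
      simp only [hf, hg3]
      rw [hd, hφ x, hχ₃ x (Ioo_subset_Icc_self hx)]
      set s := Real.sqrt x with hs
      have hsq : s^2 = x := Real.sq_sqrt hx0.le
      rw [← hsq]
      field_simp
      ring)
    (by
      apply ContinuousOn.div (by fun_prop) (by fun_prop)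
      intro x hx
      have hx0 : 0 < x := by nlinarith [hx.1]
      have hkR : (0:ℝ) < k * R := by positivity
      positivity)
    (by
      intro x hx
      have hx0 : 0 < x := by nlinarith [hx.1]
      have ha := (((Real.hasDerivAt_log hx0.ne').const_mul (4*(k*R)^2)).fun_sub
          ((hasDerivAt_id x).const_mul (12*(k*R)))).fun_add
          ((hasDerivAt_pow 2 x).const_mul ((9:ℝ)/2))
      have hb := ((((Real.hasDerivAt_log hx0.ne').const_mul (4*(k*R)^2)).fun_sub
          ((hasDerivAt_id x).const_mul (4*(k*R)))).fun_add
          ((hasDerivAt_pow 2 x).const_mul ((1:ℝ)/2))).const_mul (1+δ)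
      have h := (ha.fun_sub hb).div_const (4*(k*R)^2)
      refine h.congr_deriv ?_
      simp only [hg3]
      have hkR : (k*R) ≠ 0 := by positivity
      field_simp
      ring)
  -- split the integral
  have hsplit : (∫ x in R..(2*k*R), f x)
      = (∫ x in R..(2*R), f x) + ((∫ x in (2*R)..(k*R), f x) + (∫ x in (k*R)..(2*k*R), f x)) := by
    rw [intervalIntegral.integral_add_adjacent_intervals h2.1 h3.1,
      intervalIntegral.integral_add_adjacent_intervals h1.1 (h2.1.trans h3.1)]
  have l2R : Real.log (2*R) = Real.log 2 + Real.log R := Real.log_mul two_ne_zero hR.ne'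
  have lkR : Real.log (k*R) = Real.log k + Real.log R := Real.log_mul hk0.ne' hR.ne'
  have l2kR : Real.log (2*k*R) = Real.log 2 + (Real.log k + Real.log R) := by
    rw [mul_assoc, Real.log_mul two_ne_zero (by positivity), lkR]
  have lk2 : Real.log (k/2) = Real.log k - Real.log 2 := Real.log_div hk0.ne' two_ne_zero
  have e1 : F1 (2*R) - F1 R = 2 - (δ/4)*(Real.log 2 - 1/2) := by
    have hR' : R ≠ 0 := hR.ne'
    simp only [hF1, l2R]
    field_simp
    ring
  have e2 : F2 (k*R) - F2 (2*R) = -(δ/4)*(Real.log k - Real.log 2) := by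
    simp only [hF2, lkR, l2R]
    ring
  have e3 : F3 (2*k*R) - F3 (k*R) = 1 - δ*(Real.log 2 - 5/8) := by
    have hkR : (k*R) ≠ 0 := by positivity
    simp only [hF3, l2kR, lkR]
    field_simp
    ring
  have hlog2 : (0.6931471803 : ℝ) < Real.log 2 := Real.log_two_gt_d9
  have hprod : 0 < δ * (Real.log 2 - 0.6931471803) :=
    mul_pos hδ (by linarith)
  calc (∫ x in R..(2*k*R), f x)
      = F1 (2*R) - F1 R + ((F2 (k*R) - F2 (2*R)) + (F3 (2*k*R) - F3 (k*R))) := by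
        rw [hsplit, h1.2, h2.2, h3.2]
    _ ≤ 3 - (δ/4) * Real.log (k/2) := by rw [e1, e2, e3, lk2]; nlinarith
end

section
/- Let R > 0 and δ > 0, and let k > 2·exp(12/δ). Then there exists a Lipschitz function φ : [R, 2kR] → ℝ with φ(R) = φ(2kR) = 0, φ not identically zero, which is differentiable at all but finitely many points, such that ∫_R^{2kR} ( |φ'(x)|² − (1 + δ)·φ(x)²/(4x²) ) dx < 0. (By the mini-max principle this expresses that the first Dirichlet eigenvalue −λ₁ of the problem −φ'' − (1+δ)/(4x²)·φ = λφ on [R, 2kR] with φ(R) = φ(2kR) = 0 is negative.) -/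
open Set Real MeasureTheory

/-- helper: a pointwise property on `Ioo a b` holds a.e. on `uIoc a b`. -/
private lemma ae_uIoc_of_Ioo {a b : ℝ} (hab : a ≤ b) {p : ℝ → Prop}
    (h : ∀ x ∈ Set.Ioo a b, p x) :
    ∀ᵐ x ∂(volume : Measure ℝ), x ∈ Set.uIoc a b → p x := by
  rw [Set.uIoc_of_le hab, MeasureTheory.ae_iff]
  refine measure_mono_null ?_ (measure_singleton b)
  intro x hx
  simp only [Set.mem_setOf_eq] at hx
  push_neg at hx
  obtain ⟨hx1, hx2⟩ := hx
  have hxb : x = b := by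
    by_contra hne
    exact hx2 (h x ⟨hx1.1, lt_of_le_of_ne hx1.2 hne⟩)
  simp [hxb]

set_option maxHeartbeats 2000000 in
/-- Let `R > 0`, `δ > 0` and `k > 2·exp(12/δ)`. Then there is a Lipschitz
function `φ` on `[R, 2kR]`, vanishing at both endpoints, not identically zero, and
differentiable off a finite set, whose Hardy-type Rayleigh integrand has negative integral:
`∫_R^{2kR} (|φ'|² - (1+δ)·φ²/(4x²)) dx < 0`. By the mini-max principle this expresses that
the first Dirichlet eigenvalue of `-d²/dx² - (1+δ)/(4x²)` on `[R, 2kR]` is negative. -/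
theorem stmt_1 (R δ k : ℝ) (hR : 0 < R) (hδ : 0 < δ)
    (hk : 2 * Real.exp (12 / δ) < k) :
    ∃ φ : ℝ → ℝ, ∃ C : NNReal,
      LipschitzOnWith C φ (Icc R (2 * k * R)) ∧
      φ R = 0 ∧ φ (2 * k * R) = 0 ∧
      (∃ x ∈ Icc R (2 * k * R), φ x ≠ 0) ∧
      (∃ s : Finset ℝ, ∀ x ∈ Icc R (2 * k * R), x ∉ s → DifferentiableAt ℝ φ x) ∧
      (∫ x in R..(2 * k * R),
          ((deriv φ x) ^ 2 - (1 + δ) * (φ x) ^ 2 / (4 * x ^ 2))) < 0 := by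
  -- basic numeric facts
  have hexp1 : (1:ℝ) < Real.exp (12/δ) := by
    have := Real.exp_lt_exp.mpr (show (0:ℝ) < 12/δ by positivity)
    simpa using this
  have hk2 : (2:ℝ) < k := by nlinarith [Real.exp_pos (12/δ)]
  have hkR : (0:ℝ) < k * R := by positivity
  have h2R : (0:ℝ) < 2 * R := by positivity
  have h2RkR : 2 * R < k * R := by nlinarith
  have hkR2kR : k * R < 2 * k * R := by nlinarith
  have hR2R : R < 2 * R := by linarith
  have hs2R : Real.sqrt (2*R) ^ 2 = 2*R := Real.sq_sqrt (by positivity)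
  have hskR : Real.sqrt (k*R) ^ 2 = k*R := Real.sq_sqrt (by positivity)
  have hs2Rpos : 0 < Real.sqrt (2*R) := Real.sqrt_pos.mpr h2R
  have hskRpos : 0 < Real.sqrt (k*R) := Real.sqrt_pos.mpr hkR
  set c : ℝ := Real.sqrt (2*R) / R with hc_def
  set m : ℝ := Real.sqrt (k*R) / (k*R) with hm_def
  have hc : 0 < c := by positivity
  have hm : 0 < m := by positivity
  set L : ℝ → ℝ := fun x => c * (x - R) with hL_def
  set Rt : ℝ → ℝ := fun x => m * (2*k*R - x) with hRt_def
  set φ : ℝ → ℝ := fun x => min (min (L x) (Rt x)) (Real.sqrt x) with hφ_def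
  -- comparison facts
  have hLval : ∀ x, L x = c * (x - R) := fun _ => rfl
  have hsqrt2Rsqrtkr : Real.sqrt (2*R) ≤ Real.sqrt (k*R) :=
    Real.sqrt_le_sqrt (by nlinarith)
  -- L ≤ sqrt on (-∞, 2R]
  have hL_le_sqrt : ∀ x, x ≤ 2*R → L x ≤ Real.sqrt x := by
    intro x hx
    rcases le_or_gt x R with h | h
    · have : L x ≤ 0 := by
        simp only [hL_def]
        nlinarith [mul_nonneg hc.le (by linarith : (0:ℝ) ≤ R - x)]
      exact this.trans (Real.sqrt_nonneg x)
    · have hLnn : 0 ≤ L x := by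
        simp only [hL_def]
        nlinarith [mul_nonneg hc.le (by linarith : (0:ℝ) ≤ x - R)]
      have hsq : (L x)^2 ≤ x := by
        simp only [hL_def]
        rw [mul_pow, hc_def, div_pow, hs2R]
        rw [div_mul_eq_mul_div, div_le_iff₀ (by positivity)]
        nlinarith [mul_nonneg (mul_nonneg hR.le (by linarith : (0:ℝ) ≤ 2*R - x))
          (by linarith : (0:ℝ) ≤ 2*x - R)]
      calc L x = Real.sqrt ((L x)^2) := (Real.sqrt_sq hLnn).symm
        _ ≤ Real.sqrt x := Real.sqrt_le_sqrt hsq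
  -- sqrt ≤ L on [2R, ∞)
  have hsqrt_le_L : ∀ x, 2*R ≤ x → Real.sqrt x ≤ L x := by
    intro x hx
    have hLnn : 0 ≤ L x := by
      simp only [hL_def]
      nlinarith [mul_nonneg hc.le (by linarith : (0:ℝ) ≤ x - R)]
    have hsq : x ≤ (L x)^2 := by
      simp only [hL_def]
      rw [mul_pow, hc_def, div_pow, hs2R]
      rw [div_mul_eq_mul_div, le_div_iff₀ (by positivity)]
      nlinarith [mul_nonneg (mul_nonneg hR.le (by linarith : (0:ℝ) ≤ 2*x - R))
        (by linarith : (0:ℝ) ≤ x - 2*R)]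
    calc Real.sqrt x ≤ Real.sqrt ((L x)^2) := Real.sqrt_le_sqrt hsq
      _ = L x := Real.sqrt_sq hLnn
  -- sqrt ≤ Rt on (0, kR]
  have hsqrt_le_Rt : ∀ x, x ≤ k*R → Real.sqrt x ≤ Rt x := by
    intro x hx
    have hRtnn : 0 ≤ Rt x := by
      simp only [hRt_def]
      nlinarith [mul_nonneg hm.le (by linarith : (0:ℝ) ≤ 2*k*R - x)]
    rcases le_or_gt x 0 with h | h
    · rw [Real.sqrt_eq_zero'.mpr h]; exact hRtnn
    · have hsq : x ≤ (Rt x)^2 := by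
        simp only [hRt_def]
        rw [mul_pow, hm_def, div_pow, hskR]
        rw [div_mul_eq_mul_div, le_div_iff₀ (by positivity)]
        nlinarith [mul_nonneg (mul_nonneg hkR.le (by linarith : (0:ℝ) ≤ k*R - x))
          (by linarith : (0:ℝ) ≤ 4*(k*R) - x)]
      calc Real.sqrt x ≤ Real.sqrt ((Rt x)^2) := Real.sqrt_le_sqrt hsq
        _ = Rt x := Real.sqrt_sq hRtnn
  -- Rt ≤ sqrt on [kR, ∞)
  have hRt_le_sqrt : ∀ x, k*R ≤ x → Rt x ≤ Real.sqrt x := by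
    intro x hx
    rcases le_or_gt (2*k*R) x with h | h
    · have : Rt x ≤ 0 := by
        simp only [hRt_def]
        nlinarith [mul_nonneg hm.le (by linarith : (0:ℝ) ≤ x - 2*k*R)]
      exact this.trans (Real.sqrt_nonneg x)
    · have hRtnn : 0 ≤ Rt x := by
        simp only [hRt_def]
        nlinarith [mul_nonneg hm.le (by linarith : (0:ℝ) ≤ 2*k*R - x)]
      have hsq : (Rt x)^2 ≤ x := by
        simp only [hRt_def]
        rw [mul_pow, hm_def, div_pow, hskR]
        rw [div_mul_eq_mul_div, div_le_iff₀ (by positivity)]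
        nlinarith [mul_nonneg (mul_nonneg hkR.le (by linarith : (0:ℝ) ≤ x - k*R))
          (by linarith : (0:ℝ) ≤ 4*(k*R) - x)]
      calc Rt x = Real.sqrt ((Rt x)^2) := (Real.sqrt_sq hRtnn).symm
        _ ≤ Real.sqrt x := Real.sqrt_le_sqrt hsq
  -- L ≤ Rt on (-∞, 2R]
  have hL_le_Rt : ∀ x, x ≤ 2*R → L x ≤ Rt x := by
    intro x hx
    have h1 : L x ≤ Real.sqrt (2*R) := by
      have : L x ≤ c * R := by
        simp only [hL_def]
        nlinarith [mul_nonneg hc.le (by linarith : (0:ℝ) ≤ 2*R - x)]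
      calc L x ≤ c * R := this
        _ = Real.sqrt (2*R) := by rw [hc_def, div_mul_cancel₀ _ hR.ne']
    have h2 : Real.sqrt (k*R) ≤ Rt x := by
      have : m * (k*R) ≤ Rt x := by
        simp only [hRt_def]
        nlinarith [mul_nonneg hm.le (by linarith : (0:ℝ) ≤ k*R - x)]
      calc Real.sqrt (k*R) = m * (k*R) := by rw [hm_def, div_mul_cancel₀ _ hkR.ne']
        _ ≤ Rt x := this
    linarith [hsqrt2Rsqrtkr]
  -- Rt ≤ L on [kR, ∞)
  have hRt_le_L : ∀ x, k*R ≤ x → Rt x ≤ L x := by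
    intro x hx
    have h1 : Rt x ≤ Real.sqrt (k*R) := by
      have : Rt x ≤ m * (k*R) := by
        simp only [hRt_def]
        nlinarith [mul_nonneg hm.le (by linarith : (0:ℝ) ≤ x - k*R)]
      calc Rt x ≤ m * (k*R) := this
        _ = Real.sqrt (k*R) := by rw [hm_def, div_mul_cancel₀ _ hkR.ne']
    have h2 : Real.sqrt (k*R) ≤ L x := by
      have hkey : Real.sqrt (k*R) ≤ Real.sqrt (2*R) * (k - 1) := by
        have : Real.sqrt (k*R) ≤ Real.sqrt (2*R*(k-1)^2) := by
          apply Real.sqrt_le_sqrt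
          nlinarith [mul_nonneg (mul_nonneg hR.le (by linarith : (0:ℝ) ≤ 2*k - 1))
            (by linarith : (0:ℝ) ≤ k - 2)]
        calc Real.sqrt (k*R) ≤ Real.sqrt (2*R*(k-1)^2) := this
          _ = Real.sqrt (2*R) * Real.sqrt ((k-1)^2) := Real.sqrt_mul (by positivity) _
          _ = Real.sqrt (2*R) * (k-1) := by rw [Real.sqrt_sq (by linarith)]
      have : Real.sqrt (2*R) * (k-1) = c * (k*R - R) := by rw [hc_def, div_mul_eq_mul_div, eq_div_iff hR.ne']; ring
      have hmono : c * (k*R - R) ≤ L x := by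
        simp only [hL_def]
        nlinarith [mul_nonneg hc.le (by linarith : (0:ℝ) ≤ x - k*R)]
      linarith
    linarith
  -- piecewise description of φ
  have hφ_eq_L : Set.EqOn φ L (Set.Iio (2*R)) := by
    intro x hx
    simp only [Set.mem_Iio] at hx
    simp only [hφ_def]
    rw [min_eq_left (hL_le_Rt x hx.le), min_eq_left (hL_le_sqrt x hx.le)]
  have hφ_eq_sqrt : Set.EqOn φ Real.sqrt (Set.Ioo (2*R) (k*R)) := by
    intro x hx
    simp only [Set.mem_Ioo] at hx
    simp only [hφ_def]
    exact min_eq_right (le_min (hsqrt_le_L x hx.1.le) (hsqrt_le_Rt x hx.2.le))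
  have hφ_eq_Rt : Set.EqOn φ Rt (Set.Ioi (k*R)) := by
    intro x hx
    simp only [Set.mem_Ioi] at hx
    simp only [hφ_def]
    rw [min_eq_right (hRt_le_L x hx.le), min_eq_left (hRt_le_sqrt x hx.le)]
  -- derivative values on the open pieces
  have hderivL : ∀ x ∈ Set.Iio (2*R), deriv φ x = c ∧ DifferentiableAt ℝ φ x := by
    intro x hx
    have heq : φ =ᶠ[nhds x] L := Filter.eventuallyEq_of_mem (Iio_mem_nhds hx) hφ_eq_L
    have hd : HasDerivAt L c x := by
      simpa using ((hasDerivAt_id x).sub_const R).const_mul c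
    exact ⟨heq.deriv_eq.trans hd.deriv, heq.differentiableAt_iff.mpr hd.differentiableAt⟩
  have hderivS : ∀ x ∈ Set.Ioo (2*R) (k*R),
      deriv φ x = 1/(2*Real.sqrt x) ∧ DifferentiableAt ℝ φ x := by
    intro x hx
    have heq : φ =ᶠ[nhds x] Real.sqrt :=
      Filter.eventuallyEq_of_mem (Ioo_mem_nhds hx.1 hx.2) hφ_eq_sqrt
    have hd : HasDerivAt Real.sqrt (1/(2*Real.sqrt x)) x :=
      Real.hasDerivAt_sqrt (by nlinarith [hx.1] : x ≠ 0)
    exact ⟨heq.deriv_eq.trans hd.deriv, heq.differentiableAt_iff.mpr hd.differentiableAt⟩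
  have hderivRt : ∀ x ∈ Set.Ioi (k*R), deriv φ x = -m ∧ DifferentiableAt ℝ φ x := by
    intro x hx
    have heq : φ =ᶠ[nhds x] Rt := Filter.eventuallyEq_of_mem (Ioi_mem_nhds hx) hφ_eq_Rt
    have hd : HasDerivAt Rt (-m) x := by
      simpa using ((hasDerivAt_id x).const_sub (2*k*R)).const_mul m
    exact ⟨heq.deriv_eq.trans hd.deriv, heq.differentiableAt_iff.mpr hd.differentiableAt⟩
  -- Lipschitz constant
  have hsR : 0 < Real.sqrt R := Real.sqrt_pos.mpr hR
  set Cr : ℝ := c + m + (2*Real.sqrt R)⁻¹ with hCr_def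
  have hCrpos : 0 < Cr := by positivity
  have hsqrt_lip : ∀ x y : ℝ, R ≤ x → R ≤ y →
      |Real.sqrt x - Real.sqrt y| ≤ (2*Real.sqrt R)⁻¹ * |x - y| := by
    intro x y hx hy
    have hxx : Real.sqrt x ^ 2 = x := Real.sq_sqrt (by linarith)
    have hyy : Real.sqrt y ^ 2 = y := Real.sq_sqrt (by linarith)
    have hsum : 2*Real.sqrt R ≤ Real.sqrt x + Real.sqrt y := by
      have h1 : Real.sqrt R ≤ Real.sqrt x := Real.sqrt_le_sqrt hx
      have h2 : Real.sqrt R ≤ Real.sqrt y := Real.sqrt_le_sqrt hy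
      linarith
    have hkey : |Real.sqrt x - Real.sqrt y| * (Real.sqrt x + Real.sqrt y) = |x - y| := by
      rw [← abs_of_nonneg (by positivity : (0:ℝ) ≤ Real.sqrt x + Real.sqrt y), ← abs_mul]
      congr 1; nlinarith
    rw [inv_mul_eq_div, le_div_iff₀ (by positivity)]
    nlinarith [mul_le_mul_of_nonneg_left hsum (abs_nonneg (Real.sqrt x - Real.sqrt y)), hkey]
  refine ⟨φ, ⟨Cr, hCrpos.le⟩, ?_, ?_, ?_, ?_, ?_, ?_⟩
  · -- Lipschitz
    apply LipschitzOnWith.of_dist_le_mul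
    intro x hx y hy
    simp only [Set.mem_Icc] at hx hy
    simp only [NNReal.coe_mk, Real.dist_eq]
    have habs := abs_nonneg (x - y)
    have h1 : |L x - L y| ≤ Cr * |x - y| := by
      have he : L x - L y = c * (x - y) := by simp only [hL_def]; ring
      rw [he, abs_mul, abs_of_nonneg hc.le, hCr_def]
      nlinarith [mul_nonneg (by positivity : (0:ℝ) ≤ m + (2*Real.sqrt R)⁻¹) habs]
    have h2 : |Rt x - Rt y| ≤ Cr * |x - y| := by
      have he : Rt x - Rt y = m * (y - x) := by simp only [hRt_def]; ring
      rw [he, abs_mul, abs_of_nonneg hm.le, abs_sub_comm y x, hCr_def]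
      nlinarith [mul_nonneg (by positivity : (0:ℝ) ≤ c + (2*Real.sqrt R)⁻¹) habs]
    have h3 : |Real.sqrt x - Real.sqrt y| ≤ Cr * |x - y| := by
      refine (hsqrt_lip x y hx.1 hy.1).trans ?_
      rw [hCr_def]
      nlinarith [mul_nonneg (by positivity : (0:ℝ) ≤ c + m) habs]
    calc |φ x - φ y| ≤ max (|min (L x) (Rt x) - min (L y) (Rt y)|)
          (|Real.sqrt x - Real.sqrt y|) := abs_min_sub_min_le_max _ _ _ _
      _ ≤ max (max (|L x - L y|) (|Rt x - Rt y|)) (|Real.sqrt x - Real.sqrt y|) :=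
          max_le_max (abs_min_sub_min_le_max _ _ _ _) le_rfl
      _ ≤ Cr * |x - y| := max_le (max_le h1 h2) h3
  · -- φ R = 0
    rw [hφ_eq_L (by simp only [Set.mem_Iio]; linarith)]
    simp [hL_def]
  · -- φ (2kR) = 0
    rw [hφ_eq_Rt (by simp only [Set.mem_Ioi]; linarith)]
    simp [hRt_def]
  · -- not identically zero
    refine ⟨(2*R + k*R)/2, ⟨by linarith, by linarith⟩, ?_⟩
    rw [hφ_eq_sqrt (by constructor <;> [linarith; linarith])]
    have : 0 < Real.sqrt ((2*R + k*R)/2) := Real.sqrt_pos.mpr (by linarith)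
    exact ne_of_gt this
  · -- differentiable off a finite set
    classical
    refine ⟨{2*R, k*R}, ?_⟩
    intro x hx hxs
    simp only [Finset.mem_insert, Finset.mem_singleton, not_or] at hxs
    rcases lt_trichotomy x (2*R) with h | h | h
    · exact (hderivL x h).2
    · exact absurd h hxs.1
    · rcases lt_trichotomy x (k*R) with h' | h' | h'
      · exact (hderivS x ⟨h, h'⟩).2
      · exact absurd h' hxs.2
      · exact (hderivRt x h').2
  · -- the integral is negative
    set f : ℝ → ℝ := fun x => (deriv φ x) ^ 2 - (1 + δ) * (φ x) ^ 2 / (4 * x ^ 2) with hf_def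
    set g1 : ℝ → ℝ := fun x => c^2 - (1+δ) * (c*(x-R))^2 / (4*x^2) with hg1_def
    set g2 : ℝ → ℝ := fun x => -(δ/4) * x⁻¹ with hg2_def
    set g3 : ℝ → ℝ := fun x => m^2 - (1+δ) * (m*(2*k*R-x))^2 / (4*x^2) with hg3_def
    -- pointwise identities on the open pieces
    have hfg1 : ∀ x ∈ Set.Ioo R (2*R), f x = g1 x := by
      intro x hx
      obtain ⟨hd, _⟩ := hderivL x (by simpa using hx.2)
      simp only [hf_def, hg1_def]
      rw [hd, hφ_eq_L (by simpa using hx.2)]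
    have hfg2 : ∀ x ∈ Set.Ioo (2*R) (k*R), f x = g2 x := by
      intro x hx
      obtain ⟨hd, _⟩ := hderivS x hx
      have hx0 : 0 < x := lt_trans h2R hx.1
      have hsx : Real.sqrt x ^ 2 = x := Real.sq_sqrt hx0.le
      have hsxpos : 0 < Real.sqrt x := Real.sqrt_pos.mpr hx0
      simp only [hf_def, hg2_def]
      rw [hd, hφ_eq_sqrt hx]
      rw [div_pow, one_pow, mul_pow, hsx]
      field_simp
      ring
    have hfg3 : ∀ x ∈ Set.Ioo (k*R) (2*k*R), f x = g3 x := by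
      intro x hx
      obtain ⟨hd, _⟩ := hderivRt x (by simpa using hx.1)
      simp only [hf_def, hg3_def]
      rw [hd, hφ_eq_Rt (by simpa using hx.1)]
      simp only [hRt_def]
      ring_nf
    -- integrability of the three model functions
    have hg1int : IntervalIntegrable g1 volume R (2*R) := by
      apply ContinuousOn.intervalIntegrable
      apply ContinuousOn.sub continuousOn_const
      apply ContinuousOn.div (by fun_prop) (by fun_prop)
      intro x hx
      rw [Set.uIcc_of_le hR2R.le] at hx
      have : 0 < x := lt_of_lt_of_le hR hx.1
      positivity
    have hg2int : IntervalIntegrable g2 volume (2*R) (k*R) := by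
      apply ContinuousOn.intervalIntegrable
      apply ContinuousOn.mul continuousOn_const
      apply ContinuousOn.inv₀ (by fun_prop)
      intro x hx
      rw [Set.uIcc_of_le h2RkR.le] at hx
      have : 0 < x := lt_of_lt_of_le h2R hx.1
      exact ne_of_gt this
    have hg3int : IntervalIntegrable g3 volume (k*R) (2*k*R) := by
      apply ContinuousOn.intervalIntegrable
      apply ContinuousOn.sub continuousOn_const
      apply ContinuousOn.div (by fun_prop) (by fun_prop)
      intro x hx
      rw [Set.uIcc_of_le hkR2kR.le] at hx
      have : 0 < x := lt_of_lt_of_le hkR hx.1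
      positivity
    -- integrability of f on the three pieces
    have hae1 := ae_uIoc_of_Ioo hR2R.le hfg1
    have hae2 := ae_uIoc_of_Ioo h2RkR.le hfg2
    have hae3 := ae_uIoc_of_Ioo hkR2kR.le hfg3
    have hres : ∀ (a b : ℝ) (g : ℝ → ℝ),
        (∀ᵐ x ∂(volume : Measure ℝ), x ∈ Set.uIoc a b → f x = g x) →
        g =ᵐ[volume.restrict (Set.uIoc a b)] f := by
      intro a b g hab
      rw [Filter.EventuallyEq, ae_restrict_iff' measurableSet_uIoc]
      filter_upwards [hab] with x hx hmem
      exact (hx hmem).symm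
    have hfint1 : IntervalIntegrable f volume R (2*R) := hg1int.congr_ae (hres _ _ _ hae1)
    have hfint2 : IntervalIntegrable f volume (2*R) (k*R) := hg2int.congr_ae (hres _ _ _ hae2)
    have hfint3 : IntervalIntegrable f volume (k*R) (2*k*R) := hg3int.congr_ae (hres _ _ _ hae3)
    -- split the integral
    have hsplit : (∫ x in R..(2*k*R), f x) =
        (∫ x in R..(2*R), f x) + (∫ x in (2*R)..(k*R), f x) + (∫ x in (k*R)..(2*k*R), f x) := by
      rw [intervalIntegral.integral_add_adjacent_intervals hfint1 hfint2,
        intervalIntegral.integral_add_adjacent_intervals (hfint1.trans hfint2) hfint3]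
    -- bound piece 1
    have hI1 : (∫ x in R..(2*R), f x) ≤ 2 := by
      rw [intervalIntegral.integral_congr_ae hae1]
      have hle : (∫ x in R..(2*R), g1 x) ≤ ∫ _ in R..(2*R), c^2 := by
        apply intervalIntegral.integral_mono_on hR2R.le hg1int intervalIntegrable_const
        intro x hx
        have hx0 : 0 < x := lt_of_lt_of_le hR hx.1
        have : 0 ≤ (1+δ) * (c*(x-R))^2 / (4*x^2) := by positivity
        simp only [hg1_def]; linarith
      have : (∫ _ in R..(2*R), c^2) = (2:ℝ) := by
        rw [intervalIntegral.integral_const, smul_eq_mul, hc_def, div_pow, hs2R]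
        field_simp; ring
      linarith
    -- compute piece 2
    have hlogpos : 12/δ < Real.log (k/2) := by
      rw [Real.lt_log_iff_exp_lt (by linarith : (0:ℝ) < k/2)]
      linarith
    have hI2 : (∫ x in (2*R)..(k*R), f x) = -(δ/4) * Real.log (k/2) := by
      rw [intervalIntegral.integral_congr_ae hae2]
      simp only [hg2_def]
      rw [intervalIntegral.integral_const_mul, integral_inv]
      · congr 1
        have : k*R/(2*R) = k/2 := by field_simp
        rw [this]
      · rw [Set.uIcc_of_le h2RkR.le]
        intro hmem
        exact absurd hmem.1 (by linarith)
    -- bound piece 3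
    have hI3 : (∫ x in (k*R)..(2*k*R), f x) ≤ 1 := by
      rw [intervalIntegral.integral_congr_ae hae3]
      have hle : (∫ x in (k*R)..(2*k*R), g3 x) ≤ ∫ _ in (k*R)..(2*k*R), m^2 := by
        apply intervalIntegral.integral_mono_on hkR2kR.le hg3int intervalIntegrable_const
        intro x hx
        have hx0 : 0 < x := lt_of_lt_of_le hkR hx.1
        have : 0 ≤ (1+δ) * (m*(2*k*R-x))^2 / (4*x^2) := by positivity
        simp only [hg3_def]; linarith
      have : (∫ _ in (k*R)..(2*k*R), m^2) = (1:ℝ) := by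
        rw [intervalIntegral.integral_const, smul_eq_mul, hm_def, div_pow, hskR]
        field_simp; ring
      linarith
    -- conclude
    have hfinal : 3 < (δ/4) * Real.log (k/2) := by
      have h12 : 12 < Real.log (k/2) * δ := (div_lt_iff₀ hδ).mp hlogpos
      nlinarith
    have : (∫ x in R..(2*k*R), f x) < 0 := by
      rw [hsplit, hI2]; linarith
    exact this
end

section
/- Let κ > 0, β > 0 and R₁ > 0 with R₁² ≥ β/κ. Let R_min : [0, ∞) → ℝ be a continuous function with R_min(t) ≤ 0 for all t ≥ 0 and R_min(t) = −κ + β/t² for all t ≥ R₁. Let J : [0, ∞) → ℝ be the C² solution of the Jacobi equation J''(t) + R_min(t)·J(t) = 0 with J(0) = 0, J'(0) = 1, and set S(t) = J'(t)/J(t) for t > 0. Then S has the asymptotic expansion S(t) = √κ − β/(2√κ·t²) + O(1/t³) as t → ∞; that is, there exist constants C > 0 and T ≥ R₁ such that | S(t) − √κ + β/(2√κ·t²) | ≤ C/t³ for all t ≥ T. -/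
open Set Real

set_option maxHeartbeats 1000000

private lemma hd1 (c : ℝ) {x : ℝ} (hx : x ≠ 0) :
    HasDerivAt (fun y : ℝ => c / y) (-(c / x ^ 2)) x := by
  have h := (hasDerivAt_const x c).div (hasDerivAt_id x) hx
  refine h.congr_deriv ?_
  field_simp
  simp only [id]
  field_simp
  ring

private lemma hd2 (c : ℝ) {x : ℝ} (hx : x ≠ 0) :
    HasDerivAt (fun y : ℝ => c / y ^ 2) (-(2 * c / x ^ 3)) x := by
  have h := (hasDerivAt_const x c).div (hasDerivAt_pow 2 x) (pow_ne_zero 2 hx)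
  refine h.congr_deriv ?_
  field_simp
  ring

private lemma hd3 (c : ℝ) {x : ℝ} (hx : x ≠ 0) :
    HasDerivAt (fun y : ℝ => c / y ^ 3) (-(3 * c / x ^ 4)) x := by
  have h := (hasDerivAt_const x c).div (hasDerivAt_pow 3 x) (pow_ne_zero 3 hx)
  refine h.congr_deriv ?_
  field_simp
  ring

private lemma fence {a : ℝ} {f f' g g' : ℝ → ℝ}
    (hf : ∀ x ∈ Ici a, HasDerivAt f (f' x) x)
    (hg : ∀ x ∈ Ici a, HasDerivAt g (g' x) x)
    (h0 : f a ≤ g a)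
    (hlt : ∀ x ∈ Ici a, f x = g x → f' x < g' x) :
    ∀ x ∈ Ici a, f x ≤ g x := by
  intro b hb
  have H := image_le_of_deriv_right_lt_deriv_boundary'
    (f := f) (f' := f') (a := a) (b := b) (B := g) (B' := g')
    (fun x hx => (hf x hx.1).continuousAt.continuousWithinAt)
    (fun x hx => (hf x hx.1).hasDerivWithinAt)
    h0
    (fun x hx => (hg x hx.1).continuousAt.continuousWithinAt)
    (fun x hx => (hg x hx.1).hasDerivWithinAt)
    (fun x hx he => hlt x hx.1 he)
  exact H ⟨hb, le_rfl⟩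

/-- Let `κ > 0`, `β > 0`, `R₁ > 0` with `R₁² ≥ β/κ`. Let `R_min ≤ 0` be
continuous on `[0,∞)` with `R_min(t) = -κ + β/t²` for `t ≥ R₁`, and let `J` solve the
Jacobi equation `J'' + R_min·J = 0`, `J(0) = 0`, `J'(0) = 1`. Then `S = J'/J` has the
asymptotic expansion `S(t) = √κ - β/(2√κ·t²) + O(1/t³)` as `t → ∞`: there exist `C > 0`
and `T ≥ R₁` with `|S(t) - √κ + β/(2√κ·t²)| ≤ C/t³` for all `t ≥ T`. -/
theorem stmt_4 (κ β R₁ : ℝ) (hκ : 0 < κ) (hβ : 0 < β) (hR₁ : 0 < R₁)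
    (hR₁β : R₁ ^ 2 ≥ β / κ)
    (Rmin J J' J'' : ℝ → ℝ)
    (hRmin_cont : ContinuousOn Rmin (Ici 0))
    (hRmin_nonpos : ∀ t ∈ Ici (0 : ℝ), Rmin t ≤ 0)
    (hRmin_eq : ∀ t ≥ R₁, Rmin t = -κ + β / t ^ 2)
    (hJ' : ∀ t ∈ Ici (0 : ℝ), HasDerivWithinAt J (J' t) (Ici 0) t)
    (hJ'' : ∀ t ∈ Ici (0 : ℝ), HasDerivWithinAt J' (J'' t) (Ici 0) t)
    (hJ''cont : ContinuousOn J'' (Ici 0))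
    (hODE : ∀ t ∈ Ici (0 : ℝ), J'' t + Rmin t * J t = 0)
    (hJ0 : J 0 = 0) (hJ'0 : J' 0 = 1)
    (S : ℝ → ℝ) (hS : ∀ t > (0 : ℝ), S t = J' t / J t) :
    ∃ C > (0 : ℝ), ∃ T ≥ R₁, ∀ t ≥ T,
      |S t - Real.sqrt κ + β / (2 * Real.sqrt κ * t ^ 2)| ≤ C / t ^ 3 := by
  set r := Real.sqrt κ with hrdef
  have hr : 0 < r := Real.sqrt_pos.2 hκ
  have hr2 : r ^ 2 = κ := Real.sq_sqrt hκ.le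
  ------------------------------------------------------------------
  -- Part 1 : positivity of J
  ------------------------------------------------------------------
  have hJcont : ContinuousOn J (Ici 0) := fun t ht => (hJ' t ht).continuousWithinAt
  have hJ'cont : ContinuousOn J' (Ici 0) := fun t ht => (hJ'' t ht).continuousWithinAt
  have hsmall : ∃ ε > (0:ℝ), ∀ t, 0 < t → t < ε → 0 < J t := by
    have h0 : HasDerivWithinAt J 1 (Ioi 0) 0 :=
      (hJ'0 ▸ hJ' 0 Set.self_mem_Ici).mono Ioi_subset_Ici_self
    have hslope : Filter.Tendsto (slope J 0) (nhdsWithin 0 (Ioi 0)) (nhds 1) := by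
      have h1 := hasDerivWithinAt_iff_tendsto_slope.1 h0
      rwa [show Ioi (0:ℝ) \ {0} = Ioi 0 from diff_singleton_eq_self (by simp)] at h1
    have h2 : ∀ᶠ t in nhdsWithin 0 (Ioi 0), 0 < slope J 0 t :=
      hslope.eventually (eventually_gt_nhds one_pos)
    have hEv : {t : ℝ | 0 < J t} ∈ nhdsWithin (0:ℝ) (Ioi 0) := by
      filter_upwards [h2, self_mem_nhdsWithin] with t h1 ht
      rw [slope_def_field, hJ0] at h1
      simp only [sub_zero] at h1
      rcases div_pos_iff.1 h1 with ⟨h, _⟩ | ⟨_, h⟩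
      · exact h
      · exact absurd ht (by simpa using h.le)
    rcases mem_nhdsGT_iff_exists_Ioo_subset.1 hEv with ⟨u, hu, hsub⟩
    exact ⟨u, hu, fun t h1 h2 => hsub ⟨h1, h2⟩⟩
  have keyAB : ∀ b, 0 ≤ b → (∀ s ∈ Icc (0:ℝ) b, 0 ≤ J s) →
      (∀ s ∈ Icc (0:ℝ) b, 1 ≤ J' s) ∧ (∀ s ∈ Icc (0:ℝ) b, s ≤ J s) := by
    intro b hb hpos
    have hA : ∀ s ∈ Icc (0:ℝ) b, 1 ≤ J' s := by
      intro s hs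
      have H := image_le_of_deriv_right_le_deriv_boundary
        (f := fun _ => (1:ℝ)) (f' := fun _ => (0:ℝ)) (a := 0) (b := s)
        (B := J') (B' := J'')
        continuousOn_const (fun x _ => hasDerivWithinAt_const x _ 1)
        (le_of_eq hJ'0.symm)
        (hJ'cont.mono (fun x hx => hx.1))
        (fun x hx => (hJ'' x hx.1).mono (Ici_subset_Ici.2 hx.1))
        (fun x hx => by
          have h1 := hODE x hx.1
          have h2 : 0 ≤ -Rmin x * J x :=
            mul_nonneg (neg_nonneg.2 (hRmin_nonpos x hx.1))
              (hpos x ⟨hx.1, hx.2.le.trans hs.2⟩)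
          have h3 : J'' x = -Rmin x * J x := by linear_combination h1
          show (0:ℝ) ≤ J'' x
          rw [h3]; exact h2)
      exact H ⟨hs.1, le_rfl⟩
    refine ⟨hA, ?_⟩
    intro s hs
    have H := image_le_of_deriv_right_le_deriv_boundary
      (f := fun x => x) (f' := fun _ => (1:ℝ)) (a := 0) (b := s)
      (B := J) (B' := J')
      continuousOn_id (fun x _ => (hasDerivWithinAt_id x _))
      (le_of_eq hJ0.symm)
      (hJcont.mono (fun x hx => hx.1))
      (fun x hx => (hJ' x hx.1).mono (Ici_subset_Ici.2 hx.1))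
      (fun x hx => hA x ⟨hx.1, hx.2.le.trans hs.2⟩)
    exact H ⟨hs.1, le_rfl⟩
  have hJnonneg : ∀ t, 0 ≤ t → 0 ≤ J t := by
    by_contra h
    push_neg at h
    obtain ⟨t₀, ht₀, hJt₀⟩ := h
    set P : Set ℝ := {s | 0 ≤ s ∧ J s < 0} with hPdef
    have hPne : P.Nonempty := ⟨t₀, ht₀, hJt₀⟩
    have hPbdd : BddBelow P := ⟨0, fun s hs => hs.1⟩
    set c := sInf P with hcdef
    obtain ⟨ε, hε, hεP⟩ := hsmall
    have hPε : ∀ s ∈ P, ε ≤ s := by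
      intro s hs
      by_contra hlt
      push_neg at hlt
      have hs0 : 0 < s := by
        rcases hs.1.lt_or_eq with h | h
        · exact h
        · exfalso
          have h2 := hs.2
          rw [← h, hJ0] at h2
          exact lt_irrefl 0 h2
      exact absurd (hεP s hs0 hlt) (not_lt.2 hs.2.le)
    have hc0 : 0 < c := lt_of_lt_of_le hε (le_csInf hPne hPε)
    have hbelow : ∀ s, 0 ≤ s → s < c → 0 ≤ J s := by
      intro s hs hsc
      by_contra hneg
      push_neg at hneg
      exact absurd (csInf_le hPbdd ⟨hs, hneg⟩) (not_le.2 hsc)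
    have hcJ : ContinuousAt J c :=
      ((hJ' c hc0.le).hasDerivAt (Ici_mem_nhds hc0)).continuousAt
    have hJc0 : 0 ≤ J c := by
      have hT : Filter.Tendsto J (nhdsWithin c (Iio c)) (nhds (J c)) :=
        hcJ.continuousWithinAt
      refine ge_of_tendsto hT ?_
      filter_upwards [Ioo_mem_nhdsLT_of_mem (⟨hc0, le_rfl⟩ : c ∈ Ioc 0 c)] with s hs
      exact hbelow s hs.1.le hs.2
    have hIcc : ∀ s ∈ Icc (0:ℝ) c, 0 ≤ J s := by
      intro s hs
      rcases hs.2.lt_or_eq with h | h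
      · exact hbelow s hs.1 h
      · rw [h]; exact hJc0
    have hcle : c ≤ J c := (keyAB c hc0.le hIcc).2 c ⟨hc0.le, le_rfl⟩
    have hclos : c ∈ closure P := csInf_mem_closure hPne hPbdd
    obtain ⟨u, hu_mem, hu_lim⟩ := mem_closure_iff_seq_limit.1 hclos
    have hJcle : J c ≤ 0 := by
      have hT : Filter.Tendsto (fun n => J (u n)) Filter.atTop (nhds (J c)) :=
        hcJ.tendsto.comp hu_lim
      exact le_of_tendsto hT (Filter.Eventually.of_forall fun n => (hu_mem n).2.le)
    linarith
  have hJ'1 : ∀ t, 0 ≤ t → 1 ≤ J' t :=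
    fun t ht => (keyAB t ht (fun s hs => hJnonneg s hs.1)).1 t ⟨ht, le_rfl⟩
  have hJt : ∀ t, 0 ≤ t → t ≤ J t :=
    fun t ht => (keyAB t ht (fun s hs => hJnonneg s hs.1)).2 t ⟨ht, le_rfl⟩
  have hJpos : ∀ t, 0 < t → 0 < J t := fun t ht => lt_of_lt_of_le ht (hJt t ht.le)
  have hSpos : ∀ t, 0 < t → 0 < S t := by
    intro t ht
    rw [hS t ht]
    exact div_pos (lt_of_lt_of_le one_pos (hJ'1 t ht.le)) (hJpos t ht)
  ------------------------------------------------------------------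
  -- Part 2 : the Riccati equation for S
  ------------------------------------------------------------------
  have hSderiv : ∀ x ∈ Ici R₁, HasDerivAt S (κ - β / x ^ 2 - S x ^ 2) x := by
    intro x hx
    have hx0 : 0 < x := lt_of_lt_of_le hR₁ hx
    have hJx : 0 < J x := hJpos x hx0
    have hJd : HasDerivAt J (J' x) x := (hJ' x hx0.le).hasDerivAt (Ici_mem_nhds hx0)
    have hJ'd : HasDerivAt J' (J'' x) x := (hJ'' x hx0.le).hasDerivAt (Ici_mem_nhds hx0)
    have hdiv : HasDerivAt (fun y => J' y / J y)
        ((J'' x * J x - J' x * J' x) / (J x) ^ 2) x := hJ'd.div hJd hJx.ne'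
    have heq : S =ᶠ[nhds x] fun y => J' y / J y := by
      filter_upwards [Ioi_mem_nhds hx0] with y hy
      exact hS y hy
    have hdS := hdiv.congr_of_eventuallyEq heq
    refine hdS.congr_deriv ?_
    have hJ''x : J'' x = (κ - β / x ^ 2) * J x := by
      have h1 := hODE x hx0.le
      rw [hRmin_eq x hx] at h1
      linear_combination h1
    rw [hS x hx0, hJ''x]
    field_simp
  ------------------------------------------------------------------
  -- Part 3 : stage 1, upper bound S ≤ r + M/x on [R₁, ∞)
  ------------------------------------------------------------------
  obtain ⟨M, hMdef⟩ : ∃ x : ℝ, x = R₁ * S R₁ + 1 := ⟨_, rfl⟩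
  have hM1 : 1 ≤ M := by
    have := mul_pos hR₁ (hSpos R₁ hR₁)
    linarith
  have stage1 : ∀ x ∈ Ici R₁, S x ≤ r + M / x := by
    apply fence hSderiv
    · intro x hx
      have hx0 : 0 < x := lt_of_lt_of_le hR₁ hx
      exact (hd1 M hx0.ne').const_add r
    · have h1 : S R₁ < M / R₁ := by
        rw [lt_div_iff₀ hR₁]
        linarith [hMdef]
      have h2 : 0 < M / R₁ := div_pos (by linarith) hR₁
      linarith [hr.le]
    · intro x hx heq
      have hx0 : 0 < x := lt_of_lt_of_le hR₁ hx
      show κ - β / x ^ 2 - S x ^ 2 < -(M / x ^ 2)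
      rw [heq]
      have key : (-(M / x ^ 2)) - (κ - β / x ^ 2 - (r + M / x) ^ 2)
          = ((r ^ 2 - κ) * x ^ 2 + 2 * r * M * x + (β + M ^ 2 - M)) / x ^ 2 := by
        field_simp
        ring
      have hz : (r ^ 2 - κ) * x ^ 2 = 0 := by rw [hr2]; ring
      have h2 : 0 < 2 * r * M * x := mul_pos (mul_pos (mul_pos two_pos hr) (by linarith)) hx0
      have h3 : 0 ≤ (M - 1) * M := mul_nonneg (by linarith) (by linarith)
      have hN : 0 < (r ^ 2 - κ) * x ^ 2 + 2 * r * M * x + (β + M ^ 2 - M) := by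
        linarith [hz, h2, h3]
      have := div_pos hN (pow_pos hx0 2)
      linarith
  ------------------------------------------------------------------
  -- Part 4 : stage 2, lower bound S ≥ r - A/x on [T₂, ∞)
  ------------------------------------------------------------------
  obtain ⟨T₂, hT₂def⟩ : ∃ x : ℝ, x = max (max R₁ 1) ((r + β) / κ + 1) := ⟨_, rfl⟩
  have hT₂R₁ : R₁ ≤ T₂ := by rw [hT₂def]; exact le_trans (le_max_left _ _) (le_max_left _ _)
  have hT₂1 : 1 ≤ T₂ := by rw [hT₂def]; exact le_trans (le_max_right _ _) (le_max_left _ _)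
  have hT₂0 : 0 < T₂ := lt_of_lt_of_le one_pos hT₂1
  have hT₂κ' : r + β < κ * T₂ := by
    have h1 : (r + β) / κ + 1 ≤ T₂ := by rw [hT₂def]; exact le_max_right _ _
    have h2 : (r + β) / κ < T₂ := by linarith
    have h3 := (div_lt_iff₀ hκ).1 h2
    linarith [h3]
  have hT₂κ : r * T₂ + β < κ * T₂ ^ 2 := by
    have h1 : (r + β) * T₂ < κ * T₂ * T₂ := mul_lt_mul_of_pos_right hT₂κ' hT₂0
    have h2 : β ≤ β * T₂ := le_mul_of_one_le_right hβ.le hT₂1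
    linarith [h1, h2]
  obtain ⟨A, hAdef⟩ : ∃ x : ℝ, x = r * T₂ := ⟨_, rfl⟩
  have hA0 : 0 < A := by rw [hAdef]; exact mul_pos hr hT₂0
  have stage2 : ∀ x ∈ Ici T₂, r - A / x ≤ S x := by
    apply fence (g := S) (g' := fun x => κ - β / x ^ 2 - S x ^ 2)
    · intro x hx
      have hx0 : 0 < x := lt_of_lt_of_le hT₂0 hx
      simpa using (hd1 A hx0.ne').const_sub r
    · intro x hx
      exact hSderiv x (le_trans hT₂R₁ hx)
    · have h1 : A / T₂ = r := by
        rw [hAdef, mul_div_assoc, div_self hT₂0.ne', mul_one]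
      rw [h1]
      simpa using (hSpos T₂ (lt_of_lt_of_le hR₁ hT₂R₁)).le
    · intro x hx heq
      have hx0 : 0 < x := lt_of_lt_of_le hT₂0 hx
      have hxT : T₂ ≤ x := hx
      have heq' : S x = r - A / x := heq.symm
      show A / x ^ 2 < κ - β / x ^ 2 - S x ^ 2
      rw [heq']
      have key : (κ - β / x ^ 2 - (r - A / x) ^ 2) - A / x ^ 2
          = ((κ - r ^ 2) * x ^ 2 + 2 * r * A * x - (β + A ^ 2 + A)) / x ^ 2 := by
        field_simp
        ring
      have hz : (κ - r ^ 2) * x ^ 2 = 0 := by rw [hr2]; ring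
      have hA2 : A ^ 2 = r ^ 2 * T₂ ^ 2 := by rw [hAdef]; ring
      have hprod : 2 * r * A * T₂ ≤ 2 * r * A * x :=
        mul_le_mul_of_nonneg_left hxT (by linarith [mul_nonneg hr.le hA0.le])
      have hAT : 2 * r * A * T₂ = 2 * r ^ 2 * T₂ ^ 2 := by rw [hAdef]; ring
      have hr2T : r ^ 2 * T₂ ^ 2 = κ * T₂ ^ 2 := by rw [hr2]
      have hN : 0 < (κ - r ^ 2) * x ^ 2 + 2 * r * A * x - (β + A ^ 2 + A) := by
        have hArT : A = r * T₂ := hAdef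
        linarith [hz, hprod, hAT, hA2, hr2T, hArT, hT₂κ]
      have := div_pos hN (pow_pos hx0 2)
      linarith
  ------------------------------------------------------------------
  -- Part 5 : stage 3/4, two-sided 1/x² bounds on [T₃, ∞)
  ------------------------------------------------------------------
  obtain ⟨T₃, hT₃def⟩ : ∃ x : ℝ, x = max (max T₂ ((2 * β / r + 1) / r)) (4 / r) := ⟨_, rfl⟩
  have hT₃T₂ : T₂ ≤ T₃ := by rw [hT₃def]; exact le_trans (le_max_left _ _) (le_max_left _ _)
  have hT₃0 : 0 < T₃ := lt_of_lt_of_le hT₂0 hT₃T₂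
  have hT₃1 : 1 ≤ T₃ := le_trans hT₂1 hT₃T₂
  have hT₃R₁ : R₁ ≤ T₃ := le_trans hT₂R₁ hT₃T₂
  have hT₃4 : 4 ≤ r * T₃ := by
    have h1 : 4 / r ≤ T₃ := by rw [hT₃def]; exact le_max_right _ _
    have := (div_le_iff₀ hr).1 h1
    linarith
  have hT₃b : 2 * β / r + 1 ≤ r * T₃ ^ 2 := by
    have h1 : (2 * β / r + 1) / r ≤ T₃ := by rw [hT₃def]; exact le_trans (le_max_right _ _) (le_max_left _ _)
    have h2 : 2 * β / r + 1 ≤ T₃ * r := (div_le_iff₀ hr).1 h1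
    have h3 : 0 ≤ 2 * β / r + 1 := by linarith [div_pos (show (0:ℝ) < 2 * β by linarith) hr]
    have h4 : (2 * β / r + 1) * T₃ ≤ T₃ * r * T₃ := mul_le_mul_of_nonneg_right h2 hT₃0.le
    have h5 : 2 * β / r + 1 ≤ (2 * β / r + 1) * T₃ := le_mul_of_one_le_right h3 hT₃1
    have h6 : T₃ * r * T₃ = r * T₃ ^ 2 := by ring
    linarith
  obtain ⟨K₁, hK₁def⟩ : ∃ x : ℝ, x = M * T₃ := ⟨_, rfl⟩
  have hK₁0 : 0 < K₁ := by rw [hK₁def]; exact mul_pos (by linarith) hT₃0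
  have stage3 : ∀ x ∈ Ici T₃, S x ≤ r + K₁ / x ^ 2 := by
    apply fence (f := S) (f' := fun x => κ - β / x ^ 2 - S x ^ 2)
    · intro x hx
      exact hSderiv x (le_trans hT₃R₁ hx)
    · intro x hx
      have hx0 : 0 < x := lt_of_lt_of_le hT₃0 hx
      exact (hd2 K₁ hx0.ne').const_add r
    · have h1 : S T₃ ≤ r + M / T₃ := stage1 T₃ hT₃R₁
      have h2 : M / T₃ = K₁ / T₃ ^ 2 := by
        rw [hK₁def]
        field_simp
      linarith
    · intro x hx heq
      have hx0 : 0 < x := lt_of_lt_of_le hT₃0 hx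
      show κ - β / x ^ 2 - S x ^ 2 < -(2 * K₁ / x ^ 3)
      rw [heq]
      have key : (-(2 * K₁ / x ^ 3)) - (κ - β / x ^ 2 - (r + K₁ / x ^ 2) ^ 2)
          = ((r ^ 2 - κ) * x ^ 4 + β * x ^ 2 + 2 * r * K₁ * x ^ 2 - 2 * K₁ * x + K₁ ^ 2)
            / x ^ 4 := by
        field_simp
        ring
      have hz : (r ^ 2 - κ) * x ^ 4 = 0 := by rw [hr2]; ring
      have hrx : 4 ≤ r * x := le_trans hT₃4 (mul_le_mul_of_nonneg_left hx hr.le)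
      have hβx : 0 < β * x ^ 2 := by positivity
      have hint : 0 ≤ 2 * K₁ * x * (r * x - 1) :=
        mul_nonneg (mul_nonneg (by linarith) hx0.le) (by linarith)
      have hN : 0 < (r ^ 2 - κ) * x ^ 4 + β * x ^ 2 + 2 * r * K₁ * x ^ 2
          - 2 * K₁ * x + K₁ ^ 2 := by linarith [hz, hβx, hint, sq_nonneg K₁]
      have := div_pos hN (pow_pos hx0 4)
      linarith
  obtain ⟨K₂, hK₂def⟩ : ∃ x : ℝ, x = max (A * T₃) (2 * β / r + 1) := ⟨_, rfl⟩
  have hK₂0 : 0 < K₂ := by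
    rw [hK₂def]
    have h := div_pos (show (0:ℝ) < 2 * β by linarith) hr
    exact lt_of_lt_of_le (by linarith) (le_max_right (A * T₃) _)
  have hK₂b : 2 * β < r * K₂ := by
    have h1 : 2 * β / r + 1 ≤ K₂ := by rw [hK₂def]; exact le_max_right _ _
    have h2 : r * (2 * β / r + 1) = 2 * β + r := by field_simp
    have h3 := mul_le_mul_of_nonneg_left h1 hr.le
    linarith
  have hK₂T₃ : K₂ ≤ r * T₃ ^ 2 := by
    rw [hK₂def]
    apply max_le
    · rw [hAdef]
      linarith [mul_nonneg (mul_nonneg hr.le hT₃0.le) (sub_nonneg.2 hT₃T₂)]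
    · exact hT₃b
  have stage4 : ∀ x ∈ Ici T₃, r - K₂ / x ^ 2 ≤ S x := by
    apply fence (g := S) (g' := fun x => κ - β / x ^ 2 - S x ^ 2)
    · intro x hx
      have hx0 : 0 < x := lt_of_lt_of_le hT₃0 hx
      simpa using (hd2 K₂ hx0.ne').const_sub r
    · intro x hx
      exact hSderiv x (le_trans hT₃R₁ hx)
    · have h1 : r - A / T₃ ≤ S T₃ := stage2 T₃ hT₃T₂
      have h2 : A / T₃ ≤ K₂ / T₃ ^ 2 := by
        rw [div_le_div_iff₀ hT₃0 (pow_pos hT₃0 2)]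
        have h3 : A * T₃ ≤ K₂ := by rw [hK₂def]; exact le_max_left _ _
        linarith [mul_le_mul_of_nonneg_right h3 hT₃0.le]
      linarith
    · intro x hx heq
      have hx0 : 0 < x := lt_of_lt_of_le hT₃0 hx
      have heq' : S x = r - K₂ / x ^ 2 := heq.symm
      show 2 * K₂ / x ^ 3 < κ - β / x ^ 2 - S x ^ 2
      rw [heq']
      have key : (κ - β / x ^ 2 - (r - K₂ / x ^ 2) ^ 2) - 2 * K₂ / x ^ 3
          = ((κ - r ^ 2) * x ^ 4 + 2 * r * K₂ * x ^ 2 - β * x ^ 2 - K₂ ^ 2 - 2 * K₂ * x)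
            / x ^ 4 := by
        field_simp
        ring
      have hz : (κ - r ^ 2) * x ^ 4 = 0 := by rw [hr2]; ring
      have hrx : 4 ≤ r * x := le_trans hT₃4 (mul_le_mul_of_nonneg_left hx hr.le)
      have hA1 : 2 * β * x ^ 2 < r * K₂ * x ^ 2 :=
        mul_lt_mul_of_pos_right hK₂b (pow_pos hx0 2)
      have hxx : T₃ ^ 2 ≤ x ^ 2 := pow_le_pow_left₀ hT₃0.le hx 2
      have hA2 : K₂ ^ 2 ≤ r * K₂ * x ^ 2 := by
        have h1 : K₂ ≤ r * x ^ 2 := le_trans hK₂T₃ (mul_le_mul_of_nonneg_left hxx hr.le)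
        linarith [mul_le_mul_of_nonneg_left h1 hK₂0.le]
      have hA3 : 4 * K₂ * x ≤ r * K₂ * x ^ 2 := by
        have h1 : 0 ≤ K₂ * x * (r * x - 4) :=
          mul_nonneg (mul_nonneg hK₂0.le hx0.le) (by linarith)
        linarith [h1]
      have hN : 0 < (κ - r ^ 2) * x ^ 4 + 2 * r * K₂ * x ^ 2 - β * x ^ 2 - K₂ ^ 2
          - 2 * K₂ * x := by linarith
      have := div_pos hN (pow_pos hx0 4)
      linarith
  obtain ⟨K, hKdef⟩ : ∃ x : ℝ, x = max K₁ K₂ := ⟨_, rfl⟩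
  have hK0 : 0 < K := lt_of_lt_of_le hK₁0 (by rw [hKdef]; exact le_max_left _ K₂)
  have hKup : ∀ x ∈ Ici T₃, S x ≤ r + K / x ^ 2 := by
    intro x hx
    have hx0 : 0 < x := lt_of_lt_of_le hT₃0 hx
    have h1 := stage3 x hx
    have h2 : K₁ / x ^ 2 ≤ K / x ^ 2 :=
      (div_le_div_iff_of_pos_right (pow_pos hx0 2)).2 (by rw [hKdef]; exact le_max_left _ _)
    linarith
  have hKlo : ∀ x ∈ Ici T₃, r - K / x ^ 2 ≤ S x := by
    intro x hx
    have hx0 : 0 < x := lt_of_lt_of_le hT₃0 hx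
    have h1 := stage4 x hx
    have h2 : K₂ / x ^ 2 ≤ K / x ^ 2 :=
      (div_le_div_iff_of_pos_right (pow_pos hx0 2)).2 (by rw [hKdef]; exact le_max_right _ _)
    linarith
  ------------------------------------------------------------------
  -- Part 6 : final stage, barriers r - a/x² ± C/x³ on [T₄, ∞)
  ------------------------------------------------------------------
  obtain ⟨a, hadef⟩ : ∃ x : ℝ, x = β / (2 * r) := ⟨_, rfl⟩
  have ha0 : 0 < a := by rw [hadef]; positivity
  have ha2 : 2 * r * a = β := by
    rw [hadef]
    field_simp
  obtain ⟨Q, hQdef⟩ : ∃ x : ℝ, x = 64 * a / r + 16 * (K + a) + 17 := ⟨_, rfl⟩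
  have hQ0 : 0 < Q := by
    rw [hQdef]
    have h1 : 0 < 64 * a / r := div_pos (by linarith) hr
    linarith
  obtain ⟨T₄, hT₄def⟩ : ∃ x : ℝ, x = max (max T₃ (2 * a)) (max (12 / r) (Real.sqrt (Q / r) + 1)) := ⟨_, rfl⟩
  have hT₄T₃ : T₃ ≤ T₄ := by rw [hT₄def]; exact le_trans (le_max_left _ _) (le_max_left _ _)
  have hT₄0 : 0 < T₄ := lt_of_lt_of_le hT₃0 hT₄T₃
  have hT₄1 : 1 ≤ T₄ := le_trans hT₃1 hT₄T₃
  have hT₄R₁ : R₁ ≤ T₄ := le_trans hT₃R₁ hT₄T₃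
  have hT₄2a : 2 * a ≤ T₄ := by rw [hT₄def]; exact le_trans (le_max_right _ _) (le_max_left _ _)
  have hT₄12 : 12 ≤ r * T₄ := by
    have h1 : 12 / r ≤ T₄ := by rw [hT₄def]; exact le_trans (le_max_left _ _) (le_max_right _ _)
    have := (div_le_iff₀ hr).1 h1
    linarith
  have hQT₄ : Q ≤ r * T₄ ^ 2 := by
    have hs : Real.sqrt (Q / r) ^ 2 = Q / r := Real.sq_sqrt (div_nonneg hQ0.le hr.le)
    have h1 : Real.sqrt (Q / r) ≤ T₄ := by
      have h2 : Real.sqrt (Q / r) + 1 ≤ T₄ := by rw [hT₄def]; exact le_trans (le_max_right _ _) (le_max_right _ _)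
      linarith
    have h2 : Q / r ≤ T₄ ^ 2 := by
      rw [← hs]
      exact pow_le_pow_left₀ (Real.sqrt_nonneg _) h1 2
    have := (div_le_iff₀ hr).1 h2
    linarith
  obtain ⟨C, hCdef⟩ : ∃ x : ℝ, x = 4 * a / r + (K + a) * T₄ + 1 := ⟨_, rfl⟩
  have hC0 : 0 < C := by
    rw [hCdef]
    have h1 : 0 < 4 * a / r := div_pos (by linarith) hr
    linarith [mul_pos (show (0:ℝ) < K + a by linarith) hT₄0]
  have hCa : 4 * a ≤ r * C := by
    have h1 : r * (4 * a / r) = 4 * a := by field_simp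
    have h2 : 0 ≤ r * ((K + a) * T₄) := mul_nonneg hr.le (mul_nonneg (by linarith) hT₄0.le)
    have h3 : r * C = r * (4 * a / r) + r * ((K + a) * T₄) + r := by rw [hCdef]; ring
    linarith
  have hCKa : (K + a) * T₄ ≤ C := by
    have : 0 ≤ 4 * a / r := div_nonneg (by linarith) hr.le
    linarith
  have h16C : 16 * C < r * T₄ ^ 3 := by
    have e1 : Q * T₄ ≤ r * T₄ ^ 2 * T₄ := mul_le_mul_of_nonneg_right hQT₄ hT₄0.le
    have h64 : 64 * a / r ≤ 64 * a / r * T₄ := le_mul_of_one_le_right (div_nonneg (by linarith) hr.le) hT₄1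
    have h17 : (17:ℝ) ≤ 17 * T₄ := by linarith
    have e2 : Q * T₄ = 64 * a / r * T₄ + 16 * (K + a) * T₄ + 17 * T₄ := by rw [hQdef]; ring
    have e3 : 16 * C = 64 * a / r + 16 * ((K + a) * T₄) + 16 := by rw [hCdef]; ring
    have e4 : r * T₄ ^ 2 * T₄ = r * T₄ ^ 3 := by ring
    linarith [e1, e2, e3, e4, h64, h17]
  -- upper final barrier
  have stage5 : ∀ x ∈ Ici T₄, S x ≤ r - a / x ^ 2 + C / x ^ 3 := by
    apply fence (f := S) (f' := fun x => κ - β / x ^ 2 - S x ^ 2)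
      (g' := fun x => 2 * a / x ^ 3 - 3 * C / x ^ 4)
    · intro x hx
      exact hSderiv x (le_trans hT₄R₁ hx)
    · intro x hx
      have hx0 : 0 < x := lt_of_lt_of_le hT₄0 hx
      have h := ((hd2 a hx0.ne').const_sub r).add (hd3 C hx0.ne')
      refine h.congr_deriv ?_
      ring
    · have h1 : S T₄ ≤ r + K / T₄ ^ 2 := hKup T₄ hT₄T₃
      have h2 : (K + a) / T₄ ^ 2 ≤ C / T₄ ^ 3 := by
        rw [div_le_div_iff₀ (pow_pos hT₄0 2) (pow_pos hT₄0 3)]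
        linarith [mul_le_mul_of_nonneg_right hCKa (pow_nonneg hT₄0.le 2)]
      have h3 : (K + a) / T₄ ^ 2 = K / T₄ ^ 2 + a / T₄ ^ 2 := add_div K a _
      linarith
    · intro x hx heq
      have hx0 : 0 < x := lt_of_lt_of_le hT₄0 hx
      show κ - β / x ^ 2 - S x ^ 2 < 2 * a / x ^ 3 - 3 * C / x ^ 4
      rw [heq]
      have key : (2 * a / x ^ 3 - 3 * C / x ^ 4)
            - (κ - β / x ^ 2 - (r - a / x ^ 2 + C / x ^ 3) ^ 2)
          = ((r ^ 2 - κ) * x ^ 6 + (β - 2 * r * a) * x ^ 4 + (2 * a + 2 * r * C) * x ^ 3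
            + (a ^ 2 - 3 * C) * x ^ 2 - 2 * a * C * x + C ^ 2) / x ^ 6 := by
        field_simp
        ring
      have hz1 : (r ^ 2 - κ) * x ^ 6 = 0 := by rw [hr2]; ring
      have hz2 : (β - 2 * r * a) * x ^ 4 = 0 := by rw [ha2]; ring
      have h2a : 0 < 2 * a * x ^ 3 := mul_pos (by linarith) (pow_pos hx0 3)
      have hrx : 12 ≤ r * x := le_trans hT₄12 (mul_le_mul_of_nonneg_left hx hr.le)
      have hCx : 0 ≤ C * x ^ 2 * (2 * r * x - 3) :=
        mul_nonneg (mul_nonneg hC0.le (sq_nonneg x)) (by linarith)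
      have hsq := sq_nonneg (a * x - C)
      have hN : 0 < (r ^ 2 - κ) * x ^ 6 + (β - 2 * r * a) * x ^ 4
          + (2 * a + 2 * r * C) * x ^ 3 + (a ^ 2 - 3 * C) * x ^ 2
          - 2 * a * C * x + C ^ 2 := by linarith [hz1, hz2, h2a, hCx, hsq]
      have := div_pos hN (pow_pos hx0 6)
      linarith
  -- lower final barrier
  have stage6 : ∀ x ∈ Ici T₄, r - a / x ^ 2 - C / x ^ 3 ≤ S x := by
    apply fence (g := S) (g' := fun x => κ - β / x ^ 2 - S x ^ 2)
      (f' := fun x => 2 * a / x ^ 3 + 3 * C / x ^ 4)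
    · intro x hx
      have hx0 : 0 < x := lt_of_lt_of_le hT₄0 hx
      have h := ((hd2 a hx0.ne').const_sub r).sub (hd3 C hx0.ne')
      refine h.congr_deriv ?_
      ring
    · intro x hx
      exact hSderiv x (le_trans hT₄R₁ hx)
    · have h1 : r - K / T₄ ^ 2 ≤ S T₄ := hKlo T₄ hT₄T₃
      have h2 : (K + a) / T₄ ^ 2 ≤ C / T₄ ^ 3 := by
        rw [div_le_div_iff₀ (pow_pos hT₄0 2) (pow_pos hT₄0 3)]
        linarith [mul_le_mul_of_nonneg_right hCKa (pow_nonneg hT₄0.le 2)]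
      have h3 : (K + a) / T₄ ^ 2 = K / T₄ ^ 2 + a / T₄ ^ 2 := add_div K a _
      have h4 : 0 ≤ a / T₄ ^ 2 := div_nonneg ha0.le (sq_nonneg _)
      linarith
    · intro x hx heq
      have hx0 : 0 < x := lt_of_lt_of_le hT₄0 hx
      have heq' : S x = r - a / x ^ 2 - C / x ^ 3 := heq.symm
      show 2 * a / x ^ 3 + 3 * C / x ^ 4 < κ - β / x ^ 2 - S x ^ 2
      rw [heq']
      have key : (κ - β / x ^ 2 - (r - a / x ^ 2 - C / x ^ 3) ^ 2)
            - (2 * a / x ^ 3 + 3 * C / x ^ 4)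
          = ((κ - r ^ 2) * x ^ 6 + (2 * r * a - β) * x ^ 4 + (2 * r * C - 2 * a) * x ^ 3
            + (-(a ^ 2) - 3 * C) * x ^ 2 - 2 * a * C * x - C ^ 2) / x ^ 6 := by
        field_simp
        ring
      have hz1 : (κ - r ^ 2) * x ^ 6 = 0 := by rw [hr2]; ring
      have hz2 : (2 * r * a - β) * x ^ 4 = 0 := by rw [ha2]; ring
      have hrx : 12 ≤ r * x := le_trans hT₄12 (mul_le_mul_of_nonneg_left hx hr.le)
      have hx2a : 2 * a ≤ x := le_trans hT₄2a hx
      have hrCx0 : 0 < r * C * x ^ 3 := mul_pos (mul_pos hr hC0) (pow_pos hx0 3)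
      -- piece 1 : 4*a*x^3 ≤ r*C*x^3
      have p1 : 4 * (a * x ^ 3) ≤ r * C * x ^ 3 := by
        linarith [mul_nonneg (sub_nonneg.2 hCa) (pow_nonneg hx0.le 3)]
      -- piece 2 : 12*C*x^2 ≤ r*C*x^3
      have p2 : 12 * (C * x ^ 2) ≤ r * C * x ^ 3 := by
        linarith [mul_nonneg (mul_nonneg hC0.le (sq_nonneg x)) (by linarith : (0:ℝ) ≤ r * x - 12)]
      -- piece 3 : 8*a²*x² ≤ r*C*x^3
      have h8 : 8 * a ^ 2 ≤ r * C * x := by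
        linarith [mul_nonneg (sub_nonneg.2 hCa) hx0.le,
          mul_nonneg (by linarith : (0:ℝ) ≤ 4 * a) (sub_nonneg.2 hx2a)]
      have p3 : 8 * (a ^ 2 * x ^ 2) ≤ r * C * x ^ 3 := by
        linarith [mul_le_mul_of_nonneg_right h8 (sq_nonneg x)]
      -- piece 4 : 24*a*C*x ≤ r*C*x^3
      have hrx2 : 24 * a ≤ r * x ^ 2 := by
        linarith [mul_le_mul_of_nonneg_right hrx hx0.le, hx2a]
      have p4 : 24 * (a * C * x) ≤ r * C * x ^ 3 := by
        linarith [mul_nonneg (mul_nonneg hC0.le hx0.le) (sub_nonneg.2 hrx2)]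
      -- piece 5 : 16*C² < r*C*x^3
      have h16x : 16 * C < r * x ^ 3 := by
        have h1 : T₄ ^ 3 ≤ x ^ 3 := pow_le_pow_left₀ hT₄0.le hx 3
        linarith [mul_le_mul_of_nonneg_left h1 hr.le, h16C]
      have p5 : 16 * C ^ 2 < r * C * x ^ 3 := by
        linarith [mul_pos hC0 (sub_pos.2 h16x)]
      have hN : 0 < (κ - r ^ 2) * x ^ 6 + (2 * r * a - β) * x ^ 4
          + (2 * r * C - 2 * a) * x ^ 3 + (-(a ^ 2) - 3 * C) * x ^ 2
          - 2 * a * C * x - C ^ 2 := by linarith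
      have := div_pos hN (pow_pos hx0 6)
      linarith
  ------------------------------------------------------------------
  -- Conclusion
  ------------------------------------------------------------------
  refine ⟨C, hC0, T₄, hT₄R₁, ?_⟩
  intro t ht
  have ht0 : 0 < t := lt_of_lt_of_le hT₄0 ht
  have hup := stage5 t ht
  have hlo := stage6 t ht
  have hba : β / (2 * r * t ^ 2) = a / t ^ 2 := by
    rw [hadef, div_div]
  rw [hba, abs_le]
  constructor <;> linarith
end

section
/- Let n ≥ 2 be an integer, L > 0 and λ > 0. Let R_min : [0, ∞) → ℝ be a continuous function with R_min(t) ≤ 0 for all t ≥ 0, let J : [0, ∞) → ℝ be the C² solution of the Jacobi equation J''(t) + R_min(t)·J(t) = 0 with J(0) = 0, J'(0) = 1, and set S(t) = J'(t)/J(t) for t > 0. Let h₁ : [0, L] → ℝ be a C² function satisfying the ODE −h₁''(x) − (n−1)·S(x)·h₁'(x) = λ·h₁(x) for all x ∈ (0, L], together with h₁'(0) = 0, h₁(L) = 0, and h₁(x) > 0 for all x ∈ [0, L). Then h₁'(x) < 0 for all x ∈ (0, L]. -/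
open Set Real

lemma jacobi_pos (Rmin J J' J'' : ℝ → ℝ)
    (hRmin_nonpos : ∀ t ∈ Ici (0 : ℝ), Rmin t ≤ 0)
    (hJ' : ∀ t ∈ Ici (0 : ℝ), HasDerivWithinAt J (J' t) (Ici 0) t)
    (hJ'' : ∀ t ∈ Ici (0 : ℝ), HasDerivWithinAt J' (J'' t) (Ici 0) t)
    (hODE : ∀ t ∈ Ici (0 : ℝ), J'' t + Rmin t * J t = 0)
    (hJ0 : J 0 = 0) (hJ'0 : J' 0 = 1) :
    ∀ t > (0:ℝ), 0 < J t := by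
  have hJcont : ContinuousOn J (Ici 0) := fun t ht => (hJ' t ht).continuousWithinAt
  have hJ'cont : ContinuousOn J' (Ici 0) := fun t ht => (hJ'' t ht).continuousWithinAt
  -- J positive near 0
  have hslope : Filter.Tendsto (slope J 0) (nhdsWithin 0 (Ioi 0)) (nhds 1) := by
    have h0 := hJ' 0 (mem_Ici.mpr le_rfl)
    rw [hasDerivWithinAt_iff_tendsto_slope] at h0
    rw [Ici_sdiff_left] at h0
    rwa [hJ'0] at h0
  have hev : ∀ᶠ t in nhdsWithin 0 (Ioi 0), 0 < J t := by
    have h1 : ∀ᶠ t in nhdsWithin 0 (Ioi 0), 0 < slope J 0 t :=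
      hslope.eventually (eventually_gt_nhds (by norm_num))
    filter_upwards [h1, self_mem_nhdsWithin] with t ht ht'
    have : slope J 0 t = J t / t := by
      rw [slope_def_field]; simp [hJ0]
    rw [this] at ht
    have htpos : (0:ℝ) < t := ht'
    have := mul_pos ht htpos
    rwa [div_mul_cancel₀ _ (ne_of_gt htpos)] at this
  obtain ⟨ε, hε, hIoc⟩ := mem_nhdsGT_iff_exists_Ioc_subset.mp hev
  have hεpos : (0:ℝ) < ε := hε
  intro t ht
  by_contra hcon
  push_neg at hcon
  -- the bad set
  set Z : Set ℝ := {s : ℝ | ε ≤ s ∧ J s ≤ 0} with hZ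
  have hmemZ : ∀ s > (0:ℝ), J s ≤ 0 → s ∈ Z := by
    intro s hs hJs
    refine ⟨?_, hJs⟩
    by_contra hlt
    push_neg at hlt
    exact absurd hJs (not_le.mpr (hIoc ⟨hs, le_of_lt hlt⟩))
  have hne : Z.Nonempty := ⟨t, hmemZ t ht hcon⟩
  have hbdd : BddBelow Z := ⟨ε, fun s hs => hs.1⟩
  have hclosed : IsClosed Z := by
    have : Z = Ici ε ∩ J ⁻¹' (Iic 0) := by
      ext s; simp only [hZ, Set.mem_setOf_eq, Set.mem_inter_iff, Set.mem_Ici,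
        Set.mem_preimage, Set.mem_Iic]
    rw [this]
    exact ContinuousOn.preimage_isClosed_of_isClosed
      (hJcont.mono (Ici_subset_Ici.mpr (le_of_lt hεpos))) isClosed_Ici isClosed_Iic
  set t₀ := sInf Z with ht₀
  have ht₀mem : t₀ ∈ Z := hclosed.csInf_mem hne hbdd
  have ht₀pos : 0 < t₀ := lt_of_lt_of_le hεpos ht₀mem.1
  -- J > 0 on (0, t₀)
  have hJmid : ∀ s, 0 < s → s < t₀ → 0 < J s := by
    intro s hs hst
    by_contra hcs
    push_neg at hcs
    exact absurd (csInf_le hbdd (hmemZ s hs hcs)) (not_le.mpr hst)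
  -- J' monotone on [0, t₀]
  have hmono : MonotoneOn J' (Icc 0 t₀) := by
    apply monotoneOn_of_deriv_nonneg (convex_Icc 0 t₀)
      (hJ'cont.mono (Icc_subset_Ici_self))
    · intro s hs
      rw [interior_Icc] at hs
      exact ((hJ'' s (le_of_lt hs.1)).hasDerivAt
        (Ici_mem_nhds hs.1)).differentiableAt.differentiableWithinAt
    · intro s hs
      rw [interior_Icc] at hs
      have hd : HasDerivAt J' (J'' s) s :=
        (hJ'' s (le_of_lt hs.1)).hasDerivAt (Ici_mem_nhds hs.1)
      rw [hd.deriv]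
      have := hODE s (le_of_lt hs.1)
      have hR := hRmin_nonpos s (le_of_lt hs.1)
      have hJs := hJmid s hs.1 hs.2
      nlinarith
  have hJ'ge : ∀ s ∈ Icc (0:ℝ) t₀, 1 ≤ J' s := by
    intro s hs
    have := hmono (left_mem_Icc.mpr (le_of_lt ht₀pos)) hs hs.1
    rwa [hJ'0] at this
  have hsm : StrictMonoOn J (Icc 0 t₀) := by
    apply strictMonoOn_of_deriv_pos (convex_Icc 0 t₀)
      (hJcont.mono (Icc_subset_Ici_self))
    intro s hs
    rw [interior_Icc] at hs
    have hd : HasDerivAt J (J' s) s :=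
      (hJ' s (le_of_lt hs.1)).hasDerivAt (Ici_mem_nhds hs.1)
    rw [hd.deriv]
    have := hJ'ge s ⟨le_of_lt hs.1, le_of_lt hs.2⟩
    linarith
  have : J 0 < J t₀ :=
    hsm (left_mem_Icc.mpr (le_of_lt ht₀pos)) (right_mem_Icc.mpr (le_of_lt ht₀pos)) ht₀pos
  rw [hJ0] at this
  exact absurd ht₀mem.2 (not_le.mpr this)

/-- Lemma 2.1 of the paper. With `R_min ≤ 0` continuous on `[0,∞)` and
`J` the solution of the Jacobi equation `J'' + R_min·J = 0`, `J(0) = 0`, `J'(0) = 1`, set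
`S = J'/J` on `(0,∞)`. Let `n ≥ 2`, `L > 0`, `λ > 0`, and let `h₁ : [0,L] → ℝ` be a C²
function with `-h₁'' - (n-1)·S·h₁' = λ·h₁` on `(0,L]`, `h₁'(0) = 0`, `h₁(L) = 0` and
`h₁ > 0` on `[0,L)`. Then `h₁' < 0` on `(0,L]`. -/
theorem stmt_6 (n : ℕ) (hn : 2 ≤ n) (L lam : ℝ) (hL : 0 < L) (hlam : 0 < lam)
    (Rmin J J' J'' : ℝ → ℝ)
    (hRmin_cont : ContinuousOn Rmin (Ici 0))
    (hRmin_nonpos : ∀ t ∈ Ici (0 : ℝ), Rmin t ≤ 0)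
    (hJ' : ∀ t ∈ Ici (0 : ℝ), HasDerivWithinAt J (J' t) (Ici 0) t)
    (hJ'' : ∀ t ∈ Ici (0 : ℝ), HasDerivWithinAt J' (J'' t) (Ici 0) t)
    (hJ''cont : ContinuousOn J'' (Ici 0))
    (hODE : ∀ t ∈ Ici (0 : ℝ), J'' t + Rmin t * J t = 0)
    (hJ0 : J 0 = 0) (hJ'0 : J' 0 = 1)
    (S : ℝ → ℝ) (hS : ∀ t > (0 : ℝ), S t = J' t / J t)
    (h₁ h₁' h₁'' : ℝ → ℝ)
    (hh₁' : ∀ x ∈ Icc (0 : ℝ) L, HasDerivWithinAt h₁ (h₁' x) (Icc 0 L) x)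
    (hh₁'' : ∀ x ∈ Icc (0 : ℝ) L, HasDerivWithinAt h₁' (h₁'' x) (Icc 0 L) x)
    (hh₁''cont : ContinuousOn h₁'' (Icc 0 L))
    (hODE₁ : ∀ x ∈ Ioc (0 : ℝ) L,
      -h₁'' x - ((n : ℝ) - 1) * S x * h₁' x = lam * h₁ x)
    (hh₁'0 : h₁' 0 = 0) (hh₁L : h₁ L = 0)
    (hpos : ∀ x ∈ Ico (0 : ℝ) L, 0 < h₁ x) :
    ∀ x ∈ Ioc (0 : ℝ) L, h₁' x < 0 := by
  obtain ⟨m, rfl⟩ : ∃ m, n = m + 2 := ⟨n - 2, by omega⟩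
  have hJpos : ∀ t > (0:ℝ), 0 < J t :=
    jacobi_pos Rmin J J' J'' hRmin_nonpos hJ' hJ'' hODE hJ0 hJ'0
  have hJcont : ContinuousOn J (Ici 0) := fun t ht => (hJ' t ht).continuousWithinAt
  have hh₁'cont : ContinuousOn h₁' (Icc 0 L) := fun x hx => (hh₁'' x hx).continuousWithinAt
  set F : ℝ → ℝ := fun x => J x ^ (m + 1) * h₁' x with hF
  have hFcont : ContinuousOn F (Icc 0 L) :=
    (((hJcont.mono (fun x hx => hx.1)).pow (m + 1)).mul hh₁'cont)
  have hFderiv : ∀ x ∈ Ioo (0:ℝ) L,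
      HasDerivAt F (-(lam * (J x ^ (m + 1) * h₁ x))) x := by
    intro x hx
    have hxI : x ∈ Icc (0:ℝ) L := ⟨hx.1.le, hx.2.le⟩
    have hJx : HasDerivAt J (J' x) x := (hJ' x hx.1.le).hasDerivAt (Ici_mem_nhds hx.1)
    have hhx : HasDerivAt h₁' (h₁'' x) x :=
      (hh₁'' x hxI).hasDerivAt (Icc_mem_nhds hx.1 hx.2)
    have hpow : HasDerivAt (fun y => J y ^ (m + 1))
        (((m : ℝ) + 1) * J x ^ m * J' x) x := by
      have := hJx.fun_pow (m + 1)
      simpa using this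
    have hprod := hpow.mul hhx
    have hJxpos : 0 < J x := hJpos x hx.1
    have hODEx := hODE₁ x ⟨hx.1, hx.2.le⟩
    rw [hS x hx.1] at hODEx
    have h₁''eq : h₁'' x = -(((m:ℝ) + 2) - 1) * (J' x / J x) * h₁' x - lam * h₁ x := by
      push_cast at hODEx ⊢
      linarith
    have key : ((m : ℝ) + 1) * J x ^ m * J' x * h₁' x + J x ^ (m + 1) * h₁'' x
        = -(lam * (J x ^ (m + 1) * h₁ x)) := by
      rw [h₁''eq]
      have hne : J x ≠ 0 := ne_of_gt hJxpos
      field_simp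
      ring
    rw [key] at hprod
    exact hprod
  have hanti : StrictAntiOn F (Icc 0 L) := by
    apply strictAntiOn_of_deriv_neg (convex_Icc 0 L) hFcont
    intro x hx
    rw [interior_Icc] at hx
    rw [(hFderiv x hx).deriv]
    have h₁pos : 0 < h₁ x := hpos x ⟨hx.1.le, hx.2⟩
    have h2 : 0 < J x ^ (m + 1) := pow_pos (hJpos x hx.1) _
    have := mul_pos hlam (mul_pos h2 h₁pos)
    linarith
  intro x hx
  have hF0 : F 0 = 0 := by simp [hF, hJ0]
  have hFx : F x < 0 := by
    have := hanti (left_mem_Icc.mpr hL.le) ⟨hx.1.le, hx.2⟩ hx.1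
    rwa [hF0] at this
  have hJx : 0 < J x ^ (m + 1) := pow_pos (hJpos x hx.1) _
  simp only [hF] at hFx
  by_contra hcon
  push_neg at hcon
  exact absurd hFx (not_lt.mpr (mul_nonneg hJx.le hcon))
end

section
/- Let n ≥ 2 be an integer, κ > 0, and let β and δ > 0 satisfy β·(n−1)² > 1 + δ. Let R₁ > 0 with R₁² ≥ β/κ, and let R_min : [0, ∞) → ℝ be a continuous function with R_min(t) ≤ 0 for all t ≥ 0 and R_min(t) = −κ + β/t² for all t ≥ R₁. Let J : [0, ∞) → ℝ be the C² solution of the Jacobi equation J''(t) + R_min(t)·J(t) = 0 with J(0) = 0, J'(0) = 1, and set S(t) = J'(t)/J(t) for t > 0. Then there exists a constant R₀ > 0 (depending only on n, β, κ, δ and R_min) with the following property: for every R ≥ R₀, every k > 2, every λ₁ > 0, and every C² function φ₁ : [R, 2kR] → ℝ, not identically zero, satisfying −φ₁''(x) − (1+δ)/(4x²)·φ₁(x) = −λ₁·φ₁(x) on [R, 2kR] with φ₁(R) = φ₁(2kR) = 0, the function f(x) := φ₁(x)·J(x)^{−(n−1)/2} satisfies ∫_R^{2kR} |f'(x)|²·J(x)^{n−1}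 dx < ( (n−1)²κ/4 − λ₁ ) · ∫_R^{2kR} |f(x)|²·J(x)^{n−1} dx. -/
open Set Real Filter

private lemma noCross {d d' : ℝ → ℝ} {T : ℝ}
    (hd : ∀ t ∈ Ici T, HasDerivAt d (d' t) t)
    (h0 : 0 ≤ d T)
    (hz : ∀ t ∈ Ici T, d t = 0 → 0 < d' t) :
    ∀ t ∈ Ici T, 0 ≤ d t := by
  intro t₁ ht₁
  by_contra hneg
  push_neg at hneg
  set B : Set ℝ := {s | s ∈ Icc T t₁ ∧ d s < 0} with hB
  have hBne : B.Nonempty := ⟨t₁, ⟨ht₁, le_refl _⟩, hneg⟩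
  have hBbdd : BddBelow B := ⟨T, fun s hs => hs.1.1⟩
  set c := sInf B with hc
  have hcT : T ≤ c := le_csInf hBne fun s hs => hs.1.1
  have hct₁ : c ≤ t₁ := csInf_le hBbdd ⟨⟨ht₁, le_refl _⟩, hneg⟩
  have hcIci : c ∈ Ici T := hcT
  have hcont : ContinuousAt d c := (hd c hcIci).continuousAt
  -- d c ≤ 0
  have hdc_le : d c ≤ 0 := by
    by_contra hpos
    push_neg at hpos
    have hev : d ⁻¹' (Ioi 0) ∈ nhds c := hcont (Ioi_mem_nhds hpos)
    obtain ⟨η, hη, hball⟩ := Metric.mem_nhds_iff.mp hev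
    obtain ⟨s, hsB, hslt⟩ := Real.lt_sInf_add_pos hBne hη
    have hsc : c ≤ s := csInf_le hBbdd hsB
    have : s ∈ Metric.ball c η := by
      rw [Metric.mem_ball, Real.dist_eq, abs_of_nonneg (by linarith)]
      linarith
    have h2 := hball this
    simp only [mem_preimage, mem_Ioi] at h2
    linarith [hsB.2]
  -- d c ≥ 0
  have hpre : ∀ s, T ≤ s → s < c → 0 ≤ d s := by
    intro s hTs hsc
    by_contra hs
    push_neg at hs
    exact absurd (csInf_le hBbdd ⟨⟨hTs, hsc.le.trans hct₁⟩, hs⟩) (not_le.mpr hsc)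
  have hdc_ge : 0 ≤ d c := by
    rcases eq_or_lt_of_le hcT with h | h
    · rwa [← h]
    · have htd : Filter.Tendsto d (nhdsWithin c (Iio c)) (nhds (d c)) :=
        hcont.continuousWithinAt.tendsto
      refine ge_of_tendsto htd ?_
      filter_upwards [Ioo_mem_nhdsLT_of_mem (⟨h, le_refl c⟩ : c ∈ Ioc T c)] with s hs
      exact hpre s hs.1.le hs.2
  have hdc : d c = 0 := le_antisymm hdc_le hdc_ge
  have hd'pos : 0 < d' c := hz c hcIci hdc
  have hslope : Filter.Tendsto (slope d c) (nhdsWithin c {c}ᶜ) (nhds (d' c)) :=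
    hasDerivAt_iff_tendsto_slope.mp (hd c hcIci)
  have hev : (slope d c) ⁻¹' (Ioi 0) ∈ nhdsWithin c {c}ᶜ := hslope (Ioi_mem_nhds hd'pos)
  rw [mem_nhdsWithin] at hev
  obtain ⟨u, huo, hcu, hsub⟩ := hev
  obtain ⟨η, hη, hball⟩ := Metric.mem_nhds_iff.mp (huo.mem_nhds hcu)
  obtain ⟨s, hsB, hslt⟩ := Real.lt_sInf_add_pos hBne hη
  have hsc : c ≤ s := csInf_le hBbdd hsB
  have hsne : s ≠ c := fun h => by rw [h] at hsB; exact absurd hdc (ne_of_lt hsB.2)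
  have hsmem : s ∈ u ∩ {c}ᶜ := ⟨hball (by rw [Metric.mem_ball, Real.dist_eq, abs_of_nonneg (by linarith)]; linarith), hsne⟩
  have : 0 < slope d c s := hsub hsmem
  rw [slope_def_field] at this
  have : 0 < (d s - d c) / (s - c) := by
    simpa [div_sub_div_same] using this
  have hsc' : c < s := lt_of_le_of_ne hsc (Ne.symm hsne)
  have hA : 0 < d s - d c := by
    rcases div_pos_iff.mp this with ⟨h1, _⟩ | ⟨_, h2⟩
    · exact h1
    · linarith
  linarith [hsB.2, hdc.ge, hdc.le]

private lemma crossBudget {d d' : ℝ → ℝ} {T T' cc g : ℝ}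
    (hd : ∀ t ∈ Icc T T', HasDerivAt d (d' t) t)
    (hlow : ∀ t ∈ Icc T T', d t < 0 → cc ≤ d' t)
    (hg : -g ≤ d T) (hbud : g < cc * (T' - T)) (hT : T ≤ T') :
    ∃ t ∈ Icc T T', 0 ≤ d t := by
  by_contra h
  push_neg at h
  have hmono : MonotoneOn (fun t => d t - cc * t) (Icc T T') := by
    apply monotoneOn_of_hasDerivWithinAt_nonneg (convex_Icc T T')
      (f' := fun t => d' t - cc)
    · exact fun x hx => ((hd x hx).continuousAt.sub (by fun_prop)).continuousWithinAt
    · intro x hx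
      rw [interior_Icc] at hx
      exact (((hd x (Ioo_subset_Icc_self hx)).sub
        ((hasDerivAt_id x).const_mul cc |>.congr_deriv (by ring)))).hasDerivWithinAt
    · intro x hx
      rw [interior_Icc] at hx
      have := hlow x (Ioo_subset_Icc_self hx) (h x (Ioo_subset_Icc_self hx))
      linarith
  have := hmono (left_mem_Icc.mpr hT) (right_mem_Icc.mpr hT) hT
  have hT' := h T' (right_mem_Icc.mpr hT)
  simp only at this
  linarith

private lemma Jpos_aux {Rmin J J' J'' : ℝ → ℝ}
    (hRmin_nonpos : ∀ t ∈ Ici (0:ℝ), Rmin t ≤ 0)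
    (hJ' : ∀ t ∈ Ici (0:ℝ), HasDerivWithinAt J (J' t) (Ici 0) t)
    (hJ'' : ∀ t ∈ Ici (0:ℝ), HasDerivWithinAt J' (J'' t) (Ici 0) t)
    (hODE : ∀ t ∈ Ici (0:ℝ), J'' t + Rmin t * J t = 0)
    (hJ0 : J 0 = 0) (hJ'0 : J' 0 = 1) :
    (∀ t : ℝ, 0 < t → 0 < J t) ∧ (∀ t : ℝ, 0 ≤ t → 1 ≤ J' t) := by
  have hJat : ∀ x : ℝ, 0 < x → HasDerivAt J (J' x) x := fun x hx =>
    (hJ' x hx.le).hasDerivAt (Ici_mem_nhds hx)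
  have hJ'at : ∀ x : ℝ, 0 < x → HasDerivAt J' (J'' x) x := fun x hx =>
    (hJ'' x hx.le).hasDerivAt (Ici_mem_nhds hx)
  have hJcont : ContinuousOn J (Ici 0) := fun t ht => (hJ' t ht).continuousWithinAt
  have hJ'cont : ContinuousOn J' (Ici 0) := fun t ht => (hJ'' t ht).continuousWithinAt
  -- small interval positivity
  obtain ⟨ε, hε, hIcc⟩ : ∃ ε, 0 < ε ∧ ∀ t ∈ Icc (0:ℝ) ε, (1:ℝ)/2 < J' t := by
    have h := hJ'cont 0 (self_mem_Ici)
    have hset : J' ⁻¹' (Ioi (1/2)) ∈ nhdsWithin 0 (Ici 0) := by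
      apply h
      rw [hJ'0]
      exact Ioi_mem_nhds (by norm_num)
    obtain ⟨u, hu, hsub⟩ := mem_nhdsGE_iff_exists_Icc_subset.mp hset
    exact ⟨u, hu, fun t ht => hsub ht⟩
  -- on any [0,c] with J ≥ 0 on [0,c), get J' ≥ 1 on [0,c] and J strictmono
  have key : ∀ c : ℝ, 0 < c → (∀ s, 0 ≤ s → s < c → 0 ≤ J s) →
      (∀ s ∈ Icc (0:ℝ) c, 1 ≤ J' s) ∧ 0 < J c := by
    intro c hc hpos
    have hJ'mono : MonotoneOn J' (Icc (0:ℝ) c) := by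
      apply monotoneOn_of_hasDerivWithinAt_nonneg (convex_Icc 0 c)
        (hJ'cont.mono Icc_subset_Ici_self) (f' := J'')
      · intro x hx
        rw [interior_Icc] at hx
        exact (hJ'at x hx.1).hasDerivWithinAt
      · intro x hx
        rw [interior_Icc] at hx
        have h1 := hODE x (le_of_lt hx.1)
        have h2 := hRmin_nonpos x (le_of_lt hx.1)
        have h3 := hpos x hx.1.le hx.2
        nlinarith
    have hJ'ge : ∀ s ∈ Icc (0:ℝ) c, 1 ≤ J' s := by
      intro s hs
      have := hJ'mono (left_mem_Icc.mpr hc.le) hs hs.1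
      rwa [hJ'0] at this
    refine ⟨hJ'ge, ?_⟩
    have hmono : StrictMonoOn J (Icc (0:ℝ) c) := by
      apply strictMonoOn_of_hasDerivWithinAt_pos (convex_Icc 0 c)
        (hJcont.mono Icc_subset_Ici_self) (f' := J')
      · intro x hx
        rw [interior_Icc] at hx
        exact (hJat x hx.1).hasDerivWithinAt
      · intro x hx
        rw [interior_Icc] at hx
        have := hJ'ge x ⟨hx.1.le, hx.2.le⟩
        linarith
    have := hmono (left_mem_Icc.mpr hc.le) (right_mem_Icc.mpr hc.le) hc
    rwa [hJ0] at this
  -- J > 0 on (0, ε]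
  have hsmall : ∀ t : ℝ, 0 < t → t ≤ ε → 0 < J t := by
    intro t ht htε
    have hmono : StrictMonoOn J (Icc (0:ℝ) ε) := by
      apply strictMonoOn_of_hasDerivWithinAt_pos (convex_Icc 0 ε)
        (hJcont.mono Icc_subset_Ici_self) (f' := J')
      · intro x hx
        rw [interior_Icc] at hx
        exact (hJat x hx.1).hasDerivWithinAt
      · intro x hx
        rw [interior_Icc] at hx
        have := hIcc x ⟨hx.1.le, hx.2.le⟩
        linarith
    have := hmono (left_mem_Icc.mpr hε.le) ⟨ht.le, htε⟩ ht
    rwa [hJ0] at this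
  -- main positivity
  have hJpos : ∀ t : ℝ, 0 < t → 0 < J t := by
    by_contra hcon
    push_neg at hcon
    obtain ⟨t₁, ht₁, hJt₁⟩ := hcon
    have ht₁ε : ε < t₁ := by
      by_contra hh
      push_neg at hh
      exact absurd (hsmall t₁ ht₁ hh) (not_lt.mpr hJt₁)
    set C : Set ℝ := Icc ε t₁ ∩ J ⁻¹' (Iic 0) with hC
    have hCclosed : IsClosed C :=
      (hJcont.mono (Icc_subset_Ici_self.trans (Ici_subset_Ici.mpr hε.le))).preimage_isClosed_of_isClosed
        isClosed_Icc isClosed_Iic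
    have hCne : C.Nonempty := ⟨t₁, ⟨ht₁ε.le, le_refl _⟩, hJt₁⟩
    have hCbdd : BddBelow C := ⟨ε, fun s hs => hs.1.1⟩
    have hcmem := hCclosed.csInf_mem hCne hCbdd
    set c := sInf C with hc
    have hcε : ε ≤ c := hcmem.1.1
    have hcpos : 0 < c := lt_of_lt_of_le hε hcε
    have hpos : ∀ s, 0 ≤ s → s < c → 0 ≤ J s := by
      intro s hs hsc
      rcases lt_or_ge ε s with h | h
      · by_contra hneg
        push_neg at hneg
        have : s ∈ C := ⟨⟨h.le, hsc.le.trans hcmem.1.2⟩, hneg.le⟩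
        exact absurd (csInf_le hCbdd this) (not_le.mpr hsc)
      · rcases eq_or_lt_of_le hs with h0 | h0
        · rw [← h0, hJ0]
        · exact (hsmall s h0 h).le
    have := (key c hcpos hpos).2
    exact absurd this (not_lt.mpr hcmem.2)
  refine ⟨hJpos, ?_⟩
  intro t ht
  rcases eq_or_lt_of_le ht with h | h
  · rw [← h, hJ'0]
  · exact (key t h fun s hs _ => by
      rcases eq_or_lt_of_le hs with h0 | h0
      · rw [← h0, hJ0]
      · exact (hJpos s h0).le).1 t (right_mem_Icc.mpr h.le)

private lemma expSmall (C γ c : ℝ) (hγ : 0 < γ) (hc : 0 < c) :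
    ∃ T : ℝ, 1 ≤ T ∧ ∀ t ≥ T, C * Real.exp (-(γ*t)) ≤ c / t^2 := by
  have h1 : Filter.Tendsto (fun t : ℝ => (C/γ^2) * ((γ*t)^2 * Real.exp (-(γ*t))))
      Filter.atTop (nhds 0) := by
    have h2 : Filter.Tendsto (fun t : ℝ => γ * t) Filter.atTop Filter.atTop :=
      Filter.Tendsto.const_mul_atTop hγ Filter.tendsto_id
    have h3 := (tendsto_pow_mul_exp_neg_atTop_nhds_zero 2).comp h2
    have h4 := h3.const_mul (C/γ^2)
    rw [mul_zero] at h4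
    exact h4
  have h5 : ∀ᶠ t : ℝ in Filter.atTop, (C/γ^2) * ((γ*t)^2 * Real.exp (-(γ*t))) < c :=
    h1.eventually_lt_const hc
  obtain ⟨T, hT⟩ := (h5.and (Filter.eventually_ge_atTop 1)).exists_forall_of_atTop
  refine ⟨max T 1, le_max_right _ _, ?_⟩
  intro t ht
  have ht1 : (1:ℝ) ≤ t := le_trans (le_max_right T 1) ht
  have htT : T ≤ t := le_trans (le_max_left T 1) ht
  have h6 := (hT t htT).1
  have ht0 : (0:ℝ) < t := lt_of_lt_of_le one_pos ht1
  rw [le_div_iff₀ (by positivity)]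
  calc C * Real.exp (-(γ*t)) * t^2 = (C/γ^2) * ((γ*t)^2 * Real.exp (-(γ*t))) := by
        field_simp
    _ ≤ c := h6.le

set_option maxHeartbeats 1000000 in
/-- inequality (7), core of Proposition 2.2 of the paper. Let `n ≥ 2`,
`κ > 0` and `β, δ > 0` with `β(n-1)² > 1 + δ`. Let `R_min ≤ 0` be continuous on `[0,∞)`
with `R_min(t) = -κ + β/t²` for `t ≥ R₁` (where `R₁ > 0`, `R₁² ≥ β/κ`), and let `J` solve
the Jacobi equation `J'' + R_min·J = 0`, `J(0) = 0`, `J'(0) = 1`. Then there is `R₀ > 0`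
such that for every `R ≥ R₀`, `k > 2`, `λ₁ > 0` and every nontrivial C² solution `φ₁` of
`-φ₁'' - (1+δ)/(4x²)·φ₁ = -λ₁·φ₁` on `[R, 2kR]` with `φ₁(R) = φ₁(2kR) = 0`, the function
`f = φ₁·J^{-(n-1)/2}` satisfies
`∫_R^{2kR} |f'|²·J^{n-1} dx < ((n-1)²κ/4 - λ₁)·∫_R^{2kR} |f|²·J^{n-1} dx`. -/
theorem stmt_7 (n : ℕ) (hn : 2 ≤ n) (κ β δ R₁ : ℝ)
    (hκ : 0 < κ) (hδ : 0 < δ) (hβδ : β * ((n : ℝ) - 1) ^ 2 > 1 + δ)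
    (hR₁ : 0 < R₁) (hR₁β : R₁ ^ 2 ≥ β / κ)
    (Rmin J J' J'' : ℝ → ℝ)
    (hRmin_cont : ContinuousOn Rmin (Ici 0))
    (hRmin_nonpos : ∀ t ∈ Ici (0 : ℝ), Rmin t ≤ 0)
    (hRmin_eq : ∀ t ≥ R₁, Rmin t = -κ + β / t ^ 2)
    (hJ' : ∀ t ∈ Ici (0 : ℝ), HasDerivWithinAt J (J' t) (Ici 0) t)
    (hJ'' : ∀ t ∈ Ici (0 : ℝ), HasDerivWithinAt J' (J'' t) (Ici 0) t)
    (hJ''cont : ContinuousOn J'' (Ici 0))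
    (hODE : ∀ t ∈ Ici (0 : ℝ), J'' t + Rmin t * J t = 0)
    (hJ0 : J 0 = 0) (hJ'0 : J' 0 = 1) :
    ∃ R₀ > (0 : ℝ), ∀ R ≥ R₀, ∀ k > (2 : ℝ), ∀ lam₁ > (0 : ℝ),
      ∀ φ₁ φ₁' φ₁'' : ℝ → ℝ,
      (∀ x ∈ Icc R (2 * k * R), HasDerivWithinAt φ₁ (φ₁' x) (Icc R (2 * k * R)) x) →
      (∀ x ∈ Icc R (2 * k * R), HasDerivWithinAt φ₁' (φ₁'' x) (Icc R (2 * k * R)) x) →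
      ContinuousOn φ₁'' (Icc R (2 * k * R)) →
      (∀ x ∈ Icc R (2 * k * R),
        -φ₁'' x - (1 + δ) / (4 * x ^ 2) * φ₁ x = -lam₁ * φ₁ x) →
      φ₁ R = 0 → φ₁ (2 * k * R) = 0 →
      (∃ x ∈ Icc R (2 * k * R), φ₁ x ≠ 0) →
      (∫ x in R..(2 * k * R),
          (deriv (fun y => φ₁ y * J y ^ (-(((n : ℝ) - 1) / 2))) x) ^ 2
            * J x ^ ((n : ℝ) - 1))
        < (((n : ℝ) - 1) ^ 2 * κ / 4 - lam₁) *
          ∫ x in R..(2 * k * R),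
            (φ₁ x * J x ^ (-(((n : ℝ) - 1) / 2))) ^ 2 * J x ^ ((n : ℝ) - 1) := by
  obtain ⟨hJpos, hJ'ge⟩ := Jpos_aux hRmin_nonpos hJ' hJ'' hODE hJ0 hJ'0
  have hJat : ∀ x : ℝ, 0 < x → HasDerivAt J (J' x) x := fun x hx =>
    (hJ' x hx.le).hasDerivAt (Ici_mem_nhds hx)
  have hJ'at : ∀ x : ℝ, 0 < x → HasDerivAt J' (J'' x) x := fun x hx =>
    (hJ'' x hx.le).hasDerivAt (Ici_mem_nhds hx)
  have hJcont : ContinuousOn J (Ici 0) := fun t ht => (hJ' t ht).continuousWithinAt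
  have hJ'cont : ContinuousOn J' (Ici 0) := fun t ht => (hJ'' t ht).continuousWithinAt
  obtain ⟨m, hm⟩ : ∃ x : ℝ, x = ((n:ℝ)-1)/2 := ⟨_, rfl⟩
  have hn1 : (1:ℝ) ≤ (n:ℝ) - 1 := by
    have h2 : (2:ℝ) ≤ (n:ℝ) := by exact_mod_cast hn
    linarith
  have hmhalf : (1:ℝ)/2 ≤ m := by rw [hm]; linarith
  obtain ⟨sk, hsk⟩ : ∃ x : ℝ, x = Real.sqrt κ := ⟨_, rfl⟩
  have hskpos : 0 < sk := hsk ▸ Real.sqrt_pos.mpr hκ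
  have hsk2 : sk^2 = κ := by rw [hsk]; exact Real.sq_sqrt hκ.le
  have hβpos : 0 < β := by nlinarith [sq_nonneg ((n:ℝ)-1)]
  obtain ⟨S, hSdef⟩ : ∃ f : ℝ → ℝ, f = fun t => J' t / J t := ⟨_, rfl⟩
  have hSpos : ∀ t : ℝ, 0 < t → 0 < S t := fun t ht => by
    rw [hSdef]
    exact div_pos (lt_of_lt_of_le one_pos (hJ'ge t ht.le)) (hJpos t ht)
  have hSat : ∀ t : ℝ, 0 < t → HasDerivAt S (-Rmin t - S t^2) t := by
    intro t ht
    have h := (hJ'at t ht).div (hJat t ht) (ne_of_gt (hJpos t ht))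
    rw [show S = J' / J from hSdef]; refine h.congr_deriv ?_
    have hODEt := hODE t ht.le
    have hJ''t : J'' t = -(Rmin t * J t) := by linarith
    have hJt := ne_of_gt (hJpos t ht)
    rw [Pi.div_apply]
    rw [hJ''t]
    field_simp
  have hRic : ∀ t : ℝ, R₁ ≤ t → HasDerivAt S (κ - β/t^2 - S t^2) t := by
    intro t ht
    have ht0 : 0 < t := lt_of_lt_of_le hR₁ ht
    have h := hSat t ht0
    have h2 : -Rmin t - S t^2 = κ - β/t^2 - S t^2 := by rw [hRmin_eq t ht]; ring
    rwa [h2] at h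
  -- Stage A : eventually S ≥ sk/2
  obtain ⟨T1, hT1⟩ : ∃ x : ℝ, x = max (max R₁ 1) (2 * Real.sqrt (β/κ)) := ⟨_, rfl⟩
  have hT1R₁ : R₁ ≤ T1 := hT1 ▸ le_trans (le_max_left _ _) (le_max_left _ _)
  have hT11 : (1:ℝ) ≤ T1 := hT1 ▸ le_trans (le_max_right _ _) (le_max_left _ _)
  have hT1pos : (0:ℝ) < T1 := lt_of_lt_of_le one_pos hT11
  have hβT1 : ∀ t : ℝ, T1 ≤ t → β/t^2 ≤ κ/4 := by
    intro t ht
    have ht2 : 2 * Real.sqrt (β/κ) ≤ t := le_trans (hT1 ▸ le_max_right _ _) ht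
    have ht0 : 0 < t := lt_of_lt_of_le hT1pos ht
    have hs0 : 0 ≤ Real.sqrt (β/κ) := Real.sqrt_nonneg _
    have hs2 : Real.sqrt (β/κ)^2 = β/κ := Real.sq_sqrt (by positivity)
    have hs3 : κ * Real.sqrt (β/κ)^2 = β := by rw [hs2]; field_simp
    rw [div_le_iff₀ (by positivity)]
    nlinarith [mul_nonneg (sub_nonneg.mpr ht2) (by positivity : (0:ℝ) ≤ t + 2 * Real.sqrt (β/κ))]
  obtain ⟨T2, hT2⟩ : ∃ x : ℝ, x = T1 + 1/sk + 1 := ⟨_, rfl⟩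
  have hskinv : 0 < 1/sk := by positivity
  have hT2pos : 0 < T2 := by rw [hT2]; linarith
  have hSA : ∀ t : ℝ, T2 ≤ t → sk/2 ≤ S t := by
    have hT12 : T1 ≤ T2 := by rw [hT2]; linarith
    have hbud : ∃ t ∈ Icc T1 T2, 0 ≤ S t - sk/2 := by
      apply crossBudget (d' := fun t => κ - β/t^2 - S t^2) (cc := κ/2) (g := sk/2)
      · intro t htI
        exact (hRic t (le_trans hT1R₁ htI.1)).sub_const _
      · intro t htI hdt
        have ht0 : 0 < t := lt_of_lt_of_le hT1pos htI.1
        have h1 := hβT1 t htI.1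
        have h2 : S t < sk/2 := by linarith
        have h3 : 0 < S t := hSpos t ht0
        have h4 : S t^2 < κ/4 := by nlinarith
        linarith
      · show -(sk/2) ≤ S T1 - sk/2
        have := hSpos T1 hT1pos
        linarith
      · have h2 : κ/(2*sk) = sk/2 := by rw [← hsk2]; field_simp
        have h3 : κ/2 * (T2 - T1) = κ/(2*sk) + κ/2 := by
          rw [hT2]; field_simp; ring
        rw [h3, h2]; linarith
      · exact hT12
    obtain ⟨ts, htsI, hts⟩ := hbud
    have hts1 : T1 ≤ ts := htsI.1
    have hnc := noCross (d := fun t => S t - sk/2) (d' := fun t => κ - β/t^2 - S t^2)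
      (T := ts)
      (fun t ht => (hRic t (le_trans hT1R₁ (le_trans hts1 ht))).sub_const _)
      hts
      (by
        intro t ht hd0
        have ht1 : T1 ≤ t := le_trans hts1 ht
        have h1 := hβT1 t ht1
        have h2 : S t = sk/2 := by linarith [sub_eq_zero.mp hd0]
        have h3 : S t^2 = κ/4 := by rw [h2]; rw [div_pow]; rw [hsk2]; norm_num
        linarith)
    intro t ht
    have h9 : 0 ≤ S t - sk/2 := hnc t (le_trans htsI.2 ht)
    linarith
  
  -- constants
  obtain ⟨mm, hmm⟩ : ∃ x : ℝ, x = m^2 - m := ⟨_, rfl⟩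
  obtain ⟨rr, hrr⟩ : ∃ x : ℝ, x = m^2*β - (1+δ)/4 := ⟨_, rfl⟩
  have hρ : 0 < rr := by
    have hmsq : m^2 = ((n:ℝ)-1)^2/4 := by rw [hm]; ring
    rw [hrr, hmsq]; linarith
  obtain ⟨ε, hεdef⟩ : ∃ x : ℝ, x = min (β/2) (rr / ((2+2*sk) * (2 * (|mm|+1)))) := ⟨_, rfl⟩
  have hε : 0 < ε := by rw [hεdef]; apply lt_min (by linarith) (by positivity)
  have hεβ : ε ≤ β/2 := hεdef ▸ min_le_left _ _
  obtain ⟨ε₁, hε₁def⟩ : ∃ x : ℝ, x = ε * (2+2*sk) := ⟨_, rfl⟩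
  have hε₁ρ : |mm| * ε₁ ≤ rr/2 := by
    have h1 : ε ≤ rr / ((2+2*sk) * (2*(|mm|+1))) := hεdef ▸ min_le_right _ _
    have h2 : (0:ℝ) < 2+2*sk := by linarith
    have h3 : (0:ℝ) < 2*(|mm|+1) := by positivity
    have h4 : ε₁ ≤ rr/(2*(|mm|+1)) := by
      rw [hε₁def]
      calc ε * (2+2*sk) ≤ (rr / ((2+2*sk) * (2*(|mm|+1)))) * (2+2*sk) :=
            mul_le_mul_of_nonneg_right h1 h2.le
        _ = rr/(2*(|mm|+1)) := by field_simp
    have h5 : 0 ≤ |mm| := abs_nonneg _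
    have h6 : |mm| * ε₁ ≤ |mm| * (rr/(2*(|mm|+1))) := by
      apply mul_le_mul_of_nonneg_left h4 h5
    calc |mm| * ε₁ ≤ |mm| * (rr/(2*(|mm|+1))) := h6
      _ ≤ rr/2 := by
          rw [← mul_div_assoc]
          rw [div_le_div_iff₀ (by positivity) (by norm_num)]
          nlinarith [abs_nonneg mm]
  have hε₁pos : 0 < ε₁ := by rw [hε₁def]; positivity
  obtain ⟨a, ha⟩ : ∃ x : ℝ, x = (β-ε)/(2*sk) := ⟨_, rfl⟩
  obtain ⟨a', ha'⟩ : ∃ x : ℝ, x = (β+ε)/(2*sk) := ⟨_, rfl⟩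
  have hapos : 0 < a := by rw [ha]; apply div_pos (by linarith) (by linarith)
  have ha'pos : 0 < a' := by rw [ha']; apply div_pos (by linarith) (by linarith)
  have haa' : a ≤ a' := by
    rw [ha, ha']
    exact (div_le_div_iff_of_pos_right (by linarith)).mpr (by linarith)
  have h2ska : 2*sk*a = β - ε := by rw [ha]; field_simp
  have h2ska' : 2*sk*a' = β + ε := by rw [ha']; field_simp
  -- upper barrier
  obtain ⟨C₁, hC₁⟩ : ∃ x : ℝ, x = max 0 ((S T2 - sk + a/T2^2) * Real.exp (sk*T2)) := ⟨_, rfl⟩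
  have hC₁0 : 0 ≤ C₁ := by rw [hC₁]; exact le_max_left _ _
  have hUB : ∀ t : ℝ, T2 ≤ t → S t ≤ sk + C₁ * Real.exp (-(sk*t)) - a/t^2 := by
    have hbUd : ∀ t : ℝ, 0 < t →
        HasDerivAt (fun t => sk + C₁ * Real.exp (-(sk*t)) - a/t^2)
          (-(sk*(C₁ * Real.exp (-(sk*t)))) + 2*a/t^3) t := by
      intro t ht
      have h1 : HasDerivAt (fun t : ℝ => -(sk*t)) (-sk) t := by
        simpa using ((hasDerivAt_id t).const_mul sk).fun_neg
      have h2 : HasDerivAt (fun t : ℝ => C₁ * Real.exp (-(sk*t)))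
          (C₁ * (Real.exp (-(sk*t)) * (-sk))) t := (h1.exp).const_mul C₁
      have h3 : HasDerivAt (fun t : ℝ => a/t^2)
          ((0 * t^2 - a * (2*t^(2-1)))/(t^2)^2) t :=
        (hasDerivAt_const t a).div (hasDerivAt_pow 2 t) (pow_ne_zero 2 ht.ne')
      have h4 := ((h2.const_add sk).sub h3)
      refine h4.congr_deriv ?_
      have ht' := ht.ne'
      field_simp
      ring
    intro t ht
    have hd0 : 0 ≤ (sk + C₁ * Real.exp (-(sk*T2)) - a/T2^2) - S T2 := by
      have h1 : (S T2 - sk + a/T2^2) * Real.exp (sk*T2) ≤ C₁ := by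
        rw [hC₁]; exact le_max_right _ _
      have h2 : (S T2 - sk + a/T2^2) * Real.exp (sk*T2) * Real.exp (-(sk*T2)) ≤
          C₁ * Real.exp (-(sk*T2)) :=
        mul_le_mul_of_nonneg_right h1 (Real.exp_nonneg _)
      rw [mul_assoc, ← Real.exp_add] at h2
      simp only [add_neg_cancel, Real.exp_zero, mul_one] at h2
      linarith
    have hnc := noCross (d := fun t => (sk + C₁ * Real.exp (-(sk*t)) - a/t^2) - S t)
      (d' := fun t => (-(sk*(C₁ * Real.exp (-(sk*t)))) + 2*a/t^3) - (κ - β/t^2 - S t^2))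
      (T := T2)
      (fun t ht => ((hbUd t (lt_of_lt_of_le hT2pos ht)).sub
        (hRic t (le_trans (le_trans hT1R₁ (by rw [hT2]; linarith)) ht))))
      hd0
      ?_
    · have h9 : 0 ≤ (sk + C₁ * Real.exp (-(sk*t)) - a/t^2) - S t := hnc t ht
      linarith
    · intro t ht hd0'
      have ht0 : 0 < t := lt_of_lt_of_le hT2pos ht
      have hSeq : S t = sk + C₁ * Real.exp (-(sk*t)) - a/t^2 := by
        have : (sk + C₁ * Real.exp (-(sk*t)) - a/t^2) - S t = 0 := hd0'
        linarith
      set X : ℝ := C₁ * Real.exp (-(sk*t)) with hX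
      have hX0 : 0 ≤ X := mul_nonneg hC₁0 (Real.exp_nonneg _)
      show 0 < (-(sk*X) + 2*a/t^3) - (κ - β/t^2 - S t^2)
      rw [hSeq]
      have hkey : (-(sk*X) + 2*a/t^3) - (κ - β/t^2 - (sk + X - a/t^2)^2)
          = sk*X + (X - a/t^2)^2 + 2*a/t^3 + ε/t^2 := by
        have hskne : sk ≠ 0 := hskpos.ne'
        have htne : t ≠ 0 := ht0.ne'
        rw [← hsk2, ha]
        field_simp
        ring
      rw [hkey]
      have g1 : 0 ≤ sk*X := mul_nonneg hskpos.le hX0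
      have g2 : 0 ≤ (X - a/t^2)^2 := sq_nonneg _
      have g3 : 0 < 2*a/t^3 := by positivity
      have g4 : 0 < ε/t^2 := by positivity
      linarith
  
  -- lower barrier
  obtain ⟨Tε, hTεdef⟩ : ∃ x : ℝ, x = 1 + (2*a'^2 + 2*a')/ε := ⟨_, rfl⟩
  obtain ⟨T4, hT4def⟩ : ∃ x : ℝ, x = max T2 Tε := ⟨_, rfl⟩
  have hT4T2 : T2 ≤ T4 := hT4def ▸ le_max_left _ _
  have hT4Tε : Tε ≤ T4 := hT4def ▸ le_max_right _ _
  have hT4pos : 0 < T4 := lt_of_lt_of_le hT2pos hT4T2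
  have hT4R₁ : R₁ ≤ T4 := le_trans hT1R₁ (le_trans (by rw [hT2]; linarith) hT4T2)
  obtain ⟨C₂, hC₂⟩ : ∃ x : ℝ, x = (sk/2) * Real.exp (sk*T4) := ⟨_, rfl⟩
  have hC₂0 : 0 ≤ C₂ := by rw [hC₂]; positivity
  have hX2le : ∀ t : ℝ, T4 ≤ t → C₂ * Real.exp (-(sk*t)) ≤ sk/2 := by
    intro t ht
    rw [hC₂, mul_assoc, ← Real.exp_add]
    have h0 : sk*T4 + -(sk*t) ≤ 0 := by
      have h2 : sk*T4 ≤ sk*t := mul_le_mul_of_nonneg_left ht hskpos.le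
      linarith
    have h1 : Real.exp (sk*T4 + -(sk*t)) ≤ 1 := Real.exp_le_one_iff.mpr h0
    calc sk/2 * Real.exp (sk*T4 + -(sk*t)) ≤ sk/2 * 1 :=
          mul_le_mul_of_nonneg_left h1 (by positivity)
      _ = sk/2 := mul_one _
  have hLB : ∀ t : ℝ, T4 ≤ t → sk - C₂ * Real.exp (-(sk*t)) - a'/t^2 ≤ S t := by
    have hbLd : ∀ t : ℝ, 0 < t →
        HasDerivAt (fun t => sk - C₂ * Real.exp (-(sk*t)) - a'/t^2)
          (sk*(C₂ * Real.exp (-(sk*t))) + 2*a'/t^3) t := by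
      intro t ht
      have h1 : HasDerivAt (fun t : ℝ => -(sk*t)) (-sk) t := by
        simpa using ((hasDerivAt_id t).const_mul sk).fun_neg
      have h2 : HasDerivAt (fun t : ℝ => C₂ * Real.exp (-(sk*t)))
          (C₂ * (Real.exp (-(sk*t)) * (-sk))) t := (h1.exp).const_mul C₂
      have h3 : HasDerivAt (fun t : ℝ => a'/t^2)
          ((0 * t^2 - a' * (2*t^(2-1)))/(t^2)^2) t :=
        (hasDerivAt_const t a').div (hasDerivAt_pow 2 t) (pow_ne_zero 2 ht.ne')
      have h4 := (((h2.const_sub sk)).sub h3)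
      refine h4.congr_deriv ?_
      have ht' := ht.ne'
      field_simp
      ring
    intro t ht
    have hd0 : 0 ≤ S T4 - (sk - C₂ * Real.exp (-(sk*T4)) - a'/T4^2) := by
      have h1 : C₂ * Real.exp (-(sk*T4)) = sk/2 := by
        rw [hC₂, mul_assoc, ← Real.exp_add]
        simp only [add_neg_cancel, Real.exp_zero, mul_one]
      rw [h1]
      have h2 := hSA T4 hT4T2
      have h3 : 0 < a'/T4^2 := by positivity
      linarith
    have hnc := noCross (d := fun t => S t - (sk - C₂ * Real.exp (-(sk*t)) - a'/t^2))
      (d' := fun t => (κ - β/t^2 - S t^2) - (sk*(C₂ * Real.exp (-(sk*t))) + 2*a'/t^3))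
      (T := T4)
      (fun t ht' => ((hRic t (le_trans hT4R₁ ht')).sub
        (hbLd t (lt_of_lt_of_le hT4pos ht'))))
      hd0
      ?_
    · have h9 : 0 ≤ S t - (sk - C₂ * Real.exp (-(sk*t)) - a'/t^2) := hnc t ht
      linarith
    · intro t ht' hd0'
      have ht0 : 0 < t := lt_of_lt_of_le hT4pos ht'
      have ht1 : (1:ℝ) ≤ t := by
        have h5 : (0:ℝ) ≤ (2*a'^2 + 2*a')/ε := by positivity
        have h6 : (1:ℝ) ≤ Tε := by rw [hTεdef]; linarith
        linarith [le_trans hT4Tε ht']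
      have htε : 2*a'^2 + 2*a' < ε * t := by
        have h1 : Tε ≤ t := le_trans hT4Tε ht'
        rw [hTεdef] at h1
        have h2 : (2*a'^2 + 2*a')/ε < t := by linarith
        rw [div_lt_iff₀ hε] at h2
        linarith
      have hSeq : S t = sk - C₂ * Real.exp (-(sk*t)) - a'/t^2 := by
        have h0 : S t - (sk - C₂ * Real.exp (-(sk*t)) - a'/t^2) = 0 := hd0'
        linarith
      obtain ⟨X, hX⟩ : ∃ x : ℝ, x = C₂ * Real.exp (-(sk*t)) := ⟨_, rfl⟩
      have hX0 : 0 ≤ X := by rw [hX]; exact mul_nonneg hC₂0 (Real.exp_nonneg _)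
      have hXhalf : X ≤ sk/2 := by rw [hX]; exact hX2le t ht'
      show 0 < (κ - β/t^2 - S t^2) - (sk*(C₂ * Real.exp (-(sk*t))) + 2*a'/t^3)
      rw [hSeq, ← hX]
      have hskne : sk ≠ 0 := hskpos.ne'
      have htne : t ≠ 0 := ht0.ne'
      have hkey : (κ - β/t^2 - (sk - X - a'/t^2)^2) - (sk*X + 2*a'/t^3)
          = sk*X - (X + a'/t^2)^2 + ε/t^2 - 2*a'/t^3 := by
        rw [← hsk2, ha']
        field_simp
        ring
      rw [hkey]
      have g1 : (X + a'/t^2)^2 ≤ 2*X^2 + 2*(a'/t^2)^2 := by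
        linarith only [sq_nonneg (X - a'/t^2)]
      have g2 : 2*X^2 ≤ sk*X := by
        have h := mul_nonneg hX0 (by linarith only [hXhalf] : (0:ℝ) ≤ sk - 2*X)
        linarith only [h]
      have g3 : (a'/t^2)^2 ≤ a'^2/t^3 := by
        rw [div_pow, div_le_div_iff₀ (by positivity) (by positivity)]
        have h := mul_nonneg (mul_nonneg (sq_nonneg a') (pow_nonneg ht0.le 3))
          (sub_nonneg.mpr ht1)
        nlinarith only [h]
      have g4 : 2*(a'^2/t^3) + 2*a'/t^3 < ε/t^2 := by
        have hre : 2*(a'^2/t^3) + 2*a'/t^3 = (2*a'^2+2*a')/t^3 := by ring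
        rw [hre, div_lt_div_iff₀ (by positivity) (by positivity)]
        have h := mul_lt_mul_of_pos_right htε (pow_pos ht0 2)
        nlinarith only [h]
      linarith only [g1, g2, g3, g4]
  
  -- eventual bounds on S^2
  obtain ⟨T5a, hT5a1, hT5a⟩ := expSmall C₁ sk ε hskpos hε
  obtain ⟨T5b, hT5b1, hT5b⟩ := expSmall C₂ sk ε hskpos hε
  obtain ⟨Z, hZdef⟩ : ∃ x : ℝ, x = 1 + (a+ε)^2/ε + (ε+a')/sk := ⟨_, rfl⟩
  obtain ⟨T6, hT6def⟩ : ∃ x : ℝ, x = max (max T4 (max T5a T5b)) Z := ⟨_, rfl⟩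
  have hT6T4 : T4 ≤ T6 := hT6def ▸ le_trans (le_max_left _ _) (le_max_left _ _)
  have hT6T5a : T5a ≤ T6 := hT6def ▸ le_trans (le_trans (le_max_left _ _) (le_max_right _ _)) (le_max_left _ _)
  have hT6T5b : T5b ≤ T6 := hT6def ▸ le_trans (le_trans (le_max_right _ _) (le_max_right _ _)) (le_max_left _ _)
  have hT6Z : Z ≤ T6 := hT6def ▸ le_max_right _ _
  have hZ1 : (1:ℝ) ≤ Z := by
    have p1 : (0:ℝ) ≤ (a+ε)^2/ε := by positivity
    have p2 : (0:ℝ) ≤ (ε+a')/sk := by positivity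
    rw [hZdef]; linarith
  have hT61 : (1:ℝ) ≤ T6 := le_trans hZ1 hT6Z
  have hT6pos : (0:ℝ) < T6 := lt_of_lt_of_le one_pos hT61
  have hT6R₁ : R₁ ≤ T6 := le_trans hT4R₁ hT6T4
  have hS2 : ∀ t : ℝ, T6 ≤ t →
      κ - (β+ε₁)/t^2 ≤ S t^2 ∧ S t^2 ≤ κ - (β-ε₁)/t^2 := by
    intro t ht
    have ht0 : 0 < t := lt_of_lt_of_le hT6pos ht
    have ht1 : (1:ℝ) ≤ t := le_trans hT61 ht
    have ht2 : (0:ℝ) < t^2 := by positivity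
    have htne : t ≠ 0 := ht0.ne'
    have hXa : C₁ * Real.exp (-(sk*t)) ≤ ε/t^2 := hT5a t (le_trans hT6T5a ht)
    have hXb : C₂ * Real.exp (-(sk*t)) ≤ ε/t^2 := hT5b t (le_trans hT6T5b ht)
    have hu1 : S t ≤ sk + ε/t^2 - a/t^2 := by
      have h := hUB t (le_trans (le_trans hT4T2 hT6T4) ht)
      linarith
    have hu2 : sk - ε/t^2 - a'/t^2 ≤ S t := by
      have h := hLB t (le_trans hT6T4 ht)
      linarith
    have hZt : Z ≤ t := le_trans hT6Z ht
    have hZa : (a+ε)^2 ≤ ε * t := by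
      have h1 : (a+ε)^2/ε ≤ t := by
        have p2 : (0:ℝ) ≤ (ε+a')/sk := by positivity
        rw [hZdef] at hZt; linarith
      rw [div_le_iff₀ hε] at h1
      linarith
    have hZq : ε + a' ≤ sk * t := by
      have h1 : (ε+a')/sk ≤ t := by
        have p1 : (0:ℝ) ≤ (a+ε)^2/ε := by positivity
        rw [hZdef] at hZt; linarith
      rw [div_le_iff₀ hskpos] at h1
      linarith
    have hq : (ε+a')/t^2 ≤ sk := by
      rw [div_le_iff₀ ht2]
      have h2 : sk * t ≤ sk * t^2 := by
        have := mul_le_mul_of_nonneg_left (by nlinarith only [ht1] : t ≤ t^2) hskpos.le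
        linarith
      linarith
    have hu0 : 0 ≤ S t := (hSpos t ht0).le
    have hlow : sk - (ε+a')/t^2 ≤ S t := by
      have hre : (ε+a')/t^2 = ε/t^2 + a'/t^2 := by ring
      rw [hre]; linarith
    have hlow0 : 0 ≤ sk - (ε+a')/t^2 := by linarith
    constructor
    · -- lower bound for S²
      have h3 : (sk - (ε+a')/t^2)^2 ≤ S t^2 := by
        nlinarith only [hlow, hlow0, hu0]
      have hexp : (sk - (ε+a')/t^2)^2 = κ - (2*sk*(ε+a'))/t^2 + (ε+a')^2/t^4 := by
        rw [← hsk2]; field_simp; ring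
      have h5 : 2*sk*(ε+a') = 2*sk*ε + (β + ε) := by
        rw [ha']; field_simp
      have h6 : 2*sk*ε + (β+ε) ≤ β + ε₁ := by
        rw [hε₁def]; nlinarith only [hε, hskpos]
      have h7 : (0:ℝ) ≤ (ε+a')^2/t^4 := by positivity
      have h8 : (2*sk*(ε+a'))/t^2 ≤ (β+ε₁)/t^2 :=
        (div_le_div_iff_of_pos_right ht2).mpr (by rw [h5]; linarith)
      rw [hexp] at h3
      linarith
    · -- upper bound for S²
      have hM : S t ≤ sk + (ε - a)/t^2 := by
        have hre : (ε-a)/t^2 = ε/t^2 - a/t^2 := by ring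
        rw [hre]; linarith
      have hM0 : 0 ≤ sk + (ε-a)/t^2 := by
        have h1 : (a-ε)/t^2 ≤ (ε+a')/t^2 :=
          (div_le_div_iff_of_pos_right ht2).mpr (by linarith)
        have h2 : -((ε-a)/t^2) = (a-ε)/t^2 := by ring
        linarith
      have h3 : S t^2 ≤ (sk + (ε-a)/t^2)^2 := by
        nlinarith only [hM, hM0, hu0]
      have hexp : (sk + (ε-a)/t^2)^2 = κ + (2*sk*(ε-a))/t^2 + (ε-a)^2/t^4 := by
        rw [← hsk2]; field_simp; ring
      have h5 : 2*sk*(ε-a) = 2*sk*ε - (β - ε) := by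
        rw [ha]; field_simp
      have h6 : (ε-a)^2/t^4 ≤ ε/t^2 := by
        rw [div_le_div_iff₀ (by positivity) ht2]
        have hb1 : (ε-a)^2 ≤ (a+ε)^2 := by nlinarith only [hapos, hε]
        have hb2 : (a+ε)^2 * t^2 ≤ (ε*t) * t^2 :=
          mul_le_mul_of_nonneg_right hZa (by positivity)
        have hb3 : (ε*t)*t^2 ≤ ε*t^4 := by
          linarith only [mul_nonneg (mul_nonneg hε.le (pow_nonneg ht0.le 3)) (sub_nonneg.mpr ht1)]
        have hb0 := mul_le_mul_of_nonneg_right hb1 ht2.le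
        linarith only [hb0, hb2, hb3]
      have hco : 2*sk*(ε-a) = -(β - ε₁) - ε := by
        rw [h5, hε₁def]; ring
      rw [hexp, hco] at h3
      have hsplit : (-(β - ε₁) - ε)/t^2 = -((β - ε₁)/t^2) - ε/t^2 := by ring
      rw [hsplit] at h3
      linarith
  
  have hW : ∀ t : ℝ, T6 ≤ t →
      (1+δ)/(4*t^2) - m*Rmin t + mm*S t^2 ≤ m^2*κ - rr/(2*t^2) := by
    intro t ht
    have ht0 : 0 < t := lt_of_lt_of_le hT6pos ht
    have ht2 : (0:ℝ) < t^2 := by positivity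
    obtain ⟨hlo, hhi⟩ := hS2 t ht
    have hRm : Rmin t = -κ + β/t^2 := hRmin_eq t (le_trans hT6R₁ ht)
    have hmm_bound : mm*S t^2 ≤ mm*κ - mm*β/t^2 + |mm| * ε₁/t^2 := by
      rcases le_or_gt 0 mm with hmm0 | hmm0
      · have h1 := mul_le_mul_of_nonneg_left hhi hmm0
        rw [abs_of_nonneg hmm0]
        have h2 : mm*(κ - (β-ε₁)/t^2) = mm*κ - mm*β/t^2 + mm*ε₁/t^2 := by ring
        linarith
      · have h1 := mul_le_mul_of_nonpos_left hlo hmm0.le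
        rw [abs_of_neg hmm0]
        have h2 : mm*(κ - (β+ε₁)/t^2) = mm*κ - mm*β/t^2 + (-mm)*ε₁/t^2 := by ring
        linarith
    rw [hRm]
    have hcoef : (1+δ)/4 - m*β - mm*β + |mm| * ε₁ ≤ -(rr/2) := by
      have e1β : m*β + mm*β = m^2*β := by rw [hmm]; ring
      linarith [hε₁ρ, hrr, e1β]
    have hdiv : ((1+δ)/4 - m*β - mm*β + |mm| * ε₁)/t^2 ≤ (-(rr/2))/t^2 :=
      (div_le_div_iff_of_pos_right ht2).mpr hcoef
    have e1κ : m*κ + mm*κ = m^2*κ := by rw [hmm]; ring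
    have hsplit1 : ((1+δ)/4 - m*β - mm*β + |mm| * ε₁)/t^2
        = (1+δ)/(4*t^2) - m*β/t^2 - mm*β/t^2 + |mm| * ε₁/t^2 := by ring
    have hsplit2 : (-(rr/2))/t^2 = -(rr/(2*t^2)) := by ring
    rw [hsplit1, hsplit2] at hdiv
    have hgoal1 : (1+δ)/(4*t^2) - m*(-κ + β/t^2) + mm*S t^2
        = (1+δ)/(4*t^2) + m*κ - m*β/t^2 + mm*S t^2 := by ring
    rw [hgoal1]
    have hmb : m*β/t^2 = m*(β/t^2) := by ring
    have hmmb : mm*β/t^2 = mm*(β/t^2) := by ring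
    linarith [hmm_bound, hdiv, e1κ]
  -- choose R₀
  refine ⟨T6, hT6pos, ?_⟩
  intro R hR k hk lam₁ hlam φ₁ φ₁' φ₁'' hφd hφd' hφ''cont hφODE hφR hφb hφne
  
  obtain ⟨b2, hb2⟩ : ∃ x : ℝ, x = 2*k*R := ⟨_, rfl⟩
  rw [← hb2] at hφd hφd' hφ''cont hφODE hφb hφne ⊢
  have hRpos : 0 < R := lt_of_lt_of_le hT6pos hR
  have hRb : R < b2 := by rw [hb2]; nlinarith only [hk, hRpos]
  have hsub : Icc R b2 ⊆ Ici (0:ℝ) := fun x hx => le_trans hRpos.le hx.1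
  have hxpos : ∀ x ∈ Icc R b2, 0 < x := fun x hx => lt_of_lt_of_le hRpos hx.1
  have hxT6 : ∀ x ∈ Icc R b2, T6 ≤ x := fun x hx => le_trans hR hx.1
  have hφat : ∀ x ∈ Ioo R b2, HasDerivAt φ₁ (φ₁' x) x := fun x hx =>
    (hφd x (Ioo_subset_Icc_self hx)).hasDerivAt (Icc_mem_nhds hx.1 hx.2)
  have hφ'at : ∀ x ∈ Ioo R b2, HasDerivAt φ₁' (φ₁'' x) x := fun x hx =>
    (hφd' x (Ioo_subset_Icc_self hx)).hasDerivAt (Icc_mem_nhds hx.1 hx.2)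
  have hφc : ContinuousOn φ₁ (Icc R b2) := fun x hx => (hφd x hx).continuousWithinAt
  have hφ'c : ContinuousOn φ₁' (Icc R b2) := fun x hx => (hφd' x hx).continuousWithinAt
  have hScont : ContinuousOn S (Icc R b2) := by
    rw [hSdef]
    exact (hJ'cont.mono hsub).div (hJcont.mono hsub)
      (fun x hx => (hJpos x (hxpos x hx)).ne')
  -- rewrite goal exponents
  have h2m : ((n:ℝ)-1) = 2*m := by rw [hm]; ring
  have hcoefeq : ((n:ℝ)-1)^2*κ/4 - lam₁ = m^2*κ - lam₁ := by rw [hm]; ring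
  rw [hcoefeq, h2m, show -(2*m/2) = -m by ring]
  -- pointwise rpow cancellation
  have hJcancel : ∀ x ∈ Icc R b2, (J x ^ (-m : ℝ))^2 * J x ^ (2*m : ℝ) = 1 := by
    intro x hx
    have hJx := hJpos x (hxpos x hx)
    rw [sq, ← Real.rpow_add hJx, ← Real.rpow_add hJx,
      show -m + -m + 2*m = 0 by ring, Real.rpow_zero]
  -- I2
  have I2 : (∫ x in R..b2, (φ₁ x * J x ^ (-m : ℝ))^2 * J x ^ (2*m : ℝ))
      = ∫ x in R..b2, φ₁ x^2 := by
    apply intervalIntegral.integral_congr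
    intro x hx
    rw [uIcc_of_le hRb.le] at hx
    calc (φ₁ x * J x ^ (-m:ℝ))^2 * J x ^ (2*m:ℝ)
        = φ₁ x^2 * ((J x ^ (-m:ℝ))^2 * J x ^ (2*m:ℝ)) := by ring
      _ = φ₁ x^2 := by rw [hJcancel x hx, mul_one]
  -- I1
  have hderiv : ∀ x ∈ Ioo R b2, deriv (fun y => φ₁ y * J y ^ (-m:ℝ)) x
      = (φ₁' x - m*S x*φ₁ x) * J x ^ (-m:ℝ) := by
    intro x hx
    have hx0 : 0 < x := lt_trans hRpos hx.1
    have hJx := hJpos x hx0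
    have hd1 : HasDerivAt (fun y => J y ^ (-m:ℝ)) (J' x * (-m) * J x ^ (-m-1:ℝ)) x :=
      (hJat x hx0).rpow_const (Or.inl hJx.ne')
    have hd2 := (hφat x hx).fun_mul hd1
    rw [hd2.deriv]
    rw [Real.rpow_sub_one hJx.ne', hSdef]
    simp only
    field_simp
    ring
  have I1 : (∫ x in R..b2, (deriv (fun y => φ₁ y * J y ^ (-m:ℝ)) x)^2 * J x ^ (2*m:ℝ))
      = ∫ x in R..b2, (φ₁' x - m*S x*φ₁ x)^2 := by
    rw [intervalIntegral.integral_of_le hRb.le, intervalIntegral.integral_of_le hRb.le,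
      MeasureTheory.integral_Ioc_eq_integral_Ioo, MeasureTheory.integral_Ioc_eq_integral_Ioo]
    apply MeasureTheory.setIntegral_congr_fun measurableSet_Ioo
    intro x hx
    beta_reduce
    rw [hderiv x hx]
    calc ((φ₁' x - m*S x*φ₁ x) * J x ^ (-m:ℝ))^2 * J x ^ (2*m:ℝ)
        = (φ₁' x - m*S x*φ₁ x)^2 * ((J x ^ (-m:ℝ))^2 * J x ^ (2*m:ℝ)) := by ring
      _ = (φ₁' x - m*S x*φ₁ x)^2 := by rw [hJcancel x (Ioo_subset_Icc_self hx), mul_one]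
  -- integration by parts 1
  have hInt1 : IntervalIntegrable (fun x => φ₁' x * φ₁' x + φ₁ x * φ₁'' x)
      MeasureTheory.volume R b2 := by
    apply ContinuousOn.intervalIntegrable
    rw [uIcc_of_le hRb.le]
    exact (hφ'c.mul hφ'c).add (hφc.mul hφ''cont)
  have IBP1 : (∫ x in R..b2, (φ₁' x * φ₁' x + φ₁ x * φ₁'' x)) = 0 := by
    have h := intervalIntegral.integral_eq_sub_of_hasDeriv_right_of_le hRb.le
      (f := fun x => φ₁ x * φ₁' x)
      (hφc.mul hφ'c)
      (fun x hx => ((hφat x hx).mul (hφ'at x hx)).hasDerivWithinAt) hInt1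
    rw [h]
    simp [hφR, hφb]
  -- integration by parts 2
  have hRmc : ContinuousOn Rmin (Icc R b2) := hRmin_cont.mono hsub
  have hgd : ∀ x ∈ Ioo R b2, HasDerivAt (fun y => S y * φ₁ y^2)
      ((-Rmin x - S x^2) * φ₁ x^2 + S x * (2*φ₁ x*φ₁' x)) x := by
    intro x hx
    have hx0 : 0 < x := lt_trans hRpos hx.1
    have h := (hSat x hx0).fun_mul ((hφat x hx).fun_pow 2)
    refine h.congr_deriv ?_
    push_cast
    ring
  have hInt2 : IntervalIntegrable
      (fun x => (-Rmin x - S x^2) * φ₁ x^2 + S x * (2*φ₁ x*φ₁' x))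
      MeasureTheory.volume R b2 := by
    apply ContinuousOn.intervalIntegrable
    rw [uIcc_of_le hRb.le]
    exact (((hRmc.neg).sub (hScont.pow 2)).mul (hφc.pow 2)).add
      (hScont.mul ((continuousOn_const.mul hφc).mul hφ'c))
  have IBP2 : (∫ x in R..b2, ((-Rmin x - S x^2) * φ₁ x^2 + S x * (2*φ₁ x*φ₁' x))) = 0 := by
    have h := intervalIntegral.integral_eq_sub_of_hasDeriv_right_of_le hRb.le
      (f := fun x => S x * φ₁ x^2)
      (hScont.mul (hφc.pow 2))
      (fun x hx => (hgd x hx).hasDerivWithinAt) hInt2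
    rw [h]
    simp [hφR, hφb]
  -- pointwise key identity
  obtain ⟨W, hWdef⟩ : ∃ f : ℝ → ℝ, f = fun x => (1+δ)/(4*x^2) - m*Rmin x + mm*S x^2 :=
    ⟨_, rfl⟩
  have hkeyid : ∀ x ∈ Icc R b2, (φ₁' x - m*S x*φ₁ x)^2
      = (φ₁' x * φ₁' x + φ₁ x * φ₁'' x)
        - m * ((-Rmin x - S x^2) * φ₁ x^2 + S x * (2*φ₁ x*φ₁' x))
        + (W x - lam₁)*φ₁ x^2 := by
    intro x hx
    have hODEx := hφODE x hx
    rw [hWdef, hmm]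
    simp only
    linear_combination (φ₁ x) * hODEx
  have hWcont : ContinuousOn (fun x => (W x - lam₁)*φ₁ x^2) (Icc R b2) := by
    rw [hWdef]
    apply ContinuousOn.mul ?_ (hφc.pow 2)
    apply ContinuousOn.sub ?_ continuousOn_const
    apply ContinuousOn.add
    · apply ContinuousOn.sub
      · exact continuousOn_const.div (by fun_prop) (fun x hx => by
          have := hxpos x hx; positivity)
      · exact continuousOn_const.mul hRmc
    · exact continuousOn_const.mul (hScont.pow 2)
  have hIntC : IntervalIntegrable (fun x => (W x - lam₁)*φ₁ x^2)
      MeasureTheory.volume R b2 := by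
    apply ContinuousOn.intervalIntegrable
    rw [uIcc_of_le hRb.le]
    exact hWcont
  have hcongr : (∫ x in R..b2, (φ₁' x - m*S x*φ₁ x)^2)
      = ∫ x in R..b2, ((φ₁' x * φ₁' x + φ₁ x * φ₁'' x)
        - m * ((-Rmin x - S x^2) * φ₁ x^2 + S x * (2*φ₁ x*φ₁' x))
        + (W x - lam₁)*φ₁ x^2) :=
    intervalIntegral.integral_congr (fun x hx =>
      hkeyid x (by rwa [uIcc_of_le hRb.le] at hx))
  have hsplit : (∫ x in R..b2, ((φ₁' x * φ₁' x + φ₁ x * φ₁'' x)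
        - m * ((-Rmin x - S x^2) * φ₁ x^2 + S x * (2*φ₁ x*φ₁' x))
        + (W x - lam₁)*φ₁ x^2))
      = (∫ x in R..b2, (φ₁' x * φ₁' x + φ₁ x * φ₁'' x))
        - m * (∫ x in R..b2, ((-Rmin x - S x^2) * φ₁ x^2 + S x * (2*φ₁ x*φ₁' x)))
        + ∫ x in R..b2, (W x - lam₁)*φ₁ x^2 := by
    rw [intervalIntegral.integral_add (hInt1.sub (hInt2.const_mul m)) hIntC,
      intervalIntegral.integral_sub hInt1 (hInt2.const_mul m),
      intervalIntegral.integral_const_mul]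
  have hfinal : (∫ x in R..b2, (W x - lam₁)*φ₁ x^2)
      < (m^2*κ - lam₁) * ∫ x in R..b2, φ₁ x^2 := by
    rw [← intervalIntegral.integral_const_mul]
    apply intervalIntegral.integral_lt_integral_of_continuousOn_of_le_of_exists_lt hRb
      hWcont (continuousOn_const.mul (hφc.pow 2))
    · intro x hx
      have hx' : x ∈ Icc R b2 := ⟨hx.1.le, hx.2⟩
      have h1 := hW x (hxT6 x hx')
      have hx0 : 0 < x := hxpos x hx'
      have h2 : 0 < rr/(2*x^2) := by positivity
      have h3 : W x ≤ m^2*κ := by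
        rw [hWdef]; simp only; linarith
      exact mul_le_mul_of_nonneg_right (by linarith) (sq_nonneg _)
    · obtain ⟨x₀, hx₀I, hx₀⟩ := hφne
      refine ⟨x₀, hx₀I, ?_⟩
      have h1 := hW x₀ (hxT6 x₀ hx₀I)
      have hx0 : 0 < x₀ := hxpos x₀ hx₀I
      have h2 : 0 < rr/(2*x₀^2) := by positivity
      have h3 : W x₀ < m^2*κ := by
        rw [hWdef]; simp only; linarith
      have h4 : 0 < φ₁ x₀^2 :=
        lt_of_le_of_ne (sq_nonneg _) (Ne.symm (pow_ne_zero 2 hx₀))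
      exact mul_lt_mul_of_pos_right (by linarith) h4
  rw [I1, I2, hcongr, hsplit, IBP1, IBP2]
  simpa using hfinal
end

section
/- Let n ≥ 2 be an integer, κ > 0, and let β satisfy 0 < β < 1/(n−1)². Let R₀ > 0 with R₀² ≥ β/κ, and let K : [0, ∞) → ℝ be a continuous function with K(r) ≤ 0 for all r ≥ 0 and K(r) = −κ + β/r² for all r ≥ R₀. Let h : [0, ∞) → ℝ be the C² solution of h''(r) + K(r)·h(r) = 0 with h(0) = 0, h'(0) = 1, and set A(r) = h'(r)/h(r) for r > 0. Then there exists R₁ > R₀ such that for all r ≥ R₁: 1/(4r²) + ((n−1)(n−3)/4)·A(r)² − ((n−1)/2)·K(r) ≥ (n−1)²κ/4. -/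
open Set Real

open Filter Topology

set_option maxHeartbeats 2000000

private lemma monoAux {D : Set ℝ} (hD : Convex ℝ D) {f f' : ℝ → ℝ}
    (hf : ∀ x ∈ D, HasDerivWithinAt f (f' x) D x)
    (h0 : ∀ x ∈ interior D, 0 ≤ f' x) : MonotoneOn f D :=
  monotoneOn_of_hasDerivWithinAt_nonneg hD (fun x hx => (hf x hx).continuousWithinAt)
    (fun x hx => ((hf x (interior_subset hx)).mono interior_subset).mono_of_mem_nhdsWithin
      (mem_nhdsWithin_of_mem_nhds (isOpen_interior.mem_nhds hx))) h0

private lemma expQuad : ∀ x : ℝ, 0 ≤ x → x^2/4 ≤ Real.exp x := by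
  intro x hx
  have h1 : x/2 + 1 ≤ Real.exp (x/2) := Real.add_one_le_exp _
  have h2 : Real.exp (x/2) * Real.exp (x/2) = Real.exp x := by
    rw [← Real.exp_add]; ring_nf
  nlinarith [Real.exp_pos (x/2)]

private lemma derivG (h h' h'' : ℝ → ℝ) (κ β q x₀ a : ℝ)
    (hq : q ^ 2 = κ) (hx₀ : 0 < x₀)
    (hh'w : ∀ r ∈ Ici x₀, HasDerivWithinAt h (h' r) (Ici x₀) r)
    (hh''w : ∀ r ∈ Ici x₀, HasDerivWithinAt h' (h'' r) (Ici x₀) r)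
    (hODE' : ∀ r ∈ Ici x₀, h'' r = (κ - β / r ^ 2) * h r) :
    ∀ r ∈ Ici x₀, HasDerivWithinAt
      (fun r => (h' r - (q - a / r ^ 2) * h r) * Real.exp (q * r + a / r))
      ((((2 * q * a - β) / r ^ 2 - 2 * a / r ^ 3 - a ^ 2 / r ^ 4) * h r)
          * Real.exp (q * r + a / r)) (Ici x₀) r := by
  intro r hr
  have hr0 : 0 < r := lt_of_lt_of_le hx₀ hr
  have hrne : r ≠ 0 := hr0.ne'
  have hφ : HasDerivAt (fun r : ℝ => q - a / r ^ 2) (2 * a / r ^ 3) r := by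
    have h1 : HasDerivAt (fun r : ℝ => r ^ 2) (2 * r) r := by
      simpa using hasDerivAt_pow 2 r
    have h2 : HasDerivAt (fun r : ℝ => a / r ^ 2)
        ((0 * r ^ 2 - a * (2 * r)) / (r ^ 2) ^ 2) r :=
      (hasDerivAt_const r a).div h1 (pow_ne_zero 2 hrne)
    have := (hasDerivAt_const r q).sub h2
    refine this.congr_deriv ?_
    field_simp
    ring
  have hE : HasDerivAt (fun r : ℝ => Real.exp (q * r + a / r))
      (Real.exp (q * r + a / r) * (q - a / r ^ 2)) r := by
    have h1 : HasDerivAt (fun r : ℝ => q * r + a / r) (q - a / r ^ 2) r := by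
      have h2 : HasDerivAt (fun r : ℝ => q * r) (q * 1) r := (hasDerivAt_id r).const_mul q
      have h3 : HasDerivAt (fun r : ℝ => a / r) ((0 * r - a * 1) / r ^ 2) r :=
        (hasDerivAt_const r a).div (hasDerivAt_id r) hrne
      have := h2.add h3
      refine this.congr_deriv ?_
      field_simp
      ring
    exact h1.exp
  have hmain := ((hh''w r hr).sub ((hφ.hasDerivWithinAt).mul (hh'w r hr))).mul
      hE.hasDerivWithinAt
  refine hmain.congr_deriv ?_
  simp only [Pi.sub_apply, Pi.mul_apply]
  rw [hODE' r hr, ← hq]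
  field_simp
  ring

private lemma Elb (q a r : ℝ) (hq : 0 < q) (ha : 0 ≤ a) (hr : 1 ≤ r) :
    q ^ 2 * r ^ 2 / 4 ≤ Real.exp (q * r + a / r) := by
  have h0 : (0:ℝ) < r := by linarith
  have h1 := expQuad (q * r) (by positivity)
  have h2 : Real.exp (q * r) ≤ Real.exp (q * r + a / r) :=
    Real.exp_le_exp.2 (by nlinarith [div_nonneg ha h0.le])
  calc q ^ 2 * r ^ 2 / 4 = (q * r) ^ 2 / 4 := by ring
    _ ≤ Real.exp (q * r) := h1
    _ ≤ _ := h2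

private lemma upperBarrier (h h' h'' : ℝ → ℝ) (κ β q ε x₀ a : ℝ)
    (hq2 : q ^ 2 = κ) (hqpos : 0 < q) (hε : 0 < ε) (ha : 0 ≤ a) (hx₀1 : 1 ≤ x₀)
    (hh'w : ∀ r ∈ Ici x₀, HasDerivWithinAt h (h' r) (Ici x₀) r)
    (hh''w : ∀ r ∈ Ici x₀, HasDerivWithinAt h' (h'' r) (Ici x₀) r)
    (hODE' : ∀ r ∈ Ici x₀, h'' r = (κ - β / r ^ 2) * h r)
    (hge : ∀ r ∈ Ici x₀, r ≤ h r)
    (hP : ∀ r ∈ Ici x₀,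
      (2 * q * a - β) / r ^ 2 - 2 * a / r ^ 3 - a ^ 2 / r ^ 4 ≤ -(ε / r ^ 2)) :
    ∃ R₁ ≥ x₀, ∀ r ≥ R₁, h' r ≤ (q - a / r ^ 2) * h r := by
  set G : ℝ → ℝ :=
    fun r => (h' r - (q - a / r ^ 2) * h r) * Real.exp (q * r + a / r) with hGdef
  set DG : ℝ → ℝ := fun r =>
    ((2 * q * a - β) / r ^ 2 - 2 * a / r ^ 3 - a ^ 2 / r ^ 4) * h r
      * Real.exp (q * r + a / r) with hDGdef
  have hG : ∀ r ∈ Ici x₀, HasDerivWithinAt G (DG r) (Ici x₀) r :=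
    derivG h h' h'' κ β q x₀ a hq2 (by linarith) hh'w hh''w hODE'
  -- DG is nonpositive, quantitatively
  have hDGle : ∀ r ∈ Ici x₀, DG r ≤ -(ε / r ^ 2 * (h r * Real.exp (q * r + a / r))) := by
    intro r hr
    have hr1 : 1 ≤ r := le_trans hx₀1 hr
    have hr0 : (0:ℝ) < r := by linarith
    have hprod : 0 ≤ h r * Real.exp (q * r + a / r) :=
      mul_nonneg (le_trans (by linarith) (hge r hr)) (Real.exp_pos _).le
    have := mul_le_mul_of_nonneg_right (hP r hr) hprod
    calc DG r = ((2 * q * a - β) / r ^ 2 - 2 * a / r ^ 3 - a ^ 2 / r ^ 4)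
        * (h r * Real.exp (q * r + a / r)) := by rw [hDGdef]; ring
      _ ≤ -(ε / r ^ 2) * (h r * Real.exp (q * r + a / r)) := this
      _ = -(ε / r ^ 2 * (h r * Real.exp (q * r + a / r))) := by ring
  have hDGnonpos : ∀ r ∈ Ici x₀, DG r ≤ 0 := by
    intro r hr
    have hr1 : 1 ≤ r := le_trans hx₀1 hr
    have hr0 : (0:ℝ) < r := by linarith
    have hprod : 0 ≤ h r * Real.exp (q * r + a / r) :=
      mul_nonneg (le_trans (by linarith) (hge r hr)) (Real.exp_pos _).le
    have h2 : 0 ≤ ε / r ^ 2 * (h r * Real.exp (q * r + a / r)) :=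
      mul_nonneg (by positivity) hprod
    linarith [hDGle r hr]
  -- Step A : a crossing point exists
  have cross : ∃ t, x₀ ≤ t ∧ h' t ≤ (q - a / t ^ 2) * h t := by
    by_contra hcon
    push_neg at hcon
    set R₃ : ℝ := max x₀ (4 / (ε * q ^ 2)) with hR₃def
    have hx₀R₃ : x₀ ≤ R₃ := le_max_left _ _
    have Gpos : ∀ r, R₃ ≤ r → 0 < G r := by
      intro r hr
      exact mul_pos (sub_pos.2 (hcon r (le_trans hx₀R₃ hr))) (Real.exp_pos _)
    have hmono : MonotoneOn (fun r => -G r - r) (Ici R₃) := by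
      apply monoAux (convex_Ici R₃)
        (f' := fun r => -DG r - 1)
      · intro r hr
        exact (((hG r (le_trans hx₀R₃ hr)).mono (Ici_subset_Ici.2 hx₀R₃)).neg).sub
          (hasDerivWithinAt_id r _)
      · rw [interior_Ici]
        intro r hr
        have hrx : x₀ ≤ r := le_trans hx₀R₃ hr.le
        have hr1 : 1 ≤ r := le_trans hx₀1 hrx
        have hr0 : (0:ℝ) < r := by linarith
        have h4 : 4 ≤ ε * q ^ 2 * r := by
          have : 4 / (ε * q ^ 2) ≤ r := le_trans (le_max_right _ _) hr.le
          have hεq : 0 < ε * q ^ 2 := by positivity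
          calc (4:ℝ) = 4 / (ε * q ^ 2) * (ε * q ^ 2) := by field_simp
            _ ≤ r * (ε * q ^ 2) := mul_le_mul_of_nonneg_right this hεq.le
            _ = ε * q ^ 2 * r := by ring
        -- h r * E r ≥ r * (q^2 r^2/4)
        have hEr := Elb q a r hqpos ha hr1
        have hhr := hge r hrx
        have hprodge : r * (q ^ 2 * r ^ 2 / 4) ≤ h r * Real.exp (q * r + a / r) :=
          mul_le_mul hhr hEr (by positivity) (by linarith)
        have h5 : ε / r ^ 2 * (r * (q ^ 2 * r ^ 2 / 4))
            ≤ ε / r ^ 2 * (h r * Real.exp (q * r + a / r)) :=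
          mul_le_mul_of_nonneg_left hprodge (by positivity)
        have h6 : ε / r ^ 2 * (r * (q ^ 2 * r ^ 2 / 4)) = ε * q ^ 2 * r / 4 := by
          field_simp
        have h7 : (1:ℝ) ≤ ε / r ^ 2 * (h r * Real.exp (q * r + a / r)) := by
          rw [h6] at h5; linarith
        have := hDGle r hrx
        show (0:ℝ) ≤ -DG r - 1
        linarith
    set T : ℝ := R₃ + G R₃ + 1 with hTdef
    have hGR₃ : 0 < G R₃ := Gpos R₃ le_rfl
    have hTR₃ : R₃ ≤ T := by linarith
    have hstep := hmono self_mem_Ici (mem_Ici.2 hTR₃) hTR₃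
    replace hstep : -G R₃ - R₃ ≤ -G T - T := hstep
    have hGT : 0 < G T := Gpos T hTR₃
    linarith
  obtain ⟨t, htx₀, hcross⟩ := cross
  refine ⟨t, htx₀, ?_⟩
  intro r hrt
  have hmono : MonotoneOn (fun r => -G r) (Ici t) := by
    apply monoAux (convex_Ici t) (f' := fun r => -DG r)
    · intro r hr
      exact ((hG r (le_trans htx₀ hr)).mono (Ici_subset_Ici.2 htx₀)).neg
    · rw [interior_Ici]
      intro r hr
      have := hDGnonpos r (le_trans htx₀ hr.le)
      linarith
  have hGt : G t ≤ 0 :=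
    mul_nonpos_of_nonpos_of_nonneg (sub_nonpos.2 hcross) (Real.exp_pos _).le
  have h1 := hmono self_mem_Ici (mem_Ici.2 hrt) hrt
  replace h1 : -G t ≤ -G r := h1
  have hGr : G r ≤ 0 := by linarith
  have hexp := Real.exp_pos (q * r + a / r)
  rw [hGdef] at hGr
  simp only [] at hGr
  nlinarith [hGr, hexp]

private lemma lowerBarrier (h h' h'' : ℝ → ℝ) (κ β q ε x₀ a : ℝ)
    (hq2 : q ^ 2 = κ) (hqpos : 0 < q) (hε : 0 < ε) (ha : 0 ≤ a) (hx₀1 : 1 ≤ x₀)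
    (hh'w : ∀ r ∈ Ici x₀, HasDerivWithinAt h (h' r) (Ici x₀) r)
    (hh''w : ∀ r ∈ Ici x₀, HasDerivWithinAt h' (h'' r) (Ici x₀) r)
    (hODE' : ∀ r ∈ Ici x₀, h'' r = (κ - β / r ^ 2) * h r)
    (hge : ∀ r ∈ Ici x₀, r ≤ h r)
    (hP : ∀ r ∈ Ici x₀,
      ε / (2 * r ^ 2) ≤ (2 * q * a - β) / r ^ 2 - 2 * a / r ^ 3 - a ^ 2 / r ^ 4) :
    ∃ R₁ ≥ x₀, ∀ r ≥ R₁, (q - a / r ^ 2) * h r ≤ h' r := by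
  set G : ℝ → ℝ :=
    fun r => (h' r - (q - a / r ^ 2) * h r) * Real.exp (q * r + a / r) with hGdef
  set DG : ℝ → ℝ := fun r =>
    ((2 * q * a - β) / r ^ 2 - 2 * a / r ^ 3 - a ^ 2 / r ^ 4) * h r
      * Real.exp (q * r + a / r) with hDGdef
  have hG : ∀ r ∈ Ici x₀, HasDerivWithinAt G (DG r) (Ici x₀) r :=
    derivG h h' h'' κ β q x₀ a hq2 (by linarith) hh'w hh''w hODE'
  have hDGge : ∀ r ∈ Ici x₀, ε / (2 * r ^ 2) * (h r * Real.exp (q * r + a / r)) ≤ DG r := by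
    intro r hr
    have hr1 : 1 ≤ r := le_trans hx₀1 hr
    have hr0 : (0:ℝ) < r := by linarith
    have hprod : 0 ≤ h r * Real.exp (q * r + a / r) :=
      mul_nonneg (le_trans (by linarith) (hge r hr)) (Real.exp_pos _).le
    have := mul_le_mul_of_nonneg_right (hP r hr) hprod
    calc ε / (2 * r ^ 2) * (h r * Real.exp (q * r + a / r))
        ≤ ((2 * q * a - β) / r ^ 2 - 2 * a / r ^ 3 - a ^ 2 / r ^ 4)
          * (h r * Real.exp (q * r + a / r)) := this
      _ = DG r := by rw [hDGdef]; ring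
  have hDGnonneg : ∀ r ∈ Ici x₀, 0 ≤ DG r := by
    intro r hr
    have hr1 : 1 ≤ r := le_trans hx₀1 hr
    have hr0 : (0:ℝ) < r := by linarith
    have hprod : 0 ≤ h r * Real.exp (q * r + a / r) :=
      mul_nonneg (le_trans (by linarith) (hge r hr)) (Real.exp_pos _).le
    have h2 : 0 ≤ ε / (2 * r ^ 2) * (h r * Real.exp (q * r + a / r)) :=
      mul_nonneg (by positivity) hprod
    linarith [hDGge r hr]
  have cross : ∃ t, x₀ ≤ t ∧ (q - a / t ^ 2) * h t ≤ h' t := by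
    by_contra hcon
    push_neg at hcon
    set R₄ : ℝ := max x₀ (8 / (ε * q ^ 2)) with hR₄def
    have hx₀R₄ : x₀ ≤ R₄ := le_max_left _ _
    have Gneg : ∀ r, R₄ ≤ r → G r < 0 := by
      intro r hr
      exact mul_neg_of_neg_of_pos (sub_neg.2 (hcon r (le_trans hx₀R₄ hr))) (Real.exp_pos _)
    have hmono : MonotoneOn (fun r => G r - r) (Ici R₄) := by
      apply monoAux (convex_Ici R₄) (f' := fun r => DG r - 1)
      · intro r hr
        exact ((hG r (le_trans hx₀R₄ hr)).mono (Ici_subset_Ici.2 hx₀R₄)).sub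
          (hasDerivWithinAt_id r _)
      · rw [interior_Ici]
        intro r hr
        have hrx : x₀ ≤ r := le_trans hx₀R₄ hr.le
        have hr1 : 1 ≤ r := le_trans hx₀1 hrx
        have hr0 : (0:ℝ) < r := by linarith
        have h8 : 8 ≤ ε * q ^ 2 * r := by
          have : 8 / (ε * q ^ 2) ≤ r := le_trans (le_max_right _ _) hr.le
          have hεq : 0 < ε * q ^ 2 := by positivity
          calc (8:ℝ) = 8 / (ε * q ^ 2) * (ε * q ^ 2) := by field_simp
            _ ≤ r * (ε * q ^ 2) := mul_le_mul_of_nonneg_right this hεq.le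
            _ = ε * q ^ 2 * r := by ring
        have hEr := Elb q a r hqpos ha hr1
        have hhr := hge r hrx
        have hprodge : r * (q ^ 2 * r ^ 2 / 4) ≤ h r * Real.exp (q * r + a / r) :=
          mul_le_mul hhr hEr (by positivity) (by linarith)
        have h5 : ε / (2 * r ^ 2) * (r * (q ^ 2 * r ^ 2 / 4))
            ≤ ε / (2 * r ^ 2) * (h r * Real.exp (q * r + a / r)) :=
          mul_le_mul_of_nonneg_left hprodge (by positivity)
        have h6 : ε / (2 * r ^ 2) * (r * (q ^ 2 * r ^ 2 / 4)) = ε * q ^ 2 * r / 8 := by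
          field_simp; ring
        have h7 : (1:ℝ) ≤ ε / (2 * r ^ 2) * (h r * Real.exp (q * r + a / r)) := by
          rw [h6] at h5; linarith
        have := hDGge r hrx
        show (0:ℝ) ≤ DG r - 1
        linarith
    set T : ℝ := R₄ + (1 - G R₄) with hTdef
    have hGR₄ : G R₄ < 0 := Gneg R₄ le_rfl
    have hTR₄ : R₄ ≤ T := by linarith
    have hstep := hmono self_mem_Ici (mem_Ici.2 hTR₄) hTR₄
    replace hstep : G R₄ - R₄ ≤ G T - T := hstep
    have hGT : G T < 0 := Gneg T hTR₄
    linarith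
  obtain ⟨t, htx₀, hcross⟩ := cross
  refine ⟨t, htx₀, ?_⟩
  intro r hrt
  have hmono : MonotoneOn G (Ici t) := by
    apply monoAux (convex_Ici t) (f' := DG)
    · intro r hr
      exact (hG r (le_trans htx₀ hr)).mono (Ici_subset_Ici.2 htx₀)
    · rw [interior_Ici]
      intro r hr
      exact hDGnonneg r (le_trans htx₀ hr.le)
  have hGt : 0 ≤ G t :=
    mul_nonneg (sub_nonneg.2 hcross) (Real.exp_pos _).le
  have h1 := hmono self_mem_Ici (mem_Ici.2 hrt) hrt
  replace h1 : G t ≤ G r := h1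
  have hGr : 0 ≤ G r := by linarith
  have hexp := Real.exp_pos (q * r + a / r)
  rw [hGdef] at hGr
  simp only [] at hGr
  nlinarith [hGr, hexp]

private lemma hPositive (K h h' h'' : ℝ → ℝ)
    (hK_nonpos : ∀ r ∈ Ici (0 : ℝ), K r ≤ 0)
    (hh' : ∀ r ∈ Ici (0 : ℝ), HasDerivWithinAt h (h' r) (Ici 0) r)
    (hh'' : ∀ r ∈ Ici (0 : ℝ), HasDerivWithinAt h' (h'' r) (Ici 0) r)
    (hODE : ∀ r ∈ Ici (0 : ℝ), h'' r + K r * h r = 0)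
    (hh0 : h 0 = 0) (hh'0 : h' 0 = 1) :
    ∀ r : ℝ, 0 < r → 0 < h r := by
  -- positivity near zero
  have hder0 : HasDerivWithinAt h 1 (Ici 0) 0 := hh'0 ▸ hh' 0 self_mem_Ici
  rw [hasDerivWithinAt_iff_tendsto_slope] at hder0
  have hev : ∀ᶠ r in 𝓝[Ici 0 \ {0}] (0:ℝ), 1/2 < slope h 0 r :=
    hder0.eventually (eventually_gt_nhds (by norm_num))
  rw [eventually_nhdsWithin_iff] at hev
  obtain ⟨δ, hδpos, hδ⟩ := Metric.eventually_nhds_iff.mp hev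
  have hsmall : ∀ r, 0 < r → r < δ → 0 < h r := by
    intro r h1 h2
    have hdist : dist r 0 < δ := by
      rw [Real.dist_eq, sub_zero, abs_of_pos h1]; exact h2
    have := hδ hdist ⟨h1.le, h1.ne'⟩
    rw [slope_def_field] at this
    have h3 : (h r - h 0) / (r - 0) = h r / r := by rw [hh0, sub_zero, sub_zero]
    rw [h3] at this
    have := (div_lt_div_iff₀ (by norm_num) h1).mp this
    linarith
  by_contra hcon
  push_neg at hcon
  obtain ⟨r₀, hr₀pos, hr₀⟩ := hcon
  set S := {r : ℝ | 0 < r ∧ h r ≤ 0} with hSdef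
  have hSne : S.Nonempty := ⟨r₀, hr₀pos, hr₀⟩
  have hSbd : BddBelow S := ⟨0, fun x hx => hx.1.le⟩
  set s := sInf S with hsdef
  have hsδ : δ ≤ s := by
    apply le_csInf hSne
    intro x hx
    by_contra hxd
    push_neg at hxd
    exact absurd hx.2 (not_le.2 (hsmall x hx.1 hxd))
  have hspos : 0 < s := lt_of_lt_of_le hδpos hsδ
  have hcont : ContinuousOn h (Ici 0) := fun x hx => (hh' x hx).continuousWithinAt
  have hhs_le : h s ≤ 0 := by
    by_contra hh_pos
    push_neg at hh_pos
    have hca : ContinuousAt h s := hcont.continuousAt (Ici_mem_nhds hspos)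
    obtain ⟨η, hηpos, hη⟩ := Metric.continuousAt_iff.mp hca (h s) hh_pos
    have hlb : ∀ x ∈ S, s + η ≤ x := by
      intro x hx
      by_contra hxs
      push_neg at hxs
      have hxge : s ≤ x := csInf_le hSbd hx
      have hd : dist x s < η := by
        rw [Real.dist_eq, abs_of_nonneg (by linarith)]; linarith
      have := hη hd
      rw [Real.dist_eq, abs_lt] at this
      have : 0 < h x := by linarith
      linarith [hx.2]
    have := le_csInf hSne hlb
    linarith
  have hmid : ∀ x, 0 < x → x < s → 0 < h x := by
    intro x h1 h2
    by_contra hx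
    push_neg at hx
    have : x ∈ S := ⟨h1, hx⟩
    have := csInf_le hSbd this
    linarith
  have hmono' : MonotoneOn h' (Icc 0 s) := by
    apply monoAux (convex_Icc 0 s) (f' := h'')
    · exact fun x hx => (hh'' x hx.1).mono Icc_subset_Ici_self
    · rw [interior_Icc]
      intro x hx
      have hxpos := hmid x hx.1 hx.2
      have hODEx := hODE x (le_of_lt hx.1)
      have hKx := hK_nonpos x (le_of_lt hx.1)
      nlinarith
  have h'ge1 : ∀ x ∈ Icc (0:ℝ) s, 1 ≤ h' x := by
    intro x hx
    have := hmono' (left_mem_Icc.2 hspos.le) hx hx.1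
    rw [hh'0] at this
    exact this
  have hmonoH : MonotoneOn (fun r => h r - r) (Icc 0 s) := by
    apply monoAux (convex_Icc 0 s) (f' := fun x => h' x - 1)
    · exact fun x hx => ((hh' x hx.1).mono Icc_subset_Ici_self).sub (hasDerivWithinAt_id _ _)
    · rw [interior_Icc]
      intro x hx
      have := h'ge1 x (Ioo_subset_Icc_self hx)
      linarith
  have hfin := hmonoH (left_mem_Icc.2 hspos.le) (right_mem_Icc.2 hspos.le) hspos.le
  replace hfin : h 0 - 0 ≤ h s - s := hfin
  rw [hh0] at hfin
  linarith


/-- pointwise bound in the proof of Proposition 1.1 of the paper. Let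
`n ≥ 2`, `κ > 0`, `0 < β < 1/(n-1)²`, and let `K ≤ 0` be continuous on `[0,∞)` with
`K(r) = -κ + β/r²` for `r ≥ R₀` (where `R₀ > 0`, `R₀² ≥ β/κ`). Let `h` solve
`h'' + K·h = 0`, `h(0) = 0`, `h'(0) = 1`, and set `A = h'/h` on `(0,∞)`. Then there is
`R₁ > R₀` such that for all `r ≥ R₁`:
`1/(4r²) + ((n-1)(n-3)/4)·A(r)² - ((n-1)/2)·K(r) ≥ (n-1)²κ/4`. -/
theorem stmt_8 (n : ℕ) (hn : 2 ≤ n) (κ β R₀ : ℝ)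
    (hκ : 0 < κ) (hβ : 0 < β) (hβn : β < 1 / ((n : ℝ) - 1) ^ 2)
    (hR₀ : 0 < R₀) (hR₀β : R₀ ^ 2 ≥ β / κ)
    (K h h' h'' : ℝ → ℝ)
    (hK_cont : ContinuousOn K (Ici 0))
    (hK_nonpos : ∀ r ∈ Ici (0 : ℝ), K r ≤ 0)
    (hK_eq : ∀ r ≥ R₀, K r = -κ + β / r ^ 2)
    (hh' : ∀ r ∈ Ici (0 : ℝ), HasDerivWithinAt h (h' r) (Ici 0) r)
    (hh'' : ∀ r ∈ Ici (0 : ℝ), HasDerivWithinAt h' (h'' r) (Ici 0) r)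
    (hh''cont : ContinuousOn h'' (Ici 0))
    (hODE : ∀ r ∈ Ici (0 : ℝ), h'' r + K r * h r = 0)
    (hh0 : h 0 = 0) (hh'0 : h' 0 = 1)
    (A : ℝ → ℝ) (hA : ∀ r > (0 : ℝ), A r = h' r / h r) :
    ∃ R₁ > R₀, ∀ r ≥ R₁,
      1 / (4 * r ^ 2) + (((n : ℝ) - 1) * ((n : ℝ) - 3) / 4) * (A r) ^ 2
          - (((n : ℝ) - 1) / 2) * K r
        ≥ ((n : ℝ) - 1) ^ 2 * κ / 4 := by
  have hn1 : (1:ℝ) ≤ (n:ℝ) - 1 := by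
    have : (2:ℝ) ≤ (n:ℝ) := by exact_mod_cast hn
    linarith
  have hm2pos : (0:ℝ) < ((n:ℝ) - 1) ^ 2 := by positivity
  have hβm : ((n:ℝ) - 1) ^ 2 * β < 1 := by
    have := (lt_div_iff₀ hm2pos).mp hβn
    linarith
  obtain ⟨q, hq2, hqpos⟩ : ∃ q : ℝ, q ^ 2 = κ ∧ 0 < q :=
    ⟨Real.sqrt κ, Real.sq_sqrt hκ.le, Real.sqrt_pos.2 hκ⟩
  obtain ⟨cb, hcbdef⟩ : ∃ x : ℝ, x = |((n:ℝ) - 1) * ((n:ℝ) - 3) / 4| := ⟨_, rfl⟩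
  have hcb0 : 0 ≤ cb := hcbdef ▸ abs_nonneg _
  obtain ⟨ε, hεdef⟩ :
      ∃ x : ℝ, x = min (β / 2) ((1 - ((n:ℝ) - 1) ^ 2 * β) / (8 * (cb + 1))) := ⟨_, rfl⟩
  have hεpos : 0 < ε := by
    rw [hεdef]
    apply lt_min (by positivity)
    have h1 : (0:ℝ) < 1 - ((n:ℝ) - 1) ^ 2 * β := by linarith
    positivity
  have hεβ : ε ≤ β / 2 := hεdef ▸ min_le_left _ _
  have hεc : ε ≤ (1 - ((n:ℝ) - 1) ^ 2 * β) / (8 * (cb + 1)) := hεdef ▸ min_le_right _ _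
  obtain ⟨aP, haPdef⟩ : ∃ x : ℝ, x = (β - ε) / (2 * q) := ⟨_, rfl⟩
  obtain ⟨aM, haMdef⟩ : ∃ x : ℝ, x = (β + ε) / (2 * q) := ⟨_, rfl⟩
  have haPpos : 0 < aP := by
    rw [haPdef]; apply div_pos (by linarith) (by linarith)
  have haMpos : 0 < aM := by
    rw [haMdef]; apply div_pos (by linarith) (by linarith)
  have h2qaP : 2 * q * aP = β - ε := by
    rw [haPdef]; field_simp [hqpos.ne']
  have h2qaM : 2 * q * aM = β + ε := by
    rw [haMdef]; field_simp [hqpos.ne']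
  obtain ⟨x₀, hx₀def⟩ : ∃ x : ℝ, x = max (max (R₀ + 1) 1)
      (max ((4 * aM + 2 * aM ^ 2) / ε + 1) (max (aM / q + 1) (aP ^ 2 / ε + 1))) := ⟨_, rfl⟩
  have hx₀R : R₀ + 1 ≤ x₀ := hx₀def ▸ le_trans (le_max_left _ _) (le_max_left _ _)
  have hx₀1 : (1:ℝ) ≤ x₀ := hx₀def ▸ le_trans (le_max_right _ _) (le_max_left _ _)
  have hx₀0 : (0:ℝ) ≤ x₀ := by linarith
  have hx₀a : (4 * aM + 2 * aM ^ 2) / ε + 1 ≤ x₀ :=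
    hx₀def ▸ le_trans (le_max_left _ _) (le_max_right _ _)
  have hx₀b : aM / q + 1 ≤ x₀ :=
    hx₀def ▸ le_trans (le_trans (le_max_left _ _) (le_max_right _ _)) (le_max_right _ _)
  have hx₀c : aP ^ 2 / ε + 1 ≤ x₀ :=
    hx₀def ▸ le_trans (le_trans (le_max_right _ _) (le_max_right _ _)) (le_max_right _ _)
  -- restricted derivative hypotheses
  have hh'w : ∀ r ∈ Ici x₀, HasDerivWithinAt h (h' r) (Ici x₀) r := fun r hr =>
    (hh' r (le_trans hx₀0 hr)).mono (Ici_subset_Ici.2 hx₀0)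
  have hh''w : ∀ r ∈ Ici x₀, HasDerivWithinAt h' (h'' r) (Ici x₀) r := fun r hr =>
    (hh'' r (le_trans hx₀0 hr)).mono (Ici_subset_Ici.2 hx₀0)
  have hODE' : ∀ r ∈ Ici x₀, h'' r = (κ - β / r ^ 2) * h r := by
    intro r hr
    have hrR : R₀ ≤ r := by
      have := le_trans hx₀R hr; linarith
    have h1 := hODE r (le_trans hx₀0 hr)
    rw [hK_eq r hrR] at h1
    linear_combination h1
  -- positivity of h and h ≥ r
  have hpos : ∀ r : ℝ, 0 < r → 0 < h r := hPositive K h h' h'' hK_nonpos hh' hh'' hODE hh0 hh'0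
  have hmono' : MonotoneOn h' (Ici (0:ℝ)) := by
    apply monoAux (convex_Ici 0) (f' := h'') hh''
    rw [interior_Ici]
    intro x hx
    have hxpos := hpos x hx
    have hODEx := hODE x (le_of_lt (mem_Ioi.1 hx))
    have hKx : K x * h x ≤ 0 :=
      mul_nonpos_of_nonpos_of_nonneg (hK_nonpos x (le_of_lt (mem_Ioi.1 hx))) hxpos.le
    linarith only [hODEx, hKx]
  have h'ge1 : ∀ r ∈ Ici (0:ℝ), 1 ≤ h' r := by
    intro r hr
    have := hmono' self_mem_Ici hr hr
    rw [hh'0] at this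
    exact this
  have hgeAll : ∀ r ∈ Ici (0:ℝ), r ≤ h r := by
    have hm : MonotoneOn (fun r => h r - r) (Ici (0:ℝ)) := by
      apply monoAux (convex_Ici 0) (f' := fun x => h' x - 1)
      · exact fun x hx => (hh' x hx).sub (hasDerivWithinAt_id _ _)
      · rw [interior_Ici]
        intro x hx
        have := h'ge1 x (le_of_lt (mem_Ioi.1 hx))
        linarith
    intro r hr
    have := hm self_mem_Ici hr hr
    replace this : h 0 - 0 ≤ h r - r := this
    rw [hh0] at this
    linarith
  have hge : ∀ r ∈ Ici x₀, r ≤ h r := fun r hr => hgeAll r (le_trans hx₀0 hr)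
  -- barrier inequalities on the coefficients
  have hPp : ∀ r ∈ Ici x₀,
      (2 * q * aP - β) / r ^ 2 - 2 * aP / r ^ 3 - aP ^ 2 / r ^ 4 ≤ -(ε / r ^ 2) := by
    intro r hr
    have hr1 : 1 ≤ r := le_trans hx₀1 hr
    have hr0 : (0:ℝ) < r := by linarith
    rw [h2qaP]
    have e1 : (β - ε - β) / r ^ 2 = -(ε / r ^ 2) := by ring
    rw [e1]
    have h2 : 0 ≤ 2 * aP / r ^ 3 := by positivity
    have h3 : 0 ≤ aP ^ 2 / r ^ 4 := by positivity
    linarith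
  have hPm : ∀ r ∈ Ici x₀,
      ε / (2 * r ^ 2) ≤ (2 * q * aM - β) / r ^ 2 - 2 * aM / r ^ 3 - aM ^ 2 / r ^ 4 := by
    intro r hr
    have hr1 : 1 ≤ r := le_trans hx₀1 hr
    have hr0 : (0:ℝ) < r := by linarith
    have hεr : 4 * aM + 2 * aM ^ 2 ≤ ε * r := by
      have h1 : (4 * aM + 2 * aM ^ 2) / ε ≤ r := by
        have := le_trans hx₀a hr; linarith
      calc 4 * aM + 2 * aM ^ 2 = (4 * aM + 2 * aM ^ 2) / ε * ε :=
            (div_mul_cancel₀ _ hεpos.ne').symm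
        _ ≤ r * ε := mul_le_mul_of_nonneg_right h1 hεpos.le
        _ = ε * r := by ring
    rw [h2qaM]
    have hdiff : (β + ε - β) / r ^ 2 - 2 * aM / r ^ 3 - aM ^ 2 / r ^ 4 - ε / (2 * r ^ 2)
        = (ε * r ^ 2 / 2 - 2 * aM * r - aM ^ 2) / r ^ 4 := by
      field_simp [hr0.ne']
      ring
    have hnum : 0 ≤ ε * r ^ 2 / 2 - 2 * aM * r - aM ^ 2 := by
      have k1 : (4 * aM + 2 * aM ^ 2) * r ≤ ε * r ^ 2 := by
        have t := mul_le_mul_of_nonneg_right hεr hr0.le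
        linarith only [t]
      have k2 : aM ^ 2 * 1 ≤ aM ^ 2 * r := mul_le_mul_of_nonneg_left hr1 (sq_nonneg aM)
      linarith only [k1, k2]
    have := div_nonneg hnum (by positivity : (0:ℝ) ≤ r ^ 4)
    linarith
  -- apply the barrier lemmas
  obtain ⟨R₅, hR₅, hup⟩ := upperBarrier h h' h'' κ β q ε x₀ aP hq2 hqpos hεpos
    haPpos.le hx₀1 hh'w hh''w hODE' hge hPp
  obtain ⟨R₆, hR₆, hlo⟩ := lowerBarrier h h' h'' κ β q ε x₀ aM hq2 hqpos hεpos
    haMpos.le hx₀1 hh'w hh''w hODE' hge hPm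
  refine ⟨max R₅ R₆, by
    have : x₀ ≤ max R₅ R₆ := le_trans hR₅ (le_max_left _ _)
    linarith [le_trans hx₀R this], ?_⟩
  intro r hr
  have hrR₅ : R₅ ≤ r := le_trans (le_max_left _ _) hr
  have hrR₆ : R₆ ≤ r := le_trans (le_max_right _ _) hr
  have hrx : x₀ ≤ r := le_trans hR₅ hrR₅
  have hr1 : (1:ℝ) ≤ r := le_trans hx₀1 hrx
  have hr0 : (0:ℝ) < r := by linarith
  have hrR : R₀ ≤ r := by linarith [le_trans hx₀R hrx]
  have hhr : 0 < h r := hpos r hr0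
  have hu := hup r hrR₅
  have hl := hlo r hrR₆
  have hAr : A r = h' r / h r := hA r hr0
  have hAu : A r ≤ q - aP / r ^ 2 := by
    rw [hAr]; exact (div_le_iff₀ hhr).2 hu
  have hAl : q - aM / r ^ 2 ≤ A r := by
    rw [hAr]; exact (le_div_iff₀ hhr).2 hl
  have hphiMnonneg : 0 ≤ q - aM / r ^ 2 := by
    have hqr : aM ≤ q * r := by
      have h1 : aM / q ≤ r := by linarith [le_trans hx₀b hrx]
      calc aM = aM / q * q := (div_mul_cancel₀ _ hqpos.ne').symm
        _ ≤ r * q := mul_le_mul_of_nonneg_right h1 hqpos.le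
        _ = q * r := by ring
    have : aM / r ^ 2 ≤ q := by
      rw [div_le_iff₀ (by positivity)]
      have t : q * r * 1 ≤ q * r * r :=
        mul_le_mul_of_nonneg_left hr1 (by positivity)
      linarith only [hqr, t]
    linarith
  have hA0 : 0 ≤ A r := le_trans hphiMnonneg hAl
  have hAsqU : A r ^ 2 ≤ (q - aP / r ^ 2) ^ 2 := pow_le_pow_left₀ hA0 hAu 2
  have hAsqL : (q - aM / r ^ 2) ^ 2 ≤ A r ^ 2 := pow_le_pow_left₀ hphiMnonneg hAl 2
  have hexpU : (q - aP / r ^ 2) ^ 2 = κ - (β - ε) / r ^ 2 + aP ^ 2 / r ^ 4 := by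
    rw [← hq2, ← h2qaP]
    field_simp [hr0.ne']
    ring
  have hexpL : (q - aM / r ^ 2) ^ 2 = κ - (β + ε) / r ^ 2 + aM ^ 2 / r ^ 4 := by
    rw [← hq2, ← h2qaM]
    field_simp [hr0.ne']
    ring
  have haPr : aP ^ 2 / r ^ 4 ≤ ε / r ^ 2 := by
    rw [div_le_div_iff₀ (by positivity) (by positivity)]
    have h1 : aP ^ 2 / ε ≤ r := by linarith [le_trans hx₀c hrx]
    have h2 : aP ^ 2 ≤ ε * r := by
      calc aP ^ 2 = aP ^ 2 / ε * ε := (div_mul_cancel₀ _ hεpos.ne').symm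
        _ ≤ r * ε := mul_le_mul_of_nonneg_right h1 hεpos.le
        _ = ε * r := by ring
    have t1 : aP ^ 2 * r ^ 2 ≤ ε * r * r ^ 2 :=
      mul_le_mul_of_nonneg_right h2 (by positivity)
    have t2 : ε * r * r ^ 2 * 1 ≤ ε * r * r ^ 2 * r :=
      mul_le_mul_of_nonneg_left hr1 (by positivity)
    linarith only [t1, t2]
  -- two-sided bound for A ^ 2
  have hup2 : A r ^ 2 - κ + β / r ^ 2 ≤ 2 * ε * (1 / r ^ 2) := by
    have e1 : β / r ^ 2 - (β - ε) / r ^ 2 + ε / r ^ 2 = 2 * ε * (1 / r ^ 2) := by ring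
    linarith only [hAsqU, hexpU, haPr, e1]
  have hlo2 : -(2 * ε * (1 / r ^ 2)) ≤ A r ^ 2 - κ + β / r ^ 2 := by
    have h3 : 0 ≤ aM ^ 2 / r ^ 4 := by positivity
    have e1 : β / r ^ 2 - (β + ε) / r ^ 2 = -(ε * (1 / r ^ 2)) := by ring
    have h4 : 0 ≤ ε * (1 / r ^ 2) := by positivity
    linarith only [hAsqL, hexpL, h3, e1, h4]
  have h1r : (0:ℝ) ≤ 1 / r ^ 2 := by positivity
  have hkey : (((n:ℝ) - 1) * ((n:ℝ) - 3) / 4) * (A r ^ 2 - κ + β / r ^ 2)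
      ≥ -(2 * cb * ε * (1 / r ^ 2)) := by
    rcases le_or_gt 0 (((n:ℝ) - 1) * ((n:ℝ) - 3) / 4) with hc0 | hc0
    · rw [hcbdef, abs_of_nonneg hc0]
      have t := mul_le_mul_of_nonneg_left hlo2 hc0
      linarith only [t]
    · rw [hcbdef, abs_of_neg hc0]
      have t := mul_le_mul_of_nonpos_left hup2 hc0.le
      linarith only [t]
  have h2c : 2 * cb * ε ≤ (1 - ((n:ℝ) - 1) ^ 2 * β) / 4 := by
    have hεc' : ε * (8 * (cb + 1)) ≤ 1 - ((n:ℝ) - 1) ^ 2 * β := by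
      rw [← le_div_iff₀ (by positivity)]
      exact hεc
    linarith only [hεc', hεpos.le]
  have hmul := mul_le_mul_of_nonneg_right h2c h1r
  have hKr := hK_eq r hrR
  rw [hKr]
  have hid : 1 / (4 * r ^ 2) + (((n:ℝ) - 1) * ((n:ℝ) - 3) / 4) * A r ^ 2
        - (((n:ℝ) - 1) / 2) * (-κ + β / r ^ 2) - ((n:ℝ) - 1) ^ 2 * κ / 4
      = (((n:ℝ) - 1) * ((n:ℝ) - 3) / 4) * (A r ^ 2 - κ + β / r ^ 2)
        + ((1 - ((n:ℝ) - 1) ^ 2 * β) / 4) * (1 / r ^ 2) := by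
    ring
  linarith only [hkey, hmul, hid]
end
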